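/- arXiv:1708.09774 — 5 statements merged into one kernel-verified Lean document; each statement's English description precedes it below -/
import Mathlib

section
/- If a graph G has a vertex v adjacent to two or more vertices of degree one (a strong stem), then G has no pair of disjoint dominating sets D, D' with a perfect matching between them in G. -/
open SimpleGraph

variable {V : Type*}

/-- `D` is a dominating set of `G`. -/
def IsDomSet (G : SimpleGraph V) (D : Set V) : Prop :=
  ∀ v, v ∉ D → ∃ u ∈ D, G.Adj u v

/-- `D, D'` are disjoint dominating sets with a perfect matching between them
(each vertex of `D` matched to a distinct adjacent vertex of `D'`). -/
def IsSwapPair (G : SimpleGraph V) (D D' : Set V) : Prop :=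
  IsDomSet G D ∧ IsDomSet G D' ∧ Disjoint D D' ∧
    ∃ f : D ≃ D', ∀ x : D, G.Adj x (f x)

/-- `DD_m(G)`: minimum cardinality of a swap set (`⊤` if none exists). -/
noncomputable def DDm (G : SimpleGraph V) : ℕ∞ :=
  sInf {n : ℕ∞ | ∃ D D' : Set V, IsSwapPair G D D' ∧ (D.ncard : ℕ∞) = n}

/-- domination number -/
noncomputable def domNum (G : SimpleGraph V) : ℕ :=
  sInf {n : ℕ | ∃ D : Set V, IsDomSet G D ∧ D.ncard = n}

/-- independence number -/
noncomputable def indepNum (G : SimpleGraph V) : ℕ :=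
  sSup {n : ℕ | ∃ I : Set V, (∀ a ∈ I, ∀ b ∈ I, ¬ G.Adj a b) ∧ I.ncard = n}

/-- a leaf: a vertex of degree one -/
def IsLeaf (G : SimpleGraph V) (v : V) : Prop := (G.neighborSet v).ncard = 1

/-- a strong stem: a vertex adjacent to at least two leaves -/
def IsStrongStem (G : SimpleGraph V) (v : V) : Prop :=
  ∃ l₁ l₂, l₁ ≠ l₂ ∧ G.Adj v l₁ ∧ G.Adj v l₂ ∧ IsLeaf G l₁ ∧ IsLeaf G l₂

/-- a weak graph: no strong stems -/
def IsWeakGraph (G : SimpleGraph V) : Prop := ∀ v, ¬ IsStrongStem G v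

/-- the set `S` induces a star (with some center `c`). -/
def IsStarSet (G : SimpleGraph V) (S : Set V) : Prop :=
  ∃ c ∈ S, (∀ x ∈ S, x ≠ c → G.Adj c x) ∧
    ∀ x ∈ S, ∀ y ∈ S, x ≠ c → y ≠ c → ¬ G.Adj x y

/-- two parts are adjacent -/
def PartsAdj (G : SimpleGraph V) (A B : Set V) : Prop :=
  ∃ a ∈ A, ∃ b ∈ B, G.Adj a b

/-- A simple star partitioning of (the vertices of) `G`. -/
structure IsSSP (G : SimpleGraph V) (P : Finset (Set V)) : Prop where
  cover : ∀ v : V, ∃! S, S ∈ P ∧ v ∈ S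
  star : ∀ S ∈ P, IsStarSet G S
  weakStem : ∀ v l, G.Adj v l → IsLeaf G l →
    (∀ l', G.Adj v l' → IsLeaf G l' → l' = l) → ({v, l} : Set V) ∈ P
  k1 : ∀ S ∈ P, S.ncard = 1 → ∃ A ∈ P, ∃ B ∈ P, A ≠ B ∧
    A.ncard ≠ 1 ∧ B.ncard ≠ 1 ∧ PartsAdj G S A ∧ PartsAdj G S B

/-- weight of a star partitioning: a part of order `k` has weight `k-1`. -/
noncomputable def SSPweight (P : Finset (Set V)) : ℕ := ∑ S ∈ P, (S.ncard - 1)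

/-- `S(G)`: minimum weight of a simple star partitioning. -/
noncomputable def starS (G : SimpleGraph V) : ℕ :=
  sInf {w : ℕ | ∃ P : Finset (Set V), IsSSP G P ∧ SSPweight P = w}

/-- `W` is the vertex set of a weak reduction of `G`: all but one leaf
neighbor of each strong stem are removed. -/
def IsWeakReduction (G : SimpleGraph V) (W : Set V) : Prop :=
  (∀ v, v ∉ W → IsLeaf G v ∧ ∃ s, G.Adj s v ∧ IsStrongStem G s) ∧
  (∀ s, IsStrongStem G s → ∃! l, l ∈ W ∧ G.Adj s l ∧ IsLeaf G l)

lemma leaf_unique {G : SimpleGraph V} {l v u : V} (hl : IsLeaf G l)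
    (hv : G.Adj v l) (hu : G.Adj u l) : u = v := by
  obtain ⟨a, ha⟩ := Set.ncard_eq_one.mp hl
  have h1 : v ∈ G.neighborSet l := hv.symm
  have h2 : u ∈ G.neighborSet l := hu.symm
  rw [ha] at h1 h2
  simp_all

lemma key {G : SimpleGraph V} {D D' : Set V} {v l₁ l₂ : V}
    (hne : l₁ ≠ l₂) (h1 : G.Adj v l₁) (h2 : G.Adj v l₂)
    (hl1 : IsLeaf G l₁) (hl2 : IsLeaf G l₂)
    (hdom : IsDomSet G D) (hdisj : Disjoint D D')
    (f : D ≃ D') (hf : ∀ x : D, G.Adj x (f x)) (hv : v ∉ D) : False := by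
  have mem : ∀ l, l ≠ v → G.Adj v l → IsLeaf G l → l ∈ D := by
    intro l hlv hvl hl
    by_contra hnl
    obtain ⟨u, huD, hu⟩ := hdom l hnl
    exact hv (leaf_unique hl hvl hu ▸ huD)
  have hv1 : l₁ ≠ v := fun e => G.irrefl (e ▸ h1)
  have hv2 : l₂ ≠ v := fun e => G.irrefl (e ▸ h2)
  have m1 := mem l₁ hv1 h1 hl1
  have m2 := mem l₂ hv2 h2 hl2
  have e1 : (f ⟨l₁, m1⟩ : V) = v := leaf_unique hl1 h1 (hf ⟨l₁, m1⟩).symm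
  have e2 : (f ⟨l₂, m2⟩ : V) = v := leaf_unique hl2 h2 (hf ⟨l₂, m2⟩).symm
  have : f ⟨l₁, m1⟩ = f ⟨l₂, m2⟩ := Subtype.ext (e1.trans e2.symm)
  exact hne (congrArg Subtype.val (f.injective this))

theorem stmt_0 {V : Type*} [Fintype V] (G : SimpleGraph V)
    (h : ∃ v, IsStrongStem G v) :
    ¬ ∃ D D' : Set V, IsSwapPair G D D' := by
  rintro ⟨D, D', hD, hD', hdisj, f, hf⟩
  obtain ⟨v, l₁, l₂, hne, h1, h2, hl1, hl2⟩ := h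
  by_cases hv : v ∈ D
  · have hv' : v ∉ D' := fun hv' => hdisj.ne_of_mem hv hv' rfl
    exact key hne h1 h2 hl1 hl2 hD' hdisj.symm f.symm
      (fun y => ((f.apply_symm_apply y ▸ hf (f.symm y)).symm : G.Adj y (f.symm y))) hv'
  · exact key hne h1 h2 hl1 hl2 hD hdisj f hf hv
end

section
/- Every non-trivial weak tree T (a tree with at least two vertices and no vertex adjacent to two or more leaves) has a pair of disjoint dominating sets with a perfect matching between them; i.e., T has a swap set. -/
open SimpleGraph

variable {V : Type*}

open SimpleGraph.Walk

namespace SwapAux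

lemma path_length_eq_dist {T : SimpleGraph V} (hT : T.IsTree) {a b : V}
    {p : T.Walk a b} (hp : p.IsPath) : p.length = T.dist a b := by
  obtain ⟨q, hq, hlen⟩ := hT.isConnected.exists_path_of_dist a b
  have := (hT.existsUnique_path a b).unique hp hq
  rw [this, hlen]

lemma isPath_concat {T : SimpleGraph V} {a b c : V} {p : T.Walk a b}
    (hp : p.IsPath) (h : T.Adj b c) (hc : c ∉ p.support) : (p.concat h).IsPath := by
  rw [← isPath_reverse_iff, reverse_concat]
  exact hp.reverse.cons (by simpa using hc)

lemma exists_concat_of_ne {T : SimpleGraph V} {a b : V} (hne : a ≠ b) (p : T.Walk a b) :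
    ∃ (c : V) (q : T.Walk a c) (had : T.Adj c b), p = q.concat had := by
  cases p with
  | nil => exact absurd rfl hne
  | cons h q =>
    obtain ⟨x, r, h', he⟩ := Walk.exists_cons_eq_concat h q
    exact ⟨x, r, h', he⟩

lemma adj_dist_cases {T : SimpleGraph V} (hT : T.IsTree) (u : V) {a b : V} (hadj : T.Adj a b) :
    T.dist u b = T.dist u a + 1 ∨ T.dist u a = T.dist u b + 1 := by
  classical
  obtain ⟨p, hp, hlen⟩ := hT.isConnected.exists_path_of_dist u b
  by_cases ha : a ∈ p.support
  · left
    have h1 : (p.takeUntil a ha).length = T.dist u a := path_length_eq_dist hT (hp.takeUntil ha)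
    have h2 : (p.dropUntil a ha).length = T.dist a b := path_length_eq_dist hT (hp.dropUntil ha)
    have h3 : T.dist a b = 1 := dist_eq_one_iff_adj.mpr hadj
    have h4 := congrArg Walk.length (p.take_spec ha)
    rw [Walk.length_append, h1, h2, h3] at h4
    omega
  · right
    have hq : (p.concat hadj.symm).IsPath := isPath_concat hp hadj.symm ha
    have := path_length_eq_dist hT hq
    rw [Walk.length_concat, hlen] at this
    omega

lemma parent_unique {T : SimpleGraph V} (hT : T.IsTree) (u : V) {a b v : V}
    (hav : T.Adj a v) (hbv : T.Adj b v)
    (ha : T.dist u a + 1 = T.dist u v) (hb : T.dist u b + 1 = T.dist u v) : a = b := by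
  classical
  obtain ⟨p, hp, hlp⟩ := hT.isConnected.exists_path_of_dist u a
  obtain ⟨q, hq, hlq⟩ := hT.isConnected.exists_path_of_dist u b
  have hvp : v ∉ p.support := by
    intro hv
    have h1 : (p.takeUntil v hv).length = T.dist u v := path_length_eq_dist hT (hp.takeUntil hv)
    have h2 := p.length_takeUntil_le hv
    omega
  have hvq : v ∉ q.support := by
    intro hv
    have h1 : (q.takeUntil v hv).length = T.dist u v := path_length_eq_dist hT (hq.takeUntil hv)
    have h2 := q.length_takeUntil_le hv
    omega
  have hpp : (p.concat hav).IsPath := isPath_concat hp hav hvp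
  have hqq : (q.concat hbv).IsPath := isPath_concat hq hbv hvq
  have heq : p.concat hav = q.concat hbv := (hT.existsUnique_path u v).unique hpp hqq
  obtain ⟨hv, -⟩ := Walk.concat_inj heq
  exact hv

lemma exists_parent {T : SimpleGraph V} (hT : T.IsTree) (u : V) {v : V} (hne : v ≠ u) :
    ∃ t, T.Adj t v ∧ T.dist u t + 1 = T.dist u v := by
  obtain ⟨p, hp, hlen⟩ := hT.isConnected.exists_path_of_dist u v
  obtain ⟨c, q, had, he⟩ := exists_concat_of_ne (Ne.symm hne) p
  have hq : q.IsPath := by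
    have h1 : (q.concat had).IsPath := he ▸ hp
    rw [← isPath_reverse_iff, reverse_concat] at h1
    have h2 := h1.of_cons.reverse
    rwa [Walk.reverse_reverse] at h2
  refine ⟨c, had, ?_⟩
  have h3 : q.length = T.dist u c := path_length_eq_dist hT hq
  have h4 : (q.concat had).length = T.dist u v := by rw [← he, hlen]
  rw [Walk.length_concat] at h4
  omega

lemma ecc_leaf {T : SimpleGraph V} (hT : T.IsTree) (u l : V)
    (hmax : ∀ v, T.dist u v ≤ T.dist u l) (hne : l ≠ u) :
    ∃ s, T.neighborSet l = {s} ∧ T.Adj s l ∧ T.dist u s + 1 = T.dist u l := by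
  obtain ⟨s, hs, hds⟩ := exists_parent hT u hne
  refine ⟨s, ?_, hs, hds⟩
  ext y
  simp only [mem_neighborSet, Set.mem_singleton_iff]
  constructor
  · intro hy
    rcases adj_dist_cases hT u hy.symm with h | h
    · exact parent_unique hT u hy.symm hs h.symm hds
    · have := hmax y; omega
  · intro h; subst h; exact hs.symm

lemma walk_transfer {T : SimpleGraph V} {S : Set V} {a b : V} (p : T.Walk a b)
    (hsub : ∀ x ∈ p.support, x ∈ S) :
    ∀ (ha : a ∈ S) (hb : b ∈ S), (T.induce S).Reachable ⟨a, ha⟩ ⟨b, hb⟩ := by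
  induction p with
  | nil => intro ha hb; rfl
  | @cons a c b h p ih =>
    intro ha hb
    have hc : c ∈ S := hsub c (by simp)
    have step : (T.induce S).Adj ⟨a, ha⟩ ⟨c, hc⟩ := h
    exact (step.reachable).trans (ih (fun x hx => hsub x (by simp [hx])) hc hb)

lemma induce_acyclic {T : SimpleGraph V} (h : T.IsAcyclic) (S : Set V) :
    (T.induce S).IsAcyclic := by
  intro v c hc
  exact h ((c.map (Embedding.induce S).toHom))
    ((Walk.map_isCycle_iff_of_injective (Subtype.val_injective)).mpr hc)

lemma neighborSet_induce_image {T : SimpleGraph V} (S : Set V) (v : ↥S) :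
    Subtype.val '' ((T.induce S).neighborSet v) = T.neighborSet ↑v ∩ S := by
  ext y
  simp only [Set.mem_image, mem_neighborSet, comap_adj, Function.Embedding.coe_subtype,
    Set.mem_inter_iff]
  constructor
  · rintro ⟨⟨y', hy'⟩, hadj, rfl⟩; exact ⟨hadj, hy'⟩
  · rintro ⟨hadj, hy⟩; exact ⟨⟨y, hy⟩, hadj, rfl⟩

lemma isLeaf_induce_iff {T : SimpleGraph V} (S : Set V) (v : ↥S) :
    IsLeaf (T.induce S) v ↔ (T.neighborSet ↑v ∩ S).ncard = 1 := by
  unfold IsLeaf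
  rw [← neighborSet_induce_image, Set.ncard_image_of_injective _ Subtype.val_injective]

lemma equiv_insert {α : Type*} (R : α → α → Prop) {D D' : Set α}
    (e : {x // x ∈ D} ≃ {x // x ∈ D'}) (he : ∀ x : D, R x (e x))
    {a b : α} (ha : a ∉ D) (hb : b ∉ D') (hab : R a b) :
    ∃ g : (D ∪ {a} : Set α) ≃ (D' ∪ {b} : Set α), ∀ x : (D ∪ {a} : Set α), R x (g x) := by
  classical
  refine ⟨⟨fun x => if h : (x : α) ∈ D then ⟨e ⟨x, h⟩, Or.inl (e ⟨x, h⟩).2⟩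
      else ⟨b, Or.inr rfl⟩,
    fun y => if h : (y : α) ∈ D' then ⟨e.symm ⟨y, h⟩, Or.inl (e.symm ⟨y, h⟩).2⟩
      else ⟨a, Or.inr rfl⟩, ?_, ?_⟩, ?_⟩
  · rintro ⟨x, hx⟩
    by_cases h : x ∈ D
    · simp only [h, dif_pos]
      have h2 : ((e ⟨x, h⟩ : {x // x ∈ D'}) : α) ∈ D' := (e ⟨x, h⟩).2
      simp only [h2, dif_pos]
      ext
      simp [Equiv.symm_apply_apply]
    · simp only [h, dif_neg, not_false_iff]
      simp only [hb, dif_neg, not_false_iff]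
      ext
      simp only []
      rcases hx with hx | hx
      · exact absurd hx h
      · exact (Set.mem_singleton_iff.mp hx).symm
  · rintro ⟨y, hy⟩
    by_cases h : y ∈ D'
    · simp only [h, dif_pos]
      have h2 : ((e.symm ⟨y, h⟩ : {x // x ∈ D}) : α) ∈ D := (e.symm ⟨y, h⟩).2
      simp only [h2, dif_pos]
      ext
      simp [Equiv.apply_symm_apply]
    · simp only [h, dif_neg, not_false_iff]
      simp only [ha, dif_neg, not_false_iff]
      ext
      simp only []
      rcases hy with hy | hy
      · exact absurd hy h
      · exact (Set.mem_singleton_iff.mp hy).symm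
  · rintro ⟨x, hx⟩
    simp only [Equiv.coe_fn_mk]
    by_cases h : x ∈ D
    · rw [dif_pos h]
      exact he ⟨x, h⟩
    · rw [dif_neg h]
      have hxa : x = a := by
        rcases hx with hx | hx
        · exact absurd hx h
        · exact Set.mem_singleton_iff.mp hx
      subst hxa
      exact hab

lemma internal_two_nbrs {T : SimpleGraph V} {a b v : V} {p : T.Walk a b} (hp : p.IsPath)
    (hv : v ∈ p.support) (hva : v ≠ a) (hvb : v ≠ b) :
    ∃ y₁ y₂, y₁ ≠ y₂ ∧ T.Adj v y₁ ∧ T.Adj v y₂ ∧ y₁ ∈ p.support ∧ y₂ ∈ p.support := by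
  classical
  set q1 := p.takeUntil v hv with hq1
  set q2 := p.dropUntil v hv with hq2
  obtain ⟨c₁, r₁, had₁, he₁⟩ := exists_concat_of_ne (fun h => hva h.symm) q1
  obtain ⟨c₂, r₂, had₂, he₂⟩ := exists_concat_of_ne (Ne.symm hvb) q2.reverse
  have hc₁mem : c₁ ∈ q1.support := by
    rw [he₁, Walk.support_concat]
    simp [r₁.end_mem_support]
  have hc₂mem : c₂ ∈ q2.support := by
    have : c₂ ∈ q2.reverse.support := by
      rw [he₂, Walk.support_concat]
      simp [r₂.end_mem_support]
    rwa [Walk.support_reverse, List.mem_reverse] at this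
  have hc₂v : c₂ ≠ v := fun h => T.irrefl (h ▸ had₂)
  have hc₂tail : c₂ ∈ q2.support.tail := by
    have := q2.support_eq_cons
    rcases List.mem_cons.mp (this ▸ hc₂mem) with h | h
    · exact absurd h hc₂v
    · exact h
  have hnodup : (q1.support ++ q2.support.tail).Nodup := by
    have := hp.support_nodup
    rwa [← p.take_spec hv, Walk.support_append] at this
  have hne : c₁ ≠ c₂ := by
    intro h
    rw [List.nodup_append] at hnodup
    exact hnodup.2.2 c₁ hc₁mem c₂ hc₂tail h
  refine ⟨c₁, c₂, hne, had₁.symm, had₂.symm, ?_, ?_⟩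
  · exact p.support_takeUntil_subset hv hc₁mem
  · exact p.support_dropUntil_subset hv hc₂mem

lemma path_avoids_leaf {T : SimpleGraph V} {l s a b : V}
    (hlnb : T.neighborSet l = {s}) (ha : a ≠ l) (hb : b ≠ l) {p : T.Walk a b}
    (hp : p.IsPath) : l ∉ p.support := by
  intro hmem
  obtain ⟨y₁, y₂, hne, h1, h2, -, -⟩ :=
    internal_two_nbrs hp hmem (fun h => ha h.symm) (fun h => hb h.symm)
  have e1 : y₁ = s := by
    have : y₁ ∈ T.neighborSet l := h1
    rwa [hlnb, Set.mem_singleton_iff] at this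
  have e2 : y₂ = s := by
    have : y₂ ∈ T.neighborSet l := h2
    rwa [hlnb, Set.mem_singleton_iff] at this
  exact hne (e1.trans e2.symm)

lemma path_avoids_deg2 {T : SimpleGraph V} {s l t a b : V}
    (hnb : ∀ y, T.Adj s y → y = l ∨ y = t) (ha : a ≠ s) (hb : b ≠ s) {p : T.Walk a b}
    (hp : p.IsPath) (hl : l ∉ p.support) : s ∉ p.support := by
  intro hmem
  obtain ⟨y₁, y₂, hne, h1, h2, m1, m2⟩ :=
    internal_two_nbrs hp hmem (fun h => ha h.symm) (fun h => hb h.symm)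
  rcases hnb y₁ h1 with rfl | rfl
  · exact hl m1
  · rcases hnb y₂ h2 with rfl | rfl
    · exact hl m2
    · exact hne rfl

lemma induce_connected_of {T : SimpleGraph V} (hT : T.IsTree) (S : Set V) (hne : S.Nonempty)
    (havoid : ∀ a b, a ∈ S → b ∈ S → ∀ (p : T.Walk a b), p.IsPath →
      ∀ x ∈ p.support, x ∈ S) : (T.induce S).Connected := by
  classical
  haveI : Nonempty ↥S := ⟨⟨hne.choose, hne.choose_spec⟩⟩
  refine ⟨fun x y => ?_⟩
  obtain ⟨a, ha⟩ := x
  obtain ⟨b, hb⟩ := y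
  obtain ⟨w⟩ := hT.isConnected.preconnected a b
  exact walk_transfer (w.toPath : T.Walk a b)
    (havoid a b ha hb _ (w.toPath).isPath) ha hb

lemma image_equiv {α β : Type*} (R : β → β → Prop) (v : α → β) (hv : Function.Injective v)
    {E E' : Set α} (f : {x // x ∈ E} ≃ {x // x ∈ E'})
    (hf : ∀ x : {x // x ∈ E}, R (v ↑x) (v ↑(f x))) :
    ∃ e : {x // x ∈ v '' E} ≃ {x // x ∈ v '' E'}, ∀ x : {x // x ∈ v '' E}, R ↑x ↑(e x) := by
  refine ⟨(Equiv.Set.image v E hv).symm.trans (f.trans (Equiv.Set.image v E' hv)), ?_⟩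
  rintro ⟨x, hx⟩
  obtain ⟨y, hy, rfl⟩ := hx
  simp only [Equiv.trans_apply]
  have key : (Equiv.Set.image v E hv).symm ⟨v y, ⟨y, hy, rfl⟩⟩ = ⟨y, hy⟩ :=
    (Equiv.Set.image v E hv).symm_apply_eq.mpr (Subtype.ext rfl)
  rw [key]
  simpa using hf ⟨y, hy⟩

lemma lift_swap {G : SimpleGraph V} {S : Set V} {E E' : Set ↥S}
    (hE : IsDomSet (G.induce S) E) (hE' : IsDomSet (G.induce S) E')
    (hdisj : Disjoint E E') (f : {x // x ∈ E} ≃ {x // x ∈ E'})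
    (hf : ∀ e : {x // x ∈ E}, (G.induce S).Adj ↑e ↑(f e))
    {a b : V} (haS : a ∉ S) (hbS : b ∉ S) (hab : G.Adj a b)
    (hout : ∀ v, v ∉ S → v ≠ a → v ≠ b →
      (∃ u₁ ∈ Subtype.val '' E ∪ ({a} : Set V), G.Adj u₁ v) ∧
      (∃ u₂ ∈ Subtype.val '' E' ∪ ({b} : Set V), G.Adj u₂ v)) :
    IsSwapPair G (Subtype.val '' E ∪ {a}) (Subtype.val '' E' ∪ {b}) := by
  classical
  have hvalE_sub : Subtype.val '' E ⊆ S := by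
    rintro x ⟨y, -, rfl⟩; exact y.2
  have hvalE'_sub : Subtype.val '' E' ⊆ S := by
    rintro x ⟨y, -, rfl⟩; exact y.2
  refine ⟨?_, ?_, ?_, ?_⟩
  · -- D dominating
    intro v hv
    by_cases hvS : v ∈ S
    · have hvE : (⟨v, hvS⟩ : ↥S) ∉ E := by
        intro h
        exact hv (Or.inl ⟨⟨v, hvS⟩, h, rfl⟩)
      obtain ⟨u, hu, hadj⟩ := hE _ hvE
      exact ⟨↑u, Or.inl ⟨u, hu, rfl⟩, hadj⟩
    · rcases eq_or_ne v a with rfl | hva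
      · exact absurd (Or.inr rfl) hv
      · rcases eq_or_ne v b with rfl | hvb
        · exact ⟨a, Or.inr rfl, hab⟩
        · exact (hout v hvS hva hvb).1
  · -- D' dominating
    intro v hv
    by_cases hvS : v ∈ S
    · have hvE : (⟨v, hvS⟩ : ↥S) ∉ E' := by
        intro h
        exact hv (Or.inl ⟨⟨v, hvS⟩, h, rfl⟩)
      obtain ⟨u, hu, hadj⟩ := hE' _ hvE
      exact ⟨↑u, Or.inl ⟨u, hu, rfl⟩, hadj⟩
    · rcases eq_or_ne v b with rfl | hvb
      · exact absurd (Or.inr rfl) hv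
      · rcases eq_or_ne v a with rfl | hva
        · exact ⟨b, Or.inr rfl, hab.symm⟩
        · exact (hout v hvS hva hvb).2
  · -- disjoint
    rw [Set.disjoint_left]
    rintro x (⟨y, hy, rfl⟩ | hx) hx'
    · rcases hx' with ⟨y', hy', hyy⟩ | hx'
      · have : y' = y := Subtype.val_injective hyy
        subst this
        exact Set.disjoint_left.mp hdisj hy hy'
      · exact hbS (Set.mem_singleton_iff.mp hx' ▸ y.2)
    · have hxa : x = a := Set.mem_singleton_iff.mp hx
      subst hxa
      rcases hx' with ⟨y', -, hyy⟩ | hx'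
      · exact haS (hyy ▸ y'.2)
      · exact G.ne_of_adj hab (Set.mem_singleton_iff.mp hx')
  · -- matching
    obtain ⟨e₀, he₀⟩ := image_equiv (fun x y => G.Adj x y) (Subtype.val : ↥S → V)
      Subtype.val_injective f (fun x => hf x)
    have hanotin : a ∉ Subtype.val '' E := fun h => haS (hvalE_sub h)
    have hbnotin : b ∉ Subtype.val '' E' := fun h => hbS (hvalE'_sub h)
    obtain ⟨g, hg⟩ := equiv_insert (fun x y => G.Adj x y) e₀ he₀ hanotin hbnotin hab
    exact ⟨g, hg⟩

universe u

lemma nbr_singleton {T : SimpleGraph V} {x w : V} (h : IsLeaf T x) (hadj : T.Adj x w) :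
    T.neighborSet x = {w} := by
  obtain ⟨c, hc⟩ := Set.ncard_eq_one.mp h
  have hw : w ∈ T.neighborSet x := hadj
  rw [hc] at hw ⊢
  rw [Set.mem_singleton_iff.mp hw]

lemma leaf_of_nbr {T : SimpleGraph V} {x w : V} (h : T.neighborSet x = {w}) : IsLeaf T x := by
  show (T.neighborSet x).ncard = 1
  rw [h]
  exact Set.ncard_singleton w

lemma exists_third [Fintype V] (h : 3 ≤ Fintype.card V) (a b : V) : ∃ c, c ≠ a ∧ c ≠ b := by
  classical
  by_contra hcon
  push_neg at hcon
  have hsub : (Finset.univ : Finset V) ⊆ {a, b} := by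
    intro c _
    by_cases hca : c = a
    · simp [hca]
    · simp [hcon c hca]
  have h2 : Fintype.card V ≤ ({a, b} : Finset V).card := by
    rw [← Finset.card_univ]
    exact Finset.card_le_card hsub
  have h3 : ({a, b} : Finset V).card ≤ 2 := Finset.card_insert_le a {b} |>.trans (by simp)
  omega

theorem aux (n : ℕ) : ∀ (V : Type u) [Fintype V] (T : SimpleGraph V),
    Fintype.card V = n → T.IsTree → IsWeakGraph T →
    ∀ w₀ x₀ : V, T.Adj w₀ x₀ → IsLeaf T x₀ →
    ∃ D D' : Set V, IsSwapPair T D D' ∧ w₀ ∈ D ∧ x₀ ∈ D' := by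
  induction n using Nat.strong_induction_on with
  | _ n IH =>
  intro V _ T hcard hT hweak w₀ x₀ hadj hx₀
  classical
  have hx₀nbr : T.neighborSet x₀ = {w₀} := nbr_singleton hx₀ hadj.symm
  by_cases hsmall : Fintype.card V < 3
  · -- base case: every vertex is w₀ or x₀
    have huniv : ∀ v : V, v = w₀ ∨ v = x₀ := by
      intro v
      by_contra hcon
      push_neg at hcon
      have h3 : 3 ≤ Fintype.card V := by
        have : ({w₀, x₀, v} : Finset V).card = 3 := by
          rw [Finset.card_insert_of_notMem (by simp [hadj.ne, hcon.1.symm]),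
            Finset.card_insert_of_notMem (by simp [hcon.2.symm]), Finset.card_singleton]
        rw [← this]
        exact Finset.card_le_univ _
      omega
    refine ⟨(∅ : Set V) ∪ {w₀}, (∅ : Set V) ∪ {x₀}, ⟨?_, ?_, ?_, ?_⟩, by simp, by simp⟩
    · intro v hv
      rcases huniv v with rfl | rfl
      · exact absurd (by simp) hv
      · exact ⟨w₀, by simp, hadj⟩
    · intro v hv
      rcases huniv v with rfl | rfl
      · exact ⟨x₀, by simp, hadj.symm⟩
      · exact absurd (by simp) hv
    · simp [Set.disjoint_singleton_left, hadj.ne]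
    · obtain ⟨g, hg⟩ := equiv_insert (fun x y => T.Adj x y) (Equiv.refl ↥(∅ : Set V))
        (by rintro ⟨x, hx⟩; exact absurd hx (Set.notMem_empty x))
        (Set.notMem_empty w₀) (Set.notMem_empty x₀) hadj
      exact ⟨g, hg⟩
  · -- main case
    push_neg at hsmall
    obtain ⟨l, -, hlmax'⟩ := Finset.exists_max_image Finset.univ (fun v => T.dist w₀ v)
      ⟨w₀, Finset.mem_univ _⟩
    have hmax : ∀ v, T.dist w₀ v ≤ T.dist w₀ l := fun v => hlmax' v (Finset.mem_univ _)
    have hdx₀ : T.dist w₀ x₀ = 1 := dist_eq_one_iff_adj.mpr hadj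
    have hdl1 : 1 ≤ T.dist w₀ l := le_trans (by omega) (hmax x₀)
    have hlne : l ≠ w₀ := by
      intro h
      rw [h, T.dist_self] at hdl1
      omega
    obtain ⟨s, hlnb, hsl, hds⟩ := ecc_leaf hT w₀ l hmax hlne
    have hmaxleaf : ∀ y, T.dist w₀ y = T.dist w₀ l → T.Adj s y → T.neighborSet y = {s} := by
      intro y hy hsy
      have hyne : y ≠ w₀ := by
        intro h
        rw [h, T.dist_self] at hy
        omega
      obtain ⟨s', hnb', hs'l, -⟩ := ecc_leaf hT w₀ y (fun v => hy ▸ hmax v) hyne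
      have : s ∈ T.neighborSet y := hsy.symm
      rw [hnb', Set.mem_singleton_iff] at this
      rw [hnb', this]
    have hdl2 : 2 ≤ T.dist w₀ l := by
      by_contra hcon
      have hdl : T.dist w₀ l = 1 := by omega
      have hsw : s = w₀ := by
        have : T.dist w₀ s = 0 := by omega
        exact ((hT.isConnected.dist_eq_zero_iff).mp this).symm
      obtain ⟨v, hvw, hvl⟩ := exists_third hsmall w₀ l
      have hdv : T.dist w₀ v = 1 := by
        have h1 := hmax v
        have h2 := hT.isConnected.pos_dist_of_ne (Ne.symm hvw)
        omega
      have hvnb : T.neighborSet v = {s} := hmaxleaf v (by omega)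
        (by rw [hsw]; exact dist_eq_one_iff_adj.mp hdv)
      refine hweak w₀ ⟨l, v, Ne.symm hvl, hsw ▸ hsl, ?_, leaf_of_nbr hlnb, leaf_of_nbr hvnb⟩
      rw [← hsw]
      have : v ∈ T.neighborSet v → False := fun h => T.irrefl h
      rw [hsw] at hvnb ⊢
      exact (dist_eq_one_iff_adj.mp hdv)
    have hsw₀ : s ≠ w₀ := by
      intro h
      rw [h, T.dist_self] at hds
      omega
    obtain ⟨t, hts, hdt⟩ := exists_parent hT w₀ hsw₀
    have htl : t ≠ l := by
      intro h
      rw [h] at hdt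
      omega
    have hts_ne : t ≠ s := T.ne_of_adj hts
    have hsnb : ∀ y, T.Adj s y → y = l ∨ y = t := by
      intro y hy
      rcases adj_dist_cases hT w₀ hy with h | h
      · left
        by_contra hyl
        have hnb_y : T.neighborSet y = {s} := hmaxleaf y (by omega) hy
        exact hweak s ⟨l, y, fun he => hyl he.symm, hsl, hy, leaf_of_nbr hlnb,
          leaf_of_nbr hnb_y⟩
      · exact Or.inr (parent_unique hT w₀ hy.symm hts (by omega) hdt)
    have hw₀l : w₀ ≠ l := fun h => by rw [← h, T.dist_self] at hdl2; omega
    have hw₀s : w₀ ≠ s := Ne.symm hsw₀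
    have hx₀l : x₀ ≠ l := fun h => by rw [h] at hdx₀; omega
    have hx₀s : x₀ ≠ s := by
      intro h
      have : l ∈ T.neighborSet x₀ := by rw [h]; exact hsl
      rw [hx₀nbr, Set.mem_singleton_iff] at this
      exact hw₀l this.symm
    set S : Set V := ({l, s} : Set V)ᶜ with hS
    have hmemS : ∀ v : V, v ∈ S ↔ v ≠ l ∧ v ≠ s := by
      intro v
      simp [hS]
    have hlS : l ∉ S := by simp [hS]
    have hsS : s ∉ S := by simp [hS]
    have hw₀S : w₀ ∈ S := (hmemS w₀).mpr ⟨hw₀l, hw₀s⟩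
    have hx₀S : x₀ ∈ S := (hmemS x₀).mpr ⟨hx₀l, hx₀s⟩
    have htS : t ∈ S := (hmemS t).mpr ⟨htl, hts_ne⟩
    have havoid : ∀ a b, a ∈ S → b ∈ S → ∀ p : T.Walk a b, p.IsPath →
        ∀ x ∈ p.support, x ∈ S := by
      intro a b haS hbS p hp x hx
      have hnl : l ∉ p.support :=
        path_avoids_leaf hlnb ((hmemS a).mp haS).1 ((hmemS b).mp hbS).1 hp
      have hns : s ∉ p.support :=
        path_avoids_deg2 hsnb ((hmemS a).mp haS).2 ((hmemS b).mp hbS).2 hp hnl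
      exact (hmemS x).mpr ⟨fun h => hnl (h ▸ hx), fun h => hns (h ▸ hx)⟩
    have hT' : (T.induce S).IsTree :=
      ⟨induce_connected_of hT S ⟨w₀, hw₀S⟩ havoid, induce_acyclic hT.IsAcyclic S⟩
    have hcardS : Fintype.card ↥S < n := by
      rw [← hcard]
      exact Fintype.card_subtype_lt (x := l) (by simp [hS])
    have hadj' : (T.induce S).Adj ⟨w₀, hw₀S⟩ ⟨x₀, hx₀S⟩ := hadj
    have hx₀leaf' : IsLeaf (T.induce S) ⟨x₀, hx₀S⟩ := by
      rw [isLeaf_induce_iff]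
      have heq : T.neighborSet x₀ ∩ S = {w₀} := by
        rw [hx₀nbr]
        exact Set.inter_eq_self_of_subset_left (Set.singleton_subset_iff.mpr hw₀S)
      rw [heq]
      exact Set.ncard_singleton w₀
    by_cases hW' : IsWeakGraph (T.induce S)
    · -- good case
      obtain ⟨E, E', hswap', hw₀E, hx₀E'⟩ := IH _ hcardS ↥S (T.induce S) rfl hT' hW'
        ⟨w₀, hw₀S⟩ ⟨x₀, hx₀S⟩ hadj' hx₀leaf'
      obtain ⟨hE, hE', hdisj, f, hf⟩ := hswap'
      have hlift := lift_swap hE hE' hdisj f hf hsS hlS hsl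
        (by
          intro v hv hvs hvl
          exfalso
          rcases (not_iff_not.mpr (hmemS v)).mp hv |> fun h => h with h
          rw [not_and_or] at h
          rcases h with h | h
          · exact hvl (Classical.not_not.mp h)
          · exact hvs (Classical.not_not.mp h))
      exact ⟨_, _, hlift, Or.inl ⟨⟨w₀, hw₀S⟩, hw₀E, rfl⟩, Or.inl ⟨⟨x₀, hx₀S⟩, hx₀E', rfl⟩⟩
    · -- bad case
      rw [IsWeakGraph] at hW'
      push_neg at hW'
      obtain ⟨z, hz⟩ := hW'
      obtain ⟨l₁, l₂, hne12, hzl₁, hzl₂, hleaf₁, hleaf₂⟩ := hz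
      have hleafcase : ∀ y : ↥S, IsLeaf (T.induce S) y → IsLeaf T ↑y ∨ (↑y : V) = t := by
        intro y hy
        by_cases hyt : (↑y : V) = t
        · exact Or.inr hyt
        · left
          rw [isLeaf_induce_iff] at hy
          have heq : T.neighborSet ↑y ∩ S = T.neighborSet ↑y := by
            apply Set.inter_eq_self_of_subset_left
            intro c hc
            rw [hmemS c]
            constructor
            · intro h
              rw [h] at hc
              have h3 : (↑y : V) ∈ T.neighborSet l := Adj.symm hc
              rw [hlnb, Set.mem_singleton_iff] at h3
              exact ((hmemS ↑y).mp y.2).2 h3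
            · intro h
              rw [h] at hc
              rcases hsnb ↑y (Adj.symm hc) with h4 | h4
              · exact ((hmemS ↑y).mp y.2).1 h4
              · exact hyt h4
          rw [heq] at hy
          exact hy
      have hvalne : (↑l₁ : V) ≠ ↑l₂ := fun h => hne12 (Subtype.ext h)
      have hnotboth : ¬(IsLeaf T ↑l₁ ∧ IsLeaf T ↑l₂) := by
        rintro ⟨h1, h2⟩
        exact hweak ↑z ⟨↑l₁, ↑l₂, hvalne, hzl₁, hzl₂, h1, h2⟩
      -- produce lt (= t) and lx (a T-leaf)
      obtain ⟨lt, hlt_t, hlt_leaf, hz_lt, lx, hlx_leaf, hz_lx, hlx_ne⟩ :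
          ∃ lt : ↥S, (↑lt : V) = t ∧ IsLeaf (T.induce S) lt ∧ (T.induce S).Adj z lt ∧
            ∃ lx : ↥S, IsLeaf T ↑lx ∧ (T.induce S).Adj z lx ∧ lx ≠ lt := by
        rcases hleafcase l₁ hleaf₁ with h1 | h1 <;> rcases hleafcase l₂ hleaf₂ with h2 | h2
        · exact absurd ⟨h1, h2⟩ hnotboth
        · exact ⟨l₂, h2, hleaf₂, hzl₂, l₁, h1, hzl₁, hne12⟩
        · exact ⟨l₁, h1, hleaf₁, hzl₁, l₂, h2, hzl₂, Ne.symm hne12⟩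
        · exact absurd (h1.trans h2.symm) hvalne
      set w : V := ↑z with hw_def
      set x : V := ↑lx with hx_def
      have hwt : T.Adj w t := by
        have : (T.induce S).Adj z lt := hz_lt
        have h2 : T.Adj ↑z ↑lt := this
        rwa [hlt_t] at h2
      have hwx : T.Adj w x := hz_lx
      have hxnb : T.neighborSet x = {w} := nbr_singleton hlx_leaf hwx.symm
      have htnb : T.neighborSet t ∩ S = {w} := by
        have h1 : IsLeaf (T.induce S) lt := hlt_leaf
        rw [isLeaf_induce_iff, hlt_t] at h1
        obtain ⟨c, hc⟩ := Set.ncard_eq_one.mp h1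
        have hwmem : w ∈ T.neighborSet t ∩ S := ⟨hwt.symm, z.2⟩
        rw [hc] at hwmem ⊢
        rw [Set.mem_singleton_iff.mp hwmem]
      have htnb2 : ∀ y, T.Adj t y → y = s ∨ y = w := by
        intro y hy
        by_cases hyS : y ∈ S
        · right
          have : y ∈ T.neighborSet t ∩ S := ⟨hy, hyS⟩
          rw [htnb, Set.mem_singleton_iff] at this
          exact this
        · rw [hmemS y, not_and_or] at hyS
          rcases hyS with h | h
          · exfalso
            have hyl : y = l := Classical.not_not.mp h
            subst hyl
            have : t ∈ T.neighborSet y := hy.symm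
            rw [hlnb, Set.mem_singleton_iff] at this
            exact hts_ne this
          · exact Or.inl (Classical.not_not.mp h)
      have hwS : w ∈ S := z.2
      have hxS : x ∈ S := lx.2
      have hw_ne_t : w ≠ t := Ne.symm (T.ne_of_adj hwt).symm
      have hx_ne_t : x ≠ t := by
        intro h
        have hs_mem : s ∈ T.neighborSet x := by rw [h]; exact hts
        rw [hxnb, Set.mem_singleton_iff] at hs_mem
        exact ((hmemS w).mp hwS).2 hs_mem.symm
      have hw₀t : w₀ ≠ t := by
        intro h
        rcases htnb2 x₀ (h ▸ hadj) with h2 | h2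
        · exact hx₀s h2
        · -- x₀ = w : then x = t, contradiction
          have : x ∈ T.neighborSet x₀ := by rw [h2]; exact hwx
          rw [hx₀nbr, Set.mem_singleton_iff] at this
          exact hx_ne_t (this.trans h)
      have hx₀t : x₀ ≠ t := by
        intro h
        have hs_mem : s ∈ T.neighborSet x₀ := by rw [h]; exact hts
        rw [hx₀nbr, Set.mem_singleton_iff] at hs_mem
        exact hw₀s hs_mem.symm
      set S₂ : Set V := ({l, s, t} : Set V)ᶜ with hS₂
      have hmemS₂ : ∀ v : V, v ∈ S₂ ↔ v ≠ l ∧ v ≠ s ∧ v ≠ t := by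
        intro v
        simp [hS₂]
      have hlS₂ : l ∉ S₂ := by simp [hS₂]
      have hsS₂ : s ∉ S₂ := by simp [hS₂]
      have htS₂ : t ∉ S₂ := by simp [hS₂]
      have hw₀S₂ : w₀ ∈ S₂ := (hmemS₂ w₀).mpr ⟨hw₀l, hw₀s, hw₀t⟩
      have hx₀S₂ : x₀ ∈ S₂ := (hmemS₂ x₀).mpr ⟨hx₀l, hx₀s, hx₀t⟩
      have hwS₂ : w ∈ S₂ :=
        (hmemS₂ w).mpr ⟨((hmemS w).mp hwS).1, ((hmemS w).mp hwS).2, hw_ne_t⟩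
      have hxS₂ : x ∈ S₂ :=
        (hmemS₂ x).mpr ⟨((hmemS x).mp hxS).1, ((hmemS x).mp hxS).2, hx_ne_t⟩
      have havoid₂ : ∀ a b, a ∈ S₂ → b ∈ S₂ → ∀ p : T.Walk a b, p.IsPath →
          ∀ y ∈ p.support, y ∈ S₂ := by
        intro a b haS hbS p hp y hy
        obtain ⟨ha1, ha2, ha3⟩ := (hmemS₂ a).mp haS
        obtain ⟨hb1, hb2, hb3⟩ := (hmemS₂ b).mp hbS
        have hnl : l ∉ p.support := path_avoids_leaf hlnb ha1 hb1 hp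
        have hns : s ∉ p.support := path_avoids_deg2 hsnb ha2 hb2 hp hnl
        have hnt : t ∉ p.support := path_avoids_deg2 htnb2 ha3 hb3 hp hns
        exact (hmemS₂ y).mpr ⟨fun h => hnl (h ▸ hy), fun h => hns (h ▸ hy),
          fun h => hnt (h ▸ hy)⟩
      have hT₂ : (T.induce S₂).IsTree :=
        ⟨induce_connected_of hT S₂ ⟨w₀, hw₀S₂⟩ havoid₂, induce_acyclic hT.IsAcyclic S₂⟩
      have hcardS₂ : Fintype.card ↥S₂ < n := by
        rw [← hcard]
        exact Fintype.card_subtype_lt (x := l) (by simp [hS₂])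
      have hadj₂ : (T.induce S₂).Adj ⟨w₀, hw₀S₂⟩ ⟨x₀, hx₀S₂⟩ := hadj
      have hx₀leaf₂ : IsLeaf (T.induce S₂) ⟨x₀, hx₀S₂⟩ := by
        rw [isLeaf_induce_iff]
        have heq : T.neighborSet x₀ ∩ S₂ = {w₀} := by
          rw [hx₀nbr]
          exact Set.inter_eq_self_of_subset_left (Set.singleton_subset_iff.mpr hw₀S₂)
        rw [heq]
        exact Set.ncard_singleton w₀
      have hW₂ : IsWeakGraph (T.induce S₂) := by
        rintro z₂ ⟨m₁, m₂, hm12, hz₂m₁, hz₂m₂, hmleaf₁, hmleaf₂⟩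
        have hcase : ∀ y : ↥S₂, IsLeaf (T.induce S₂) y → IsLeaf T ↑y ∨ (↑y : V) = w := by
          intro y hy
          by_cases hyw : (↑y : V) = w
          · exact Or.inr hyw
          · left
            rw [isLeaf_induce_iff] at hy
            have heq : T.neighborSet ↑y ∩ S₂ = T.neighborSet ↑y := by
              apply Set.inter_eq_self_of_subset_left
              intro c hc
              obtain ⟨hy1, hy2, hy3⟩ := (hmemS₂ ↑y).mp y.2
              rw [hmemS₂ c]
              refine ⟨?_, ?_, ?_⟩
              · intro h
                rw [h] at hc
                have h3 : (↑y : V) ∈ T.neighborSet l := Adj.symm hc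
                rw [hlnb, Set.mem_singleton_iff] at h3
                exact hy2 h3
              · intro h
                rw [h] at hc
                rcases hsnb ↑y (Adj.symm hc) with h4 | h4
                · exact hy1 h4
                · exact hy3 h4
              · intro h
                rw [h] at hc
                rcases htnb2 ↑y (Adj.symm hc) with h4 | h4
                · exact hy2 h4
                · exact hyw h4
            rw [heq] at hy
            exact hy
        have hwnb₂ : T.neighborSet w ∩ S₂ = {x} →
            ∀ y : ↥S₂, (T.induce S₂).Adj y ⟨w, hwS₂⟩ → (↑y : V) = x := by
          intro hwnb y hy
          have : (↑y : V) ∈ T.neighborSet w ∩ S₂ := ⟨Adj.symm hy, y.2⟩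
          rw [hwnb, Set.mem_singleton_iff] at this
          exact this
        rcases hcase m₁ hmleaf₁ with h₁ | h₁ <;> rcases hcase m₂ hmleaf₂ with h₂ | h₂
        · exact hweak ↑z₂ ⟨↑m₁, ↑m₂, fun h => hm12 (Subtype.ext h), hz₂m₁, hz₂m₂, h₁, h₂⟩
        · -- m₂ = w
          have hm₂w : m₂ = (⟨w, hwS₂⟩ : ↥S₂) := Subtype.ext h₂
          have hwleaf₂ : IsLeaf (T.induce S₂) ⟨w, hwS₂⟩ := hm₂w ▸ hmleaf₂
          rw [isLeaf_induce_iff] at hwleaf₂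
          obtain ⟨c, hc⟩ := Set.ncard_eq_one.mp hwleaf₂
          have hxmem : x ∈ T.neighborSet w ∩ S₂ := ⟨hwx, hxS₂⟩
          rw [hc, Set.mem_singleton_iff] at hxmem
          have hwnb : T.neighborSet w ∩ S₂ = {x} := by rw [hc, hxmem]
          have hz₂x : (↑z₂ : V) = x := hwnb₂ hwnb z₂ (hm₂w ▸ hz₂m₂).symm.symm
          have hm₁w : (↑m₁ : V) = w := by
            have : (↑m₁ : V) ∈ T.neighborSet x := by
              have h5 : T.Adj ↑z₂ ↑m₁ := hz₂m₁
              rwa [hz₂x] at h5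
            rw [hxnb, Set.mem_singleton_iff] at this
            exact this
          exact hm12 (Subtype.ext (hm₁w.trans h₂.symm))
        · -- m₁ = w (symmetric)
          have hm₁w : m₁ = (⟨w, hwS₂⟩ : ↥S₂) := Subtype.ext h₁
          have hwleaf₂ : IsLeaf (T.induce S₂) ⟨w, hwS₂⟩ := hm₁w ▸ hmleaf₁
          rw [isLeaf_induce_iff] at hwleaf₂
          obtain ⟨c, hc⟩ := Set.ncard_eq_one.mp hwleaf₂
          have hxmem : x ∈ T.neighborSet w ∩ S₂ := ⟨hwx, hxS₂⟩
          rw [hc, Set.mem_singleton_iff] at hxmem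
          have hwnb : T.neighborSet w ∩ S₂ = {x} := by rw [hc, hxmem]
          have hz₂x : (↑z₂ : V) = x := hwnb₂ hwnb z₂ (hm₁w ▸ hz₂m₁).symm.symm
          have hm₂w : (↑m₂ : V) = w := by
            have : (↑m₂ : V) ∈ T.neighborSet x := by
              have h5 : T.Adj ↑z₂ ↑m₂ := hz₂m₂
              rwa [hz₂x] at h5
            rw [hxnb, Set.mem_singleton_iff] at this
            exact this
          exact hm12 (Subtype.ext (h₁.trans hm₂w.symm))
        · exact hm12 (Subtype.ext (h₁.trans h₂.symm))
      obtain ⟨E, E', hswap₂, hw₀E, hx₀E'⟩ := IH _ hcardS₂ ↥S₂ (T.induce S₂) rfl hT₂ hW₂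
        ⟨w₀, hw₀S₂⟩ ⟨x₀, hx₀S₂⟩ hadj₂ hx₀leaf₂
      obtain ⟨hE, hE', hdisj, f, hf⟩ := hswap₂
      set wH : ↥S₂ := ⟨w, hwS₂⟩ with hwHdef
      set xH : ↥S₂ := ⟨x, hxS₂⟩ with hxH
      have hxnbr₂ : ∀ y : ↥S₂, (T.induce S₂).Adj xH y → y = wH := by
        intro y hy
        have : (↑y : V) ∈ T.neighborSet x := hy
        rw [hxnb, Set.mem_singleton_iff] at this
        exact Subtype.ext this
      have horient : wH ∈ E ∨ wH ∈ E' := by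
        by_cases hxE : xH ∈ E
        · right
          have h5 := hf ⟨xH, hxE⟩
          have h6 := hxnbr₂ _ h5
          have h7 := (f ⟨xH, hxE⟩).2
          rwa [h6] at h7
        · left
          obtain ⟨y, hyE, hyadj⟩ := hE xH hxE
          have h6 := hxnbr₂ y hyadj.symm
          rwa [h6] at hyE
      have houtside : ∀ v, v ∉ S₂ → v ≠ l → v ≠ s → v = t := by
        intro v hv hvl hvs
        rw [hmemS₂ v] at hv
        by_contra hvt
        exact hv ⟨hvl, hvs, hvt⟩
      rcases horient with hwE | hwE'
      · -- wH ∈ E : a := l (into D), b := s (into D')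
        have hlift := lift_swap hE hE' hdisj f hf hlS₂ hsS₂ (hsl.symm)
          (by
            intro v hv hvl hvs
            have hvt : v = t := houtside v hv hvl hvs
            subst hvt
            exact ⟨⟨w, Or.inl ⟨wH, hwE, rfl⟩, hwt⟩, ⟨s, Or.inr rfl, hts.symm⟩⟩)
        exact ⟨_, _, hlift, Or.inl ⟨⟨w₀, hw₀S₂⟩, hw₀E, rfl⟩,
          Or.inl ⟨⟨x₀, hx₀S₂⟩, hx₀E', rfl⟩⟩
      · -- wH ∈ E' : a := s (into D), b := l (into D')
        have hlift := lift_swap hE hE' hdisj f hf hsS₂ hlS₂ hsl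
          (by
            intro v hv hvs hvl
            have hvt : v = t := houtside v hv hvl hvs
            subst hvt
            exact ⟨⟨s, Or.inr rfl, hts.symm⟩, ⟨w, Or.inl ⟨wH, hwE', rfl⟩, hwt⟩⟩)
        exact ⟨_, _, hlift, Or.inl ⟨⟨w₀, hw₀S₂⟩, hw₀E, rfl⟩,
          Or.inl ⟨⟨x₀, hx₀S₂⟩, hx₀E', rfl⟩⟩



end SwapAux

theorem stmt_2 {V : Type*} [Fintype V] (T : SimpleGraph V) (hT : T.IsTree)
    (hnt : 2 ≤ Fintype.card V) (hweak : IsWeakGraph T) :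
    ∃ D D' : Set V, IsSwapPair T D D' := by
  classical
  have hne : Nonempty V := Fintype.card_pos_iff.mp (by omega)
  obtain ⟨u⟩ := hne
  obtain ⟨l, -, hlmax'⟩ := Finset.exists_max_image Finset.univ (fun v => T.dist u v)
    ⟨u, Finset.mem_univ _⟩
  have hmax : ∀ v, T.dist u v ≤ T.dist u l := fun v => hlmax' v (Finset.mem_univ _)
  obtain ⟨v, hv⟩ := Fintype.exists_ne_of_one_lt_card (by omega) u
  have hdl1 : 1 ≤ T.dist u l :=
    le_trans (hT.isConnected.pos_dist_of_ne (Ne.symm hv)) (hmax v)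
  have hlne : l ≠ u := fun h => by rw [h, SimpleGraph.dist_self] at hdl1; omega
  obtain ⟨s, hlnb, hsl, -⟩ := SwapAux.ecc_leaf hT u l hmax hlne
  obtain ⟨D, D', hswap, -, -⟩ := SwapAux.aux (Fintype.card V) V T rfl hT hweak s l hsl
    (SwapAux.leaf_of_nbr hlnb)
  exact ⟨D, D', hswap⟩
end

section
/- A non-trivial tree T has a swap set if and only if T is a weak tree (no vertex of T is adjacent to two or more leaves). -/
open SimpleGraph

variable {V : Type*}

open SimpleGraph

namespace SwapAux

variable {V : Type*} {T : SimpleGraph V}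

/-- neighbors of `v` inside `W`. -/
def NW (T : SimpleGraph V) (W : Set V) (v : V) : Set V := {u | u ∈ W ∧ T.Adj v u}

lemma mem_NW {W : Set V} {v u : V} : u ∈ NW T W v ↔ u ∈ W ∧ T.Adj v u := Iff.rfl

/-- `W` is connected via walks supported in `W`. -/
def connW (T : SimpleGraph V) (W : Set V) : Prop :=
  ∀ x ∈ W, ∀ y ∈ W, ∃ p : T.Walk x y, ∀ z ∈ p.support, z ∈ W

def leafW (T : SimpleGraph V) (W : Set V) (v : V) : Prop :=
  v ∈ W ∧ ∃ u, NW T W v = {u}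

def weakW (T : SimpleGraph V) (W : Set V) : Prop :=
  ∀ s ∈ W, ∀ l₁ l₂, leafW T W l₁ → leafW T W l₂ → T.Adj s l₁ → T.Adj s l₂ → l₁ = l₂

def relSwap (T : SimpleGraph V) (W : Set V) : Prop :=
  ∃ D D' : Set V, D ⊆ W ∧ D' ⊆ W ∧
    (∀ v ∈ W, v ∉ D → ∃ u ∈ D, T.Adj u v) ∧
    (∀ v ∈ W, v ∉ D' → ∃ u ∈ D', T.Adj u v) ∧
    Disjoint D D' ∧ ∃ f : D ≃ D', ∀ x : D, T.Adj x (f x)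

lemma exists_adj_of_ne {v x : V} (w : T.Walk v x) (h : v ≠ x) :
    ∃ a, T.Adj v a ∧ a ∈ w.support := by
  cases w with
  | nil => exact absurd rfl h
  | cons h' q => exact ⟨_, h', by simp⟩

lemma interior_two_nbrs {x y v : V} {q : T.Walk x y} (hq : q.IsPath) (hv : v ∈ q.support)
    (hvx : v ≠ x) (hvy : v ≠ y) :
    ∃ a b, a ≠ b ∧ a ∈ q.support ∧ b ∈ q.support ∧ T.Adj v a ∧ T.Adj v b := by
  classical
  obtain ⟨a, ha, haS⟩ := exists_adj_of_ne ((q.takeUntil v hv).reverse) hvx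
  obtain ⟨b, hb, hbS⟩ := exists_adj_of_ne (q.dropUntil v hv) hvy
  rw [Walk.support_reverse, List.mem_reverse] at haS
  have hnd := hq.support_nodup
  rw [← q.take_spec hv, Walk.support_append] at hnd
  have hbt : b ∈ ((q.dropUntil v hv).support).tail := by
    have := Walk.support_eq_cons (q.dropUntil v hv)
    rw [this] at hbS
    rcases List.mem_cons.mp hbS with h' | h'
    · exact absurd h' hb.ne'
    · exact h'
  refine ⟨a, b, ?_, Walk.support_takeUntil_subset q hv haS,
    Walk.support_dropUntil_subset q hv hbS, ha, hb⟩
  intro hab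
  exact (List.disjoint_of_nodup_append hnd) haS (hab ▸ hbt)

lemma adj_mem_support_eq {a b y w : V} (hT : T.IsAcyclic) {h : T.Adj a b} {q : T.Walk b y}
    (hp : (Walk.cons h q).IsPath) (haw : T.Adj a w) (hw : w ∈ (Walk.cons h q).support) :
    w = b := by
  classical
  rw [Walk.support_cons, List.mem_cons] at hw
  rcases hw with rfl | hw
  · exact absurd haw (T.irrefl)
  by_contra hne
  have hq := (Walk.cons_isPath_iff h q).mp hp
  have hP1 : (Walk.cons haw Walk.nil : T.Walk a w).IsPath := by
    simp [Walk.cons_isPath_iff, haw.ne]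
  have hP2 : (Walk.cons h (q.takeUntil w hw)).IsPath := by
    rw [Walk.cons_isPath_iff]
    exact ⟨hq.1.takeUntil hw, fun hc => hq.2 (Walk.support_takeUntil_subset q hw hc)⟩
  have := isAcyclic_iff_path_unique.mp hT ⟨_, hP1⟩ ⟨_, hP2⟩
  have hlen : (Walk.cons haw (Walk.nil : T.Walk w w)).length
      = (Walk.cons h (q.takeUntil w hw)).length := by
    rw [Subtype.mk.injEq] at this; rw [this]
  simp only [Walk.length_cons, Walk.length_nil] at hlen
  exact hne (Walk.eq_of_length_eq_zero (p := q.takeUntil w hw) (by omega)).symm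



lemma avoid2 {W : Set V} {v0 v1 v2 x y : V} (h0 : NW T W v0 = {v1}) (h1 : NW T W v1 = {v0, v2})
    {q : T.Walk x y} (hq : q.IsPath) (hqW : ∀ z ∈ q.support, z ∈ W)
    (hx0 : x ≠ v0) (hx1 : x ≠ v1) (hy0 : y ≠ v0) (hy1 : y ≠ v1) :
    v0 ∉ q.support ∧ v1 ∉ q.support := by
  have hv0 : v0 ∉ q.support := by
    intro hv
    obtain ⟨a, b, hab, haS, hbS, ha, hb⟩ :=
      interior_two_nbrs hq hv (fun h => hx0 h.symm) (fun h => hy0 h.symm)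
    have ha' : a ∈ NW T W v0 := ⟨hqW a haS, ha⟩
    have hb' : b ∈ NW T W v0 := ⟨hqW b hbS, hb⟩
    rw [h0, Set.mem_singleton_iff] at ha' hb'
    exact hab (ha'.trans hb'.symm)
  refine ⟨hv0, fun hv => ?_⟩
  obtain ⟨a, b, hab, haS, hbS, ha, hb⟩ :=
    interior_two_nbrs hq hv (fun h => hx1 h.symm) (fun h => hy1 h.symm)
  have ha' : a ∈ NW T W v1 := ⟨hqW a haS, ha⟩
  have hb' : b ∈ NW T W v1 := ⟨hqW b hbS, hb⟩
  rw [h1] at ha' hb'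
  rcases ha' with rfl | rfl
  · exact hv0 haS
  · rcases hb' with rfl | rfl
    · exact hv0 hbS
    · exact hab rfl

lemma avoid3 {W : Set V} {v0 v1 v2 v3 x y : V} (h0 : NW T W v0 = {v1})
    (h1 : NW T W v1 = {v0, v2}) (h2 : NW T W v2 = {v1, v3})
    {q : T.Walk x y} (hq : q.IsPath) (hqW : ∀ z ∈ q.support, z ∈ W)
    (hx0 : x ≠ v0) (hx1 : x ≠ v1) (hx2 : x ≠ v2) (hy0 : y ≠ v0) (hy1 : y ≠ v1) (hy2 : y ≠ v2) :
    v0 ∉ q.support ∧ v1 ∉ q.support ∧ v2 ∉ q.support := by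
  obtain ⟨hv0, hv1⟩ := avoid2 h0 h1 hq hqW hx0 hx1 hy0 hy1
  refine ⟨hv0, hv1, fun hv => ?_⟩
  obtain ⟨a, b, hab, haS, hbS, ha, hb⟩ :=
    interior_two_nbrs hq hv (fun h => hx2 h.symm) (fun h => hy2 h.symm)
  have ha' : a ∈ NW T W v2 := ⟨hqW a haS, ha⟩
  have hb' : b ∈ NW T W v2 := ⟨hqW b hbS, hb⟩
  rw [h2] at ha' hb'
  rcases ha' with rfl | rfl
  · exact hv1 haS
  · rcases hb' with rfl | rfl
    · exact hv1 hbS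
    · exact hab rfl

lemma connW_diff2 {W : Set V} {v0 v1 v2 : V} (hconn : connW T W)
    (h0 : NW T W v0 = {v1}) (h1 : NW T W v1 = {v0, v2}) :
    connW T (W \ {v0, v1}) := by
  classical
  intro x hx y hy
  obtain ⟨p, hpW⟩ := hconn x (hx.1) y (hy.1)
  have hxm : x ∉ ({v0, v1} : Set V) := hx.2
  have hym : y ∉ ({v0, v1} : Set V) := hy.2
  simp only [Set.mem_insert_iff, Set.mem_singleton_iff, not_or] at hxm hym
  have hbW : ∀ z ∈ p.bypass.support, z ∈ W := fun z hz => hpW z (p.support_bypass_subset hz)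
  obtain ⟨hv0, hv1⟩ := avoid2 h0 h1 p.bypass_isPath hbW hxm.1 hxm.2 hym.1 hym.2
  refine ⟨p.bypass, fun z hz => ⟨hbW z hz, ?_⟩⟩
  simp only [Set.mem_insert_iff, Set.mem_singleton_iff, not_or]
  exact ⟨fun h => hv0 (h ▸ hz), fun h => hv1 (h ▸ hz)⟩

lemma connW_diff3 {W : Set V} {v0 v1 v2 v3 : V} (hconn : connW T W)
    (h0 : NW T W v0 = {v1}) (h1 : NW T W v1 = {v0, v2}) (h2 : NW T W v2 = {v1, v3}) :
    connW T (W \ {v0, v1, v2}) := by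
  classical
  intro x hx y hy
  obtain ⟨p, hpW⟩ := hconn x (hx.1) y (hy.1)
  have hxm : x ∉ ({v0, v1, v2} : Set V) := hx.2
  have hym : y ∉ ({v0, v1, v2} : Set V) := hy.2
  simp only [Set.mem_insert_iff, Set.mem_singleton_iff, not_or] at hxm hym
  have hbW : ∀ z ∈ p.bypass.support, z ∈ W := fun z hz => hpW z (p.support_bypass_subset hz)
  obtain ⟨hv0, hv1, hv2⟩ := avoid3 h0 h1 h2 p.bypass_isPath hbW hxm.1 hxm.2.1 hxm.2.2
    hym.1 hym.2.1 hym.2.2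
  refine ⟨p.bypass, fun z hz => ⟨hbW z hz, ?_⟩⟩
  simp only [Set.mem_insert_iff, Set.mem_singleton_iff, not_or]
  exact ⟨fun h => hv0 (h ▸ hz), fun h => hv1 (h ▸ hz), fun h => hv2 (h ▸ hz)⟩

lemma exists_max_path [Fintype V] {W : Set V} (hconn : connW T W)
    (hne : ∃ x ∈ W, ∃ y ∈ W, x ≠ y) :
    ∃ (x y : V) (p : T.Walk x y), p.IsPath ∧ (∀ z ∈ p.support, z ∈ W) ∧ 1 ≤ p.length ∧
      ∀ (x' y' : V) (q : T.Walk x' y'), q.IsPath → (∀ z ∈ q.support, z ∈ W) →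
        q.length ≤ p.length := by
  classical
  set S := {n : ℕ | ∃ (x y : V) (p : T.Walk x y), p.IsPath ∧ (∀ z ∈ p.support, z ∈ W) ∧
    p.length = n} with hSdef
  obtain ⟨x, hx, y, hy, hxy⟩ := hne
  obtain ⟨p0, hp0⟩ := hconn x hx y hy
  have hmem : p0.bypass.length ∈ S :=
    ⟨x, y, p0.bypass, p0.bypass_isPath, fun z hz => hp0 z (p0.support_bypass_subset hz), rfl⟩
  have hbdd : BddAbove S := by
    refine ⟨Fintype.card V, ?_⟩
    rintro n ⟨_, _, p, hp, _, hlen⟩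
    exact hlen ▸ hp.length_lt.le
  have hS : sSup S ∈ S := Nat.sSup_mem ⟨_, hmem⟩ hbdd
  obtain ⟨x', y', p, hp, hpW, hplen⟩ := hS
  have h1 : 1 ≤ p.length := by
    have hle : p0.bypass.length ≤ sSup S := le_csSup hbdd hmem
    have h0 : p0.bypass.length ≠ 0 := fun h => hxy (Walk.eq_of_length_eq_zero (p := p0.bypass) h)
    omega
  refine ⟨x', y', p, hp, hpW, h1, fun a b q hq hqW => ?_⟩
  rw [hplen]
  exact le_csSup hbdd ⟨a, b, q, hq, hqW, rfl⟩

noncomputable def extEquiv {a b : V} {D D' : Set V} (f : D ≃ D') (ha : a ∉ D) (hb : b ∉ D') :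
    (insert a D : Set V) ≃ (insert b D' : Set V) := by
  classical
  refine
  { toFun := fun x => if h : (x : V) = a then ⟨b, Set.mem_insert _ _⟩
      else ⟨f ⟨x, x.2.resolve_left h⟩, Set.mem_insert_of_mem _ (f _).2⟩
    invFun := fun y => if h : (y : V) = b then ⟨a, Set.mem_insert _ _⟩
      else ⟨f.symm ⟨y, y.2.resolve_left h⟩, Set.mem_insert_of_mem _ (f.symm _).2⟩
    left_inv := ?_
    right_inv := ?_ }
  · rintro ⟨x, hx⟩
    by_cases h : x = a
    · subst h
      simp
    · have hx' : x ∈ D := hx.resolve_left h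
      have hfb : ((f ⟨x, hx'⟩ : V)) ≠ b := fun hc => hb (hc ▸ (f ⟨x, hx'⟩).2)
      simp only [h, dif_neg, hfb, not_false_iff]
      apply Subtype.ext
      simp
  · rintro ⟨y, hy⟩
    by_cases h : y = b
    · subst h
      simp
    · have hy' : y ∈ D' := hy.resolve_left h
      have hfa : ((f.symm ⟨y, hy'⟩ : V)) ≠ a := fun hc => ha (hc ▸ (f.symm ⟨y, hy'⟩).2)
      simp only [h, dif_neg, hfa, not_false_iff]
      apply Subtype.ext
      simp

lemma extEquiv_adj {a b : V} {D D' : Set V} (f : D ≃ D') (ha : a ∉ D) (hb : b ∉ D')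
    (hab : T.Adj a b) (hf : ∀ x : D, T.Adj x (f x)) :
    ∀ x : (insert a D : Set V), T.Adj x (extEquiv f ha hb x) := by
  classical
  rintro ⟨x, hx⟩
  by_cases h : x = a
  · subst h
    simp [extEquiv, hab]
  · have hx' : x ∈ D := hx.resolve_left h
    simpa [extEquiv, h] using hf ⟨x, hx'⟩

lemma swap_sides {D D' : Set V} (f : D ≃ D') (hf : ∀ x : D, T.Adj x (f x)) :
    ∀ y : D', T.Adj y (f.symm y) := fun y => by
  have := hf (f.symm y)
  rw [Equiv.apply_symm_apply] at this
  exact this.symm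

lemma relSwap_ext {W W0 : Set V} {v0 v1 : V} {D D' : Set V}
    (hW0 : W0 ⊆ W) (hv0W : v0 ∈ W) (hv1W : v1 ∈ W) (h0 : v0 ∉ W0) (h1 : v1 ∉ W0)
    (hne : v0 ≠ v1) (hadj : T.Adj v0 v1)
    (hDsub : D ⊆ W0) (hD'sub : D' ⊆ W0)
    (hdom : ∀ v ∈ W0, v ∉ D → ∃ u ∈ D, T.Adj u v)
    (hdom' : ∀ v ∈ W0, v ∉ D' → ∃ u ∈ D', T.Adj u v)
    (hdisj : Disjoint D D') (f : D ≃ D') (hf : ∀ x : D, T.Adj x (f x))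
    (hextra : ∀ v ∈ W, v ∉ W0 → v ≠ v0 → v ≠ v1 → T.Adj v1 v ∧ ∃ u ∈ D', T.Adj u v) :
    relSwap T W := by
  classical
  have hv1D : v1 ∉ D := fun h => h1 (hDsub h)
  have hv0D' : v0 ∉ D' := fun h => h0 (hD'sub h)
  refine ⟨insert v1 D, insert v0 D', Set.insert_subset hv1W (hDsub.trans hW0),
    Set.insert_subset hv0W (hD'sub.trans hW0), ?_, ?_, ?_,
    ⟨extEquiv f hv1D hv0D', extEquiv_adj f hv1D hv0D' hadj.symm hf⟩⟩
  · intro v hv hvD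
    have hvne1 : v ≠ v1 := fun h => hvD (h ▸ Set.mem_insert _ _)
    have hvD2 : v ∉ D := fun h => hvD (Set.mem_insert_of_mem _ h)
    by_cases h' : v ∈ W0
    · obtain ⟨u, hu, hadj'⟩ := hdom v h' hvD2
      exact ⟨u, Set.mem_insert_of_mem _ hu, hadj'⟩
    · by_cases hv0 : v = v0
      · exact ⟨v1, Set.mem_insert _ _, by rw [hv0]; exact hadj.symm⟩
      · exact ⟨v1, Set.mem_insert _ _, (hextra v hv h' hv0 hvne1).1⟩
  · intro v hv hvD'
    have hvne0 : v ≠ v0 := fun h => hvD' (h ▸ Set.mem_insert _ _)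
    have hvD'2 : v ∉ D' := fun h => hvD' (Set.mem_insert_of_mem _ h)
    by_cases h' : v ∈ W0
    · obtain ⟨u, hu, hadj'⟩ := hdom' v h' hvD'2
      exact ⟨u, Set.mem_insert_of_mem _ hu, hadj'⟩
    · by_cases hv1 : v = v1
      · exact ⟨v0, Set.mem_insert _ _, by rw [hv1]; exact hadj⟩
      · obtain ⟨_, u, hu, ha⟩ := hextra v hv h' hvne0 hv1
        exact ⟨u, Set.mem_insert_of_mem _ hu, ha⟩
  · rw [Set.disjoint_left]
    rintro x hx hx'
    rcases hx with rfl | hx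
    · rcases hx' with h | h
      · exact hne h.symm
      · exact h1 (hD'sub h)
    · rcases hx' with rfl | h
      · exact h0 (hDsub hx)
      · exact (Set.disjoint_left.mp hdisj hx) h



lemma NW_diff {W A : Set V} {x : V} : NW T (W \ A) x = NW T W x \ A := by
  ext u
  simp only [mem_NW, Set.mem_diff]
  tauto

lemma main [Fintype V] (hT : T.IsAcyclic) :
    ∀ (n : ℕ) (W : Set V), W.ncard ≤ n → 2 ≤ W.ncard → connW T W → weakW T W →
      relSwap T W := by
  classical
  intro n
  induction n with
  | zero => intro W hWn h2 _ _; omega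
  | succ n ih =>
    intro W hWn h2 hconn hweak
    have hfin : W.Finite := W.toFinite
    have hnetwo : ∃ x ∈ W, ∃ y ∈ W, x ≠ y := (Set.one_lt_ncard hfin).mp (by omega)
    obtain ⟨v0, y0, p, hp, hpW, hlen1, hmax⟩ := exists_max_path hconn hnetwo
    cases p with
    | nil => simp at hlen1
    | @cons _ v1 _ h01 q =>
      have hv0W : v0 ∈ W := hpW v0 (by simp)
      have hv1W : v1 ∈ W := hpW v1 (by simp)
      have hq : q.IsPath := ((Walk.cons_isPath_iff _ _).mp hp).1
      have hv0nq : v0 ∉ q.support := ((Walk.cons_isPath_iff _ _).mp hp).2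
      have hqW : ∀ z ∈ q.support, z ∈ W := fun z hz => hpW z (by simp [hz])
      -- Claim 1 : `v0` is a leaf of `W`
      have hN0 : NW T W v0 = {v1} := by
        apply Set.eq_singleton_iff_unique_mem.mpr
        refine ⟨⟨hv1W, h01⟩, ?_⟩
        rintro w ⟨hwW, hw⟩
        by_cases hws : w ∈ (Walk.cons h01 q).support
        · exact adj_mem_support_eq hT hp hw hws
        · exfalso
          have hnp : (Walk.cons hw.symm (Walk.cons h01 q)).IsPath := by
            rw [Walk.cons_isPath_iff]; exact ⟨hp, hws⟩
          have hsup : ∀ z ∈ (Walk.cons hw.symm (Walk.cons h01 q)).support, z ∈ W := by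
            intro z hz
            rw [Walk.support_cons, List.mem_cons] at hz
            rcases hz with rfl | hz
            · exact hwW
            · exact hpW z hz
          have := hmax _ _ _ hnp hsup
          simp only [Walk.length_cons] at this
          omega
      cases q with
      | nil =>
        -- base case : W = {v0, y0}
        have hN1 : NW T W y0 = {v0} := by
          apply Set.eq_singleton_iff_unique_mem.mpr
          refine ⟨⟨hv0W, h01.symm⟩, ?_⟩
          rintro w ⟨hwW, hw⟩
          by_contra hwv0
          have hws : w ∉ (Walk.cons h01 (Walk.nil : T.Walk y0 y0)).support := by
            intro hmem
            simp only [Walk.support_cons, Walk.support_nil, List.mem_cons,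
              List.not_mem_nil, or_false] at hmem
            rcases hmem with rfl | rfl
            · exact hwv0 rfl
            · exact T.irrefl hw
          have hnp : (Walk.cons hw.symm ((Walk.cons h01 Walk.nil).reverse)).IsPath := by
            rw [Walk.cons_isPath_iff]
            refine ⟨hp.reverse, ?_⟩
            rw [Walk.support_reverse, List.mem_reverse]
            exact hws
          have hsup : ∀ z ∈ (Walk.cons hw.symm
              ((Walk.cons h01 Walk.nil).reverse)).support, z ∈ W := by
            intro z hz
            rw [Walk.support_cons, List.mem_cons] at hz
            rcases hz with rfl | hz
            · exact hwW
            · rw [Walk.support_reverse, List.mem_reverse] at hz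
              exact hpW z hz
          have := hmax _ _ _ hnp hsup
          simp only [Walk.length_cons, Walk.length_reverse, Walk.length_nil] at this
          omega
        have hWsub : ∀ z ∈ W, z = v0 ∨ z = y0 := by
          intro z hz
          by_contra hzc
          push_neg at hzc
          obtain ⟨hz0, hz1⟩ := hzc
          obtain ⟨r0, hr0⟩ := hconn z hz v0 hv0W
          have hrW : ∀ w ∈ r0.bypass.support, w ∈ W := fun w hw =>
            hr0 w (r0.support_bypass_subset hw)
          have hrp : r0.bypass.IsPath := r0.bypass_isPath
          have hrev : r0.bypass.reverse.IsPath := hrp.reverse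
          cases hrr : r0.bypass.reverse with
          | nil =>
            have hlen0 : r0.bypass.length = 0 := by
              have := congrArg Walk.length hrr
              simpa using this
            exact hz0 (Walk.eq_of_length_eq_zero (p := r0.bypass) hlen0)
          | @cons _ m _ hm q' =>
            have hmW : m ∈ W := by
              have hms : m ∈ r0.bypass.reverse.support := by rw [hrr]; simp
              rw [Walk.support_reverse, List.mem_reverse] at hms
              exact hrW m hms
            have hmv1 : m = y0 := by
              have hmm : m ∈ NW T W v0 := ⟨hmW, hm⟩
              rwa [hN0, Set.mem_singleton_iff] at hmm
            have hq'p : q'.IsPath ∧ v0 ∉ q'.support := by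
              have h' := hrr ▸ hrev
              exact (Walk.cons_isPath_iff _ _).mp h'
            cases hq2 : q' with
            | nil =>
              have hlen0 : q'.length = 0 := by
                have := congrArg Walk.length hq2
                simpa using this
              exact hz1 ((Walk.eq_of_length_eq_zero (p := q') hlen0).symm.trans hmv1)
            | @cons _ m2 _ hm2 q'' =>
              have hm2W : m2 ∈ W := by
                have hms : m2 ∈ q'.support := by rw [hq2]; simp
                have hms2 : m2 ∈ r0.bypass.reverse.support := by
                  rw [hrr, Walk.support_cons]
                  exact List.mem_cons_of_mem _ hms
                rw [Walk.support_reverse, List.mem_reverse] at hms2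
                exact hrW m2 hms2
              have hm2v0 : m2 = v0 := by
                have hmm : m2 ∈ NW T W y0 := ⟨hm2W, hmv1 ▸ hm2⟩
                rwa [hN1, Set.mem_singleton_iff] at hmm
              have : v0 ∈ q'.support := by
                rw [hq2, Walk.support_cons]
                exact List.mem_cons_of_mem _ (hm2v0 ▸ q''.start_mem_support)
              exact hq'p.2 this
        refine ⟨{v0}, {y0}, by simpa using hv0W, by simpa using hv1W, ?_, ?_, ?_, ?_⟩
        · intro v hv hvD
          rcases hWsub v hv with rfl | rfl
          · exact absurd rfl hvD
          · exact ⟨v0, rfl, h01⟩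
        · intro v hv hvD
          rcases hWsub v hv with rfl | rfl
          · exact ⟨y0, rfl, h01.symm⟩
          · exact absurd rfl hvD
        · simpa using h01.ne
        · refine ⟨⟨fun _ => ⟨y0, rfl⟩, fun _ => ⟨v0, rfl⟩, ?_, ?_⟩, ?_⟩
          · rintro ⟨x, hx⟩
            exact Subtype.ext ((Set.mem_singleton_iff.mp hx).symm)
          · rintro ⟨x, hx⟩
            exact Subtype.ext ((Set.mem_singleton_iff.mp hx).symm)
          · rintro ⟨x, hx⟩
            have : x = v0 := hx
            simpa [this] using h01
      | @cons _ v2 _ h12 r =>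
        -- now the path is v0, v1, v2, ...
        have hv2W : v2 ∈ W := hqW v2 (by simp)
        have hv1nr : v1 ∉ r.support := ((Walk.cons_isPath_iff _ _).mp hq).2
        have h02 : v0 ≠ v2 := fun h => hv0nq (by rw [h]; simp)
        have h12ne : v1 ≠ v2 := h12.ne
        have h01ne : v0 ≠ v1 := h01.ne
        -- Claim 2 : neighbours of v1 in W are exactly v0 and v2
        have hN1 : NW T W v1 = {v0, v2} := by
          apply Set.Subset.antisymm
          · rintro w ⟨hwW, hw⟩
            simp only [Set.mem_insert_iff, Set.mem_singleton_iff]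
            by_contra hwc
            push_neg at hwc
            obtain ⟨hw0, hw2⟩ := hwc
            have hwq : w ∉ (Walk.cons h12 r).support :=
              fun hws => hw2 (adj_mem_support_eq hT hq hw hws)
            have hwp : w ∉ (Walk.cons h01 (Walk.cons h12 r)).support := by
              rw [Walk.support_cons, List.mem_cons]
              rintro (h | h)
              · exact hw0 h
              · exact hwq h
            have hwleaf : NW T W w = {v1} := by
              apply Set.eq_singleton_iff_unique_mem.mpr
              refine ⟨⟨hv1W, hw.symm⟩, ?_⟩
              rintro x ⟨hxW, hx⟩
              by_contra hxv1
              have hxp : x ∉ (Walk.cons h01 (Walk.cons h12 r)).support := by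
                rw [Walk.support_cons, List.mem_cons]
                rintro (h | hxq)
                · have hmm : w ∈ NW T W v0 := ⟨hwW, (h ▸ hx).symm⟩
                  rw [hN0, Set.mem_singleton_iff] at hmm
                  exact T.irrefl (hmm ▸ hw)
                · have hP1 : (Walk.cons hw (Walk.cons hx Walk.nil) : T.Walk v1 x).IsPath := by
                    rw [Walk.cons_isPath_iff]
                    constructor
                    · rw [Walk.cons_isPath_iff]
                      refine ⟨Walk.IsPath.nil, ?_⟩
                      simp only [Walk.support_nil, List.mem_singleton]
                      exact fun h' => T.irrefl (h' ▸ hx)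
                    · simp only [Walk.support_cons, Walk.support_nil, List.mem_cons,
                        List.not_mem_nil, or_false]
                      rintro (h' | h')
                      · exact T.irrefl (h' ▸ hw)
                      · exact hxv1 h'.symm
                  have hP2 : ((Walk.cons h12 r).takeUntil x hxq).IsPath := hq.takeUntil hxq
                  have hEq := isAcyclic_iff_path_unique.mp hT ⟨_, hP1⟩ ⟨_, hP2⟩
                  rw [Subtype.mk.injEq] at hEq
                  have hwmem : w ∈ ((Walk.cons h12 r).takeUntil x hxq).support := by
                    rw [← hEq]; simp
                  exact hwq (Walk.support_takeUntil_subset _ hxq hwmem)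
              have hxw : x ≠ w := fun h => T.irrefl (h ▸ hx)
              have hin : (Walk.cons hw.symm (Walk.cons h12 r)).IsPath := by
                rw [Walk.cons_isPath_iff]
                exact ⟨hq, hwq⟩
              have hout : (Walk.cons hx.symm (Walk.cons hw.symm (Walk.cons h12 r))).IsPath := by
                rw [Walk.cons_isPath_iff]
                refine ⟨hin, ?_⟩
                rw [Walk.support_cons, List.mem_cons]
                rintro (h | h)
                · exact hxw h
                · exact hxp (by rw [Walk.support_cons]; exact List.mem_cons_of_mem _ h)
              have hsup : ∀ z ∈ (Walk.cons hx.symm (Walk.cons hw.symm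
                  (Walk.cons h12 r))).support, z ∈ W := by
                intro z hz
                rw [Walk.support_cons, List.mem_cons] at hz
                rcases hz with rfl | hz
                · exact hxW
                rw [Walk.support_cons, List.mem_cons] at hz
                rcases hz with rfl | hz
                · exact hwW
                · exact hpW z (by rw [Walk.support_cons]; exact List.mem_cons_of_mem _ hz)
              have := hmax _ _ _ hout hsup
              simp only [Walk.length_cons] at this
              omega
            have hleaf0 : leafW T W v0 := ⟨hv0W, v1, hN0⟩
            have hleafw : leafW T W w := ⟨hwW, v1, hwleaf⟩
            exact hw0 (hweak v1 hv1W w v0 hleafw hleaf0 hw h01.symm)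
          · rintro w hw
            rcases hw with h | h
            · rw [h]; exact ⟨hv0W, h01.symm⟩
            · rw [Set.mem_singleton_iff] at h
              rw [h]
              exact ⟨hv2W, h12⟩
        -- there is a vertex outside {v0, v1, v2}
        have hzext : ∃ z ∈ W, z ∉ ({v0, v1, v2} : Set V) := by
          by_contra hcon
          push_neg at hcon
          have hN2 : NW T W v2 = {v1} := by
            apply Set.eq_singleton_iff_unique_mem.mpr
            refine ⟨⟨hv1W, h12.symm⟩, ?_⟩
            rintro x ⟨hxW, hx⟩
            have hxm := hcon x hxW
            simp only [Set.mem_insert_iff, Set.mem_singleton_iff] at hxm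
            rcases hxm with h | h | h
            · exfalso
              have hmm : v2 ∈ NW T W v0 := ⟨hv2W, (h ▸ hx).symm⟩
              rw [hN0, Set.mem_singleton_iff] at hmm
              exact h12ne hmm.symm
            · exact h
            · exact absurd (h ▸ hx) (T.irrefl)
          have hleaf2 : leafW T W v2 := ⟨hv2W, v1, hN2⟩
          have hleaf0 : leafW T W v0 := ⟨hv0W, v1, hN0⟩
          exact h02 (hweak v1 hv1W v0 v2 hleaf0 hleaf2 h01.symm h12)
        obtain ⟨z, hzW, hznot⟩ := hzext
        simp only [Set.mem_insert_iff, Set.mem_singleton_iff, not_or] at hznot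
        obtain ⟨hzv0, hzv1, hzv2⟩ := hznot
        set W' := W \ {v0, v1} with hW'def
        have hW'sub : W' ⊆ W := Set.diff_subset
        have hv2W' : v2 ∈ W' := by
          refine ⟨hv2W, ?_⟩
          simp only [Set.mem_insert_iff, Set.mem_singleton_iff, not_or]
          exact ⟨fun h => h02 h.symm, fun h => h12ne h.symm⟩
        have hzW' : z ∈ W' := by
          refine ⟨hzW, ?_⟩
          simp only [Set.mem_insert_iff, Set.mem_singleton_iff, not_or]
          exact ⟨hzv0, hzv1⟩
        have hcard2' : 2 ≤ W'.ncard := by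
          have := (Set.one_lt_ncard W'.toFinite).mpr ⟨v2, hv2W', z, hzW', fun h => hzv2 h.symm⟩
          omega
        have hcardlt' : W'.ncard ≤ n := by
          have hss : W' ⊂ W := by
            rw [Set.ssubset_iff_subset_ne]
            refine ⟨Set.diff_subset, fun h => ?_⟩
            have hmm : v0 ∈ W' := by rw [h]; exact hv0W
            exact hmm.2 (by simp)
          have := Set.ncard_lt_ncard hss hfin
          omega
        have hconn' : connW T W' := connW_diff2 hconn hN0 hN1
        have hv0notW' : v0 ∉ W' := fun h => h.2 (by simp)
        have hv1notW' : v1 ∉ W' := fun h => h.2 (by simp)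
        by_cases hwk : weakW T W'
        · obtain ⟨D, D', hDs, hD's, hdom, hdom', hdisj, f, hf⟩ :=
            ih W' hcardlt' hcard2' hconn' hwk
          refine relSwap_ext hW'sub hv0W hv1W hv0notW' hv1notW' h01ne h01 hDs hD's hdom hdom'
            hdisj f hf ?_
          intro v hv hv' h0' h1'
          exact absurd (⟨hv, by
            simp only [Set.mem_insert_iff, Set.mem_singleton_iff, not_or]
            exact ⟨h0', h1'⟩⟩ : v ∈ W') hv'
        · rw [weakW] at hwk
          push_neg at hwk
          obtain ⟨s, hsW', l₁, l₂, hl₁, hl₂, hsl₁, hsl₂, hne12⟩ := hwk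
          have hNW' : ∀ x ∈ W', x ≠ v2 → NW T W' x = NW T W x := by
            intro x hx hxv2
            rw [hW'def, NW_diff]
            ext u
            constructor
            · exact fun hu => hu.1
            · intro hu
              refine ⟨hu, ?_⟩
              simp only [Set.mem_insert_iff, Set.mem_singleton_iff, not_or]
              constructor
              · intro he
                have hmm : x ∈ NW T W v0 := ⟨hx.1, (he ▸ hu.2).symm⟩
                rw [hN0, Set.mem_singleton_iff] at hmm
                exact hx.2 (by rw [hmm]; simp)
              · intro he
                have hmm : x ∈ NW T W v1 := ⟨hx.1, (he ▸ hu.2).symm⟩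
                rw [hN1] at hmm
                rcases hmm with h | h
                · exact hx.2 (by rw [h]; simp)
                · rw [Set.mem_singleton_iff] at h
                  exact hxv2 h
          have hleaf' : ∀ l, leafW T W' l → l ≠ v2 → leafW T W l := by
            rintro l ⟨hlW', u, hu⟩ hlv2
            exact ⟨hlW'.1, u, by rw [← hNW' l hlW' hlv2]; exact hu⟩
          have hbcase : ∀ s' l', s' ∈ W' → leafW T W' v2 → leafW T W' l' →
              T.Adj s' v2 → T.Adj s' l' → l' ≠ v2 → relSwap T W := by
            intro s' l' hs'W' hlv2 hll' hsv2 hsl' hl'v2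
            obtain ⟨_, t, ht⟩ := hlv2
            have hs'mem : s' ∈ NW T W' v2 := ⟨hs'W', hsv2.symm⟩
            rw [ht, Set.mem_singleton_iff] at hs'mem
            have hNv2' : NW T W' v2 = {s'} := by rw [ht, hs'mem]
            have hs'W : s' ∈ W := hW'sub hs'W'
            have hN2 : NW T W v2 = {v1, s'} := by
              ext u
              constructor
              · intro hu
                simp only [Set.mem_insert_iff, Set.mem_singleton_iff]
                by_cases huv1 : u = v1
                · exact Or.inl huv1
                · right
                  have huv0 : u ≠ v0 := by
                    intro he
                    have hmm : v2 ∈ NW T W v0 := ⟨hv2W, (he ▸ hu.2).symm⟩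
                    rw [hN0, Set.mem_singleton_iff] at hmm
                    exact h12ne hmm.symm
                  have hmm : u ∈ NW T W' v2 := by
                    rw [hW'def, NW_diff]
                    refine ⟨hu, ?_⟩
                    simp only [Set.mem_insert_iff, Set.mem_singleton_iff, not_or]
                    exact ⟨huv0, huv1⟩
                  rwa [hNv2', Set.mem_singleton_iff] at hmm
              · intro hu
                rcases hu with h | h
                · rw [h]; exact ⟨hv1W, h12.symm⟩
                · rw [Set.mem_singleton_iff] at h
                  rw [h]
                  exact ⟨hs'W, hsv2.symm⟩
            have hl'W : l' ∈ W := hW'sub hll'.1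
            have hNl' : NW T W l' = {s'} := by
              obtain ⟨hl'W', t', ht'⟩ := hll'
              have hmm : s' ∈ NW T W' l' := ⟨hs'W', hsl'.symm⟩
              rw [ht', Set.mem_singleton_iff] at hmm
              rw [← hNW' l' hl'W' hl'v2, ht', hmm]
            have hs'v0 : s' ≠ v0 := fun h => hs'W'.2 (by rw [h]; simp)
            have hs'v1 : s' ≠ v1 := fun h => hs'W'.2 (by rw [h]; simp)
            have hs'v2 : s' ≠ v2 := fun h => T.irrefl (h ▸ hsv2)
            have hl'v0 : l' ≠ v0 := fun h => hll'.1.2 (by rw [h]; simp)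
            have hl'v1 : l' ≠ v1 := fun h => hll'.1.2 (by rw [h]; simp)
            have hl's' : l' ≠ s' := fun h => T.irrefl (h ▸ hsl')
            set W'' := W \ {v0, v1, v2} with hW''def
            have hW''sub : W'' ⊆ W := Set.diff_subset
            have hmemW'' : ∀ x, x ∈ W → x ≠ v0 → x ≠ v1 → x ≠ v2 → x ∈ W'' := by
              intro x hx h0 h1 h2'
              refine ⟨hx, ?_⟩
              simp only [Set.mem_insert_iff, Set.mem_singleton_iff, not_or]
              exact ⟨h0, h1, h2'⟩
            have hs'W'' : s' ∈ W'' := hmemW'' s' hs'W hs'v0 hs'v1 hs'v2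
            have hl'W'' : l' ∈ W'' := hmemW'' l' hl'W hl'v0 hl'v1 hl'v2
            have hconn'' : connW T W'' := connW_diff3 hconn hN0 hN1 hN2
            have hcard2'' : 2 ≤ W''.ncard := by
              have := (Set.one_lt_ncard W''.toFinite).mpr
                ⟨s', hs'W'', l', hl'W'', fun h => hl's' h.symm⟩
              omega
            have hcardlt'' : W''.ncard ≤ n := by
              have hss : W'' ⊂ W := by
                rw [Set.ssubset_iff_subset_ne]
                refine ⟨Set.diff_subset, fun h => ?_⟩
                have hmm : v0 ∈ W'' := by rw [h]; exact hv0W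
                exact hmm.2 (by simp)
              have := Set.ncard_lt_ncard hss hfin
              omega
            have hNW'' : ∀ x ∈ W'', x ≠ s' → NW T W'' x = NW T W x := by
              intro x hx hxs'
              rw [hW''def, NW_diff]
              ext u
              constructor
              · exact fun hu => hu.1
              · intro hu
                refine ⟨hu, ?_⟩
                simp only [Set.mem_insert_iff, Set.mem_singleton_iff, not_or]
                refine ⟨?_, ?_, ?_⟩
                · intro he
                  have hmm : x ∈ NW T W v0 := ⟨hx.1, (he ▸ hu.2).symm⟩
                  rw [hN0, Set.mem_singleton_iff] at hmm
                  exact hx.2 (by rw [hmm]; simp)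
                · intro he
                  have hmm : x ∈ NW T W v1 := ⟨hx.1, (he ▸ hu.2).symm⟩
                  rw [hN1] at hmm
                  rcases hmm with h | h
                  · exact hx.2 (by rw [h]; simp)
                  · rw [Set.mem_singleton_iff] at h
                    exact hx.2 (by rw [h]; simp)
                · intro he
                  have hmm : x ∈ NW T W v2 := ⟨hx.1, (he ▸ hu.2).symm⟩
                  rw [hN2] at hmm
                  rcases hmm with h | h
                  · exact hx.2 (by rw [h]; simp)
                  · rw [Set.mem_singleton_iff] at h
                    exact hxs' h
            have hleaf'' : ∀ l, leafW T W'' l → l ≠ s' → leafW T W l := by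
              rintro l ⟨hlW'', u, hu⟩ hls'
              exact ⟨hlW''.1, u, by rw [← hNW'' l hlW'' hls']; exact hu⟩
            have hwk'' : weakW T W'' := by
              intro t' htW'' m₁ m₂ hm₁ hm₂ htm₁ htm₂
              rcases eq_or_ne m₁ s' with hc1 | hc1
              · rcases eq_or_ne m₂ s' with hc2 | hc2
                · rw [hc1, hc2]
                · exfalso
                  obtain ⟨_, t0, ht0⟩ := hc1 ▸ hm₁
                  have hl'mem : l' ∈ NW T W'' s' := ⟨hl'W'', hsl'⟩
                  have htmem : t' ∈ NW T W'' s' := ⟨htW'', (hc1 ▸ htm₁).symm⟩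
                  rw [ht0, Set.mem_singleton_iff] at hl'mem htmem
                  have htl' : t' = l' := htmem.trans hl'mem.symm
                  have hmm : m₂ ∈ NW T W l' := ⟨hW''sub hm₂.1, htl' ▸ htm₂⟩
                  rw [hNl', Set.mem_singleton_iff] at hmm
                  exact hc2 hmm
              · rcases eq_or_ne m₂ s' with hc2 | hc2
                · exfalso
                  obtain ⟨_, t0, ht0⟩ := hc2 ▸ hm₂
                  have hl'mem : l' ∈ NW T W'' s' := ⟨hl'W'', hsl'⟩
                  have htmem : t' ∈ NW T W'' s' := ⟨htW'', (hc2 ▸ htm₂).symm⟩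
                  rw [ht0, Set.mem_singleton_iff] at hl'mem htmem
                  have htl' : t' = l' := htmem.trans hl'mem.symm
                  have hmm : m₁ ∈ NW T W l' := ⟨hW''sub hm₁.1, htl' ▸ htm₁⟩
                  rw [hNl', Set.mem_singleton_iff] at hmm
                  exact hc1 hmm
                · exact hweak t' (hW''sub htW'') m₁ m₂ (hleaf'' m₁ hm₁ hc1)
                    (hleaf'' m₂ hm₂ hc2) htm₁ htm₂
            obtain ⟨D, D', hDs, hD's, hdom, hdom', hdisj, f, hf⟩ :=
              ih W'' hcardlt'' hcard2'' hconn'' hwk''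
            have hdoml : ∀ (E : Set V), E ⊆ W'' → (∀ v ∈ W'', v ∉ E → ∃ u ∈ E, T.Adj u v) →
                l' ∈ E ∨ s' ∈ E := by
              intro E hEs hEdom
              by_cases h : l' ∈ E
              · exact Or.inl h
              · obtain ⟨u, huE, hadj⟩ := hEdom l' hl'W'' h
                right
                have hmm : u ∈ NW T W l' := ⟨hW''sub (hEs huE), hadj.symm⟩
                rw [hNl', Set.mem_singleton_iff] at hmm
                rw [← hmm]
                exact huE
            have hs'DD' : s' ∈ D ∨ s' ∈ D' := by
              rcases hdoml D hDs hdom with h | h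
              · rcases hdoml D' hD's hdom' with h' | h'
                · exact absurd h' (Set.disjoint_left.mp hdisj h)
                · exact Or.inr h'
              · exact Or.inl h
            have hv0notW'' : v0 ∉ W'' := fun h => h.2 (by simp)
            have hv1notW'' : v1 ∉ W'' := fun h => h.2 (by simp)
            have hextra : ∀ {E : Set V}, s' ∈ E →
                ∀ v ∈ W, v ∉ W'' → v ≠ v0 → v ≠ v1 → T.Adj v1 v ∧ ∃ u ∈ E, T.Adj u v := by
              intro E hs'E v hv hv'' h0' h1'
              have hv2' : v = v2 := by
                by_contra hc
                exact hv'' (hmemW'' v hv h0' h1' hc)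
              rw [hv2']
              exact ⟨h12, s', hs'E, hsv2⟩
            rcases hs'DD' with hs'D | hs'D'
            · exact relSwap_ext hW''sub hv0W hv1W hv0notW'' hv1notW'' h01ne h01 hD's hDs
                hdom' hdom hdisj.symm f.symm (swap_sides f hf) (hextra hs'D)
            · exact relSwap_ext hW''sub hv0W hv1W hv0notW'' hv1notW'' h01ne h01 hDs hD's
                hdom hdom' hdisj f hf (hextra hs'D')
          rcases eq_or_ne l₁ v2 with h1c | h1c
          · exact hbcase s l₂ hsW' (h1c ▸ hl₁) hl₂ (h1c ▸ hsl₁) hsl₂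
              (fun h => hne12 (h1c.trans h.symm))
          · rcases eq_or_ne l₂ v2 with h2c | h2c
            · exact hbcase s l₁ hsW' (h2c ▸ hl₂) hl₁ (h2c ▸ hsl₂) hsl₁ h1c
            · exact absurd (hweak s (hW'sub hsW') l₁ l₂ (hleaf' l₁ hl₁ h1c)
                (hleaf' l₂ hl₂ h2c) hsl₁ hsl₂) hne12

end SwapAux

theorem stmt_3 {V : Type*} [Fintype V] (T : SimpleGraph V) (hT : T.IsTree)
    (hnt : 2 ≤ Fintype.card V) :
    (∃ D D' : Set V, IsSwapPair T D D') ↔ IsWeakGraph T := by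
  classical
  constructor
  · rintro ⟨D, D', hD, hD', hdisj, f, hf⟩ v ⟨l₁, l₂, hne, ha1, ha2, hl1, hl2⟩
    have hset : ∀ l, IsLeaf T l → T.Adj v l → T.neighborSet l = {v} := by
      intro l hl ha
      obtain ⟨a, haeq⟩ := Set.ncard_eq_one.mp hl
      have hv : v ∈ T.neighborSet l := ha.symm
      rw [haeq, Set.mem_singleton_iff] at hv
      rw [haeq, hv]
    have hset1 := hset l₁ hl1 ha1
    have hset2 := hset l₂ hl2 ha2
    have hdomcase : ∀ (E : Set V), IsDomSet T E → ∀ l, T.neighborSet l = {v} →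
        l ∈ E ∨ v ∈ E := by
      intro E hE l hl
      by_cases h : l ∈ E
      · exact Or.inl h
      · obtain ⟨u, huE, hu⟩ := hE l h
        right
        have hmem : u ∈ T.neighborSet l := hu.symm
        rw [hl, Set.mem_singleton_iff] at hmem
        rwa [← hmem]
    by_cases hvD : v ∈ D
    · have hvD' : v ∉ D' := Set.disjoint_left.mp hdisj hvD
      have h1 : l₁ ∈ D' := (hdomcase D' hD' l₁ hset1).resolve_right hvD'
      have h2 : l₂ ∈ D' := (hdomcase D' hD' l₂ hset2).resolve_right hvD'
      have e1 : ((f.symm ⟨l₁, h1⟩ : D) : V) = v := by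
        have hadj := hf (f.symm ⟨l₁, h1⟩)
        rw [Equiv.apply_symm_apply] at hadj
        have hmem : ((f.symm ⟨l₁, h1⟩ : D) : V) ∈ T.neighborSet l₁ := hadj.symm
        rwa [hset1, Set.mem_singleton_iff] at hmem
      have e2 : ((f.symm ⟨l₂, h2⟩ : D) : V) = v := by
        have hadj := hf (f.symm ⟨l₂, h2⟩)
        rw [Equiv.apply_symm_apply] at hadj
        have hmem : ((f.symm ⟨l₂, h2⟩ : D) : V) ∈ T.neighborSet l₂ := hadj.symm
        rwa [hset2, Set.mem_singleton_iff] at hmem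
      have heq : f.symm ⟨l₁, h1⟩ = f.symm ⟨l₂, h2⟩ := Subtype.ext (e1.trans e2.symm)
      have heq2 := congrArg f heq
      rw [Equiv.apply_symm_apply, Equiv.apply_symm_apply] at heq2
      exact hne (congrArg Subtype.val heq2)
    · have h1 : l₁ ∈ D := (hdomcase D hD l₁ hset1).resolve_right hvD
      have h2 : l₂ ∈ D := (hdomcase D hD l₂ hset2).resolve_right hvD
      by_cases hvD' : v ∈ D'
      · have e1 : ((f ⟨l₁, h1⟩ : D') : V) = v := by
          have hmem : ((f ⟨l₁, h1⟩ : D') : V) ∈ T.neighborSet l₁ := hf ⟨l₁, h1⟩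
          rwa [hset1, Set.mem_singleton_iff] at hmem
        have e2 : ((f ⟨l₂, h2⟩ : D') : V) = v := by
          have hmem : ((f ⟨l₂, h2⟩ : D') : V) ∈ T.neighborSet l₂ := hf ⟨l₂, h2⟩
          rwa [hset2, Set.mem_singleton_iff] at hmem
        have heq : (⟨l₁, h1⟩ : D) = ⟨l₂, h2⟩ := f.injective (Subtype.ext (e1.trans e2.symm))
        exact hne (congrArg Subtype.val heq)
      · have h1' : l₁ ∈ D' := (hdomcase D' hD' l₁ hset1).resolve_right hvD'
        exact (Set.disjoint_left.mp hdisj h1) h1'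
  · intro hweakG
    have hacyc : T.IsAcyclic := hT.2
    have hconn : SwapAux.connW T (Set.univ) := by
      intro x _ y _
      obtain ⟨w⟩ := hT.1.preconnected x y
      exact ⟨w, fun z _ => trivial⟩
    have hweak : SwapAux.weakW T (Set.univ) := by
      intro s _ l₁ l₂ hl₁ hl₂ ha₁ ha₂
      by_contra hne
      have hle : ∀ l, SwapAux.leafW T Set.univ l → IsLeaf T l := by
        rintro l ⟨_, u, hu⟩
        have hns : T.neighborSet l = {u} := by
          rw [← hu]
          ext z
          simp only [mem_neighborSet, SwapAux.mem_NW, Set.mem_univ, true_and]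
        show (T.neighborSet l).ncard = 1
        rw [hns, Set.ncard_singleton]
      exact hweakG s ⟨l₁, l₂, hne, ha₁, ha₂, hle l₁ hl₁, hle l₂ hl₂⟩
    have h2 : 2 ≤ (Set.univ : Set V).ncard := by
      rw [Set.ncard_univ, Nat.card_eq_fintype_card]
      exact hnt
    obtain ⟨D, D', hDs, hD's, hdom, hdom', hdisj, f, hf⟩ :=
      SwapAux.main hacyc (Set.univ : Set V).ncard Set.univ le_rfl h2 hconn hweak
    exact ⟨D, D', (fun v hv => hdom v trivial hv), (fun v hv => hdom' v trivial hv),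
      hdisj, f, hf⟩
end

section
/- If a non-trivial weak tree T admits a minimum-weight simple star partitioning, then it admits one in which every part is a K_1 or a K_2. -/
open SimpleGraph

variable {V : Type*}

lemma not_mem_support_of_dist_lt {T : SimpleGraph V} {r u v : V}
    (p : T.Walk r u) (hlen : p.length ≤ T.dist r u) (h : T.dist r u < T.dist r v) :
    v ∉ p.support := by
  classical
  intro hv
  have h1 : T.dist r v ≤ (p.takeUntil v hv).length := SimpleGraph.dist_le _
  have h2 := SimpleGraph.Walk.length_takeUntil_le p hv
  omega

lemma concat_path {T : SimpleGraph V} {r u v : V} {p : T.Walk r u}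
    (hp : p.IsPath) (h : T.Adj u v) (hv : v ∉ p.support) : (p.concat h).IsPath := by
  rw [← Walk.isPath_reverse_iff, Walk.reverse_concat]
  exact hp.reverse.cons (by simpa [Walk.support_reverse] using hv)

lemma parent_unique {T : SimpleGraph V} (hT : T.IsTree) (r : V) {v u₁ u₂ : V}
    (h₁ : T.Adj u₁ v) (h₂ : T.Adj u₂ v)
    (d₁ : T.dist r u₁ < T.dist r v) (d₂ : T.dist r u₂ < T.dist r v) : u₁ = u₂ := by
  obtain ⟨p₁, hp₁, hl₁⟩ := hT.isConnected.exists_path_of_dist r u₁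
  obtain ⟨p₂, hp₂, hl₂⟩ := hT.isConnected.exists_path_of_dist r u₂
  have hv₁ : v ∉ p₁.support := not_mem_support_of_dist_lt p₁ hl₁.le d₁
  have hv₂ : v ∉ p₂.support := not_mem_support_of_dist_lt p₂ hl₂.le d₂
  have hq := hT.IsAcyclic.path_unique ⟨p₁.concat h₁, concat_path hp₁ h₁ hv₁⟩
    ⟨p₂.concat h₂, concat_path hp₂ h₂ hv₂⟩
  have hq' : p₁.concat h₁ = p₂.concat h₂ := congrArg Subtype.val hq
  obtain ⟨hv, -⟩ := Walk.concat_inj hq'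
  exact hv

lemma adj_dist_ne {T : SimpleGraph V} (hT : T.IsTree) (r : V) {u v : V} (h : T.Adj u v) :
    T.dist r u ≠ T.dist r v := by
  classical
  intro heq
  obtain ⟨p, hp, hl⟩ := hT.isConnected.exists_path_of_dist r u
  obtain ⟨q, hq, hlq⟩ := hT.isConnected.exists_path_of_dist r v
  have hv : v ∉ p.support := by
    intro hv
    have h1 : T.dist r v ≤ (p.takeUntil v hv).length := SimpleGraph.dist_le _
    have h2 : (p.takeUntil v hv).length + (p.dropUntil v hv).length = p.length := by
      rw [← SimpleGraph.Walk.length_append, SimpleGraph.Walk.take_spec]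
    have h3 : (p.dropUntil v hv).length = 0 := by omega
    exact h.ne' (SimpleGraph.Walk.eq_of_length_eq_zero h3)
  have huq := hT.IsAcyclic.path_unique ⟨p.concat h, concat_path hp h hv⟩ ⟨q, hq⟩
  have : (p.concat h).length = q.length := congrArg (Walk.length ∘ Subtype.val) huq
  rw [Walk.length_concat] at this
  omega

section SSP

variable [Fintype V] {T : SimpleGraph V} {P : Finset (Set V)}

lemma parts_eq (hP : IsSSP T P) {A B : Set V} (hA : A ∈ P) (hB : B ∈ P) {v : V}
    (hvA : v ∈ A) (hvB : v ∈ B) : A = B :=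
  ((hP.cover v).unique ⟨hA, hvA⟩ ⟨hB, hvB⟩)

lemma cover_of {Q : Finset (Set V)}
    (hdis : ∀ A ∈ Q, ∀ B ∈ Q, ∀ v : V, v ∈ A → v ∈ B → A = B)
    (hcov : ∀ v : V, ∃ S ∈ Q, v ∈ S) : ∀ v : V, ∃! S, S ∈ Q ∧ v ∈ S := by
  intro v
  obtain ⟨S, hS, hv⟩ := hcov v
  exact ⟨S, ⟨hS, hv⟩, fun B hB => hdis B hB.1 S hS v hB.2 hv⟩

lemma exists_third {S : Set V} (h3 : 3 ≤ S.ncard) (c y : V) : ∃ x ∈ S, x ≠ c ∧ x ≠ y := by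
  by_contra h
  push_neg at h
  have hsub : S ⊆ ({c, y} : Set V) := by
    intro x hx
    by_cases hxc : x = c
    · simp [hxc]
    · simp [h x hx hxc]
  have h1 := Set.ncard_le_ncard hsub (Set.toFinite _)
  have h2 := Set.ncard_insert_le c ({y} : Set V)
  simp only [Set.ncard_singleton] at h2
  omega

lemma exists_second {S : Set V} (h2 : 2 ≤ S.ncard) (c : V) : ∃ x ∈ S, x ≠ c := by
  by_contra h
  push_neg at h
  have hsub : S ⊆ ({c} : Set V) := fun x hx => by simp [h x hx]
  have h1 := Set.ncard_le_ncard hsub (Set.toFinite _)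
  simp only [Set.ncard_singleton] at h1
  omega

lemma surgery1 [DecidableEq (Set V)] (hP : IsSSP T P)
    {S : Set V} (hS : S ∈ P) {c y z : V} (hcS : c ∈ S) (hyS : y ∈ S)
    (hcadj : ∀ x ∈ S, x ≠ c → T.Adj c x)
    (hcnon : ∀ x ∈ S, ∀ x' ∈ S, x ≠ c → x' ≠ c → ¬T.Adj x x')
    (hyc : y ≠ c) (h3 : 3 ≤ S.ncard) (hyz : T.Adj y z) (hzS : z ∉ S)
    (hzP : ({z} : Set V) ∈ P) :
    IsSSP T (insert (S \ {y}) (insert ({y, z} : Set V) ((P.erase S).erase {z}))) ∧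
      SSPweight (insert (S \ {y}) (insert ({y, z} : Set V) ((P.erase S).erase {z})))
        = SSPweight P ∧
      (∑ A ∈ insert (S \ {y}) (insert ({y, z} : Set V) ((P.erase S).erase {z})),
          (A.ncard - 2)) + 1 = ∑ A ∈ P, (A.ncard - 2) := by
  set P₁ := insert (S \ {y}) (insert ({y, z} : Set V) ((P.erase S).erase {z})) with hP₁
  have hyz' : y ≠ z := hyz.ne
  have hcz : c ≠ z := fun h => hzS (h ▸ hcS)
  have hcSy : c ∈ S \ {y} := ⟨hcS, by simp [Ne.symm hyc]⟩
  have hySy : y ∉ S \ {y} := by simp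
  have hnSy : (S \ {y}).ncard = S.ncard - 1 := Set.ncard_diff_singleton_of_mem hyS
  have hnyz : ({y, z} : Set V).ncard = 2 := Set.ncard_pair hyz'
  have hnz : ({z} : Set V).ncard = 1 := Set.ncard_singleton z
  have hSz : S ≠ ({z} : Set V) := by
    intro h; rw [h, hnz] at h3; omega
  have hSy_ne_yz : S \ {y} ≠ ({y, z} : Set V) := by
    intro h
    have : c ∈ ({y, z} : Set V) := h ▸ hcSy
    simp only [Set.mem_insert_iff, Set.mem_singleton_iff] at this
    rcases this with h' | h'
    · exact hyc h'.symm
    · exact hcz h'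
  have hSy_notP : S \ {y} ∉ P := by
    intro h
    have heq := parts_eq hP h hS hcSy hcS
    rw [heq] at hySy
    exact hySy hyS
  have hyz_notP : ({y, z} : Set V) ∉ P := by
    intro h
    have heq := parts_eq hP h hS (show y ∈ ({y, z} : Set V) by simp) hyS
    exact hzS (heq ▸ (show z ∈ ({y, z} : Set V) by simp))
  have hmem : ∀ {A : Set V}, A ∈ P₁ ↔
      A = S \ {y} ∨ A = ({y, z} : Set V) ∨ (A ∈ P ∧ A ≠ S ∧ A ≠ ({z} : Set V)) := by
    intro A
    simp only [hP₁, Finset.mem_insert, Finset.mem_erase]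
    tauto
  -- old parts stay
  have hold : ∀ {A : Set V}, A ∈ P → A ≠ S → A ≠ ({z} : Set V) → A ∈ P₁ := by
    intro A h1 h2 h3; exact hmem.2 (Or.inr (Or.inr ⟨h1, h2, h3⟩))
  have hcover : ∀ v : V, ∃! A, A ∈ P₁ ∧ v ∈ A := by
    apply cover_of
    · intro A hA B hB v hvA hvB
      rcases hmem.1 hA with rfl | rfl | ⟨hAP, hAS, hAz⟩ <;>
        rcases hmem.1 hB with rfl | rfl | ⟨hBP, hBS, hBz⟩
      · rfl
      · exfalso
        rcases (show v = y ∨ v = z from hvB) with rfl | rfl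
        · exact hvA.2 rfl
        · exact hzS hvA.1
      · exact absurd (parts_eq hP hBP hS hvB hvA.1) hBS
      · exfalso
        rcases (show v = y ∨ v = z from hvA) with rfl | rfl
        · exact hvB.2 rfl
        · exact hzS hvB.1
      · rfl
      · exfalso
        rcases (show v = y ∨ v = z from hvA) with rfl | rfl
        · exact hBS (parts_eq hP hBP hS hvB hyS)
        · exact hBz (parts_eq hP hBP hzP hvB rfl)
      · exact absurd (parts_eq hP hAP hS hvA hvB.1) hAS
      · exfalso
        rcases (show v = y ∨ v = z from hvB) with rfl | rfl
        · exact hAS (parts_eq hP hAP hS hvA hyS)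
        · exact hAz (parts_eq hP hAP hzP hvA rfl)
      · exact parts_eq hP hAP hBP hvA hvB
    · intro v
      obtain ⟨Q, ⟨hQ, hvQ⟩, -⟩ := hP.cover v
      by_cases hQS : Q = S
      · have hvS : v ∈ S := hQS ▸ hvQ
        by_cases hvy : v = y
        · exact ⟨{y, z}, hmem.2 (Or.inr (Or.inl rfl)), by simp [hvy]⟩
        · exact ⟨S \ {y}, hmem.2 (Or.inl rfl), ⟨hvS, by simp [hvy]⟩⟩
      · by_cases hQz : Q = ({z} : Set V)
        · have hvz : v ∈ ({z} : Set V) := hQz ▸ hvQ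
          exact ⟨{y, z}, hmem.2 (Or.inr (Or.inl rfl)), by simp [show v = z from hvz]⟩
        · exact ⟨Q, hold hQ hQS hQz, hvQ⟩
  have hstar : ∀ A ∈ P₁, IsStarSet T A := by
    intro A hA
    rcases hmem.1 hA with rfl | rfl | ⟨hAP, -, -⟩
    · exact ⟨c, hcSy, fun x hx hxc => hcadj x hx.1 hxc,
        fun x hx x' hx' h1 h2 => hcnon x hx.1 x' hx'.1 h1 h2⟩
    · refine ⟨y, by simp, ?_, ?_⟩
      · intro x hx hxy
        rcases (show x = y ∨ x = z from hx) with h | h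
        · exact absurd h hxy
        · rw [h]; exact hyz
      · intro x hx x' hx' h1 h2
        have hxx : x = z := (show x = y ∨ x = z from hx).resolve_left h1
        have hxx' : x' = z := (show x' = y ∨ x' = z from hx').resolve_left h2
        rw [hxx, hxx']
        exact T.irrefl
    · exact hP.star A hAP
  have hweakStem : ∀ v l, T.Adj v l → IsLeaf T l →
      (∀ l', T.Adj v l' → IsLeaf T l' → l' = l) → ({v, l} : Set V) ∈ P₁ := by
    intro v l hadj hleaf huniq
    have hin := hP.weakStem v l hadj hleaf huniq
    have hn2 : ({v, l} : Set V).ncard = 2 := Set.ncard_pair hadj.ne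
    refine hold hin ?_ ?_
    · intro h; rw [← h, hn2] at h3; omega
    · intro h; rw [h, hnz] at hn2; omega
  have hk1 : ∀ A ∈ P₁, A.ncard = 1 → ∃ A' ∈ P₁, ∃ B' ∈ P₁, A' ≠ B' ∧
      A'.ncard ≠ 1 ∧ B'.ncard ≠ 1 ∧ PartsAdj T A A' ∧ PartsAdj T A B' := by
    intro A hA h1
    rcases hmem.1 hA with rfl | rfl | ⟨hAP, hAS, hAz⟩
    · rw [hnSy] at h1; omega
    · rw [hnyz] at h1; omega
    · obtain ⟨W₁, hW₁, W₂, hW₂, hne, hn₁, hn₂, ha₁, ha₂⟩ := hP.k1 A hAP h1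
      -- transform a witness equal to S
      have htrans : ∀ W, W ∈ P → W.ncard ≠ 1 → PartsAdj T A W →
          ∃ W', W' ∈ P₁ ∧ W'.ncard ≠ 1 ∧ PartsAdj T A W' ∧
            (W = S → (W' = S \ {y} ∨ W' = ({y, z} : Set V))) ∧ (W ≠ S → W' = W) := by
        intro W hWP hWn hWa
        by_cases hWS : W = S
        · rw [hWS] at hWa
          obtain ⟨a, ha, b, hb, hab⟩ := hWa
          by_cases hby : b = y
          · refine ⟨{y, z}, hmem.2 (Or.inr (Or.inl rfl)), by rw [hnyz]; omega,
              ⟨a, ha, y, by simp, hby ▸ hab⟩, fun _ => Or.inr rfl, fun h => absurd hWS h⟩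
          · refine ⟨S \ {y}, hmem.2 (Or.inl rfl), by rw [hnSy]; omega,
              ⟨a, ha, b, ⟨hb, by simp [hby]⟩, hab⟩, fun _ => Or.inl rfl,
              fun h => absurd hWS h⟩
        · have hWz : W ≠ ({z} : Set V) := by
            intro h; rw [h, hnz] at hWn; exact hWn rfl
          exact ⟨W, hold hWP hWS hWz, hWn, hWa, fun h => absurd h hWS, fun _ => rfl⟩
      obtain ⟨W₁', hW₁'P, hW₁'n, hW₁'a, hW₁'S, hW₁'nS⟩ := htrans W₁ hW₁ hn₁ ha₁
      obtain ⟨W₂', hW₂'P, hW₂'n, hW₂'a, hW₂'S, hW₂'nS⟩ := htrans W₂ hW₂ hn₂ ha₂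
      refine ⟨W₁', hW₁'P, W₂', hW₂'P, ?_, hW₁'n, hW₂'n, hW₁'a, hW₂'a⟩
      by_cases h1S : W₁ = S
      · have h2S : W₂ ≠ S := fun h => hne (h1S.trans h.symm)
        rw [hW₂'nS h2S]
        rcases hW₁'S h1S with h' | h' <;> rw [h'] <;> intro hcontra
        · exact hSy_notP (by rw [hcontra]; exact hW₂)
        · exact hyz_notP (by rw [hcontra]; exact hW₂)
      · rw [hW₁'nS h1S]
        by_cases h2S : W₂ = S
        · rcases hW₂'S h2S with h' | h' <;> rw [h'] <;> intro hcontra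
          · exact hSy_notP (by rw [← hcontra]; exact hW₁)
          · exact hyz_notP (by rw [← hcontra]; exact hW₁)
        · rw [hW₂'nS h2S]; exact hne
  have hzPe : ({z} : Set V) ∈ P.erase S := Finset.mem_erase.2 ⟨Ne.symm hSz, hzP⟩
  have hnot1 : S \ {y} ∉ insert ({y, z} : Set V) ((P.erase S).erase {z}) := by
    simp [Finset.mem_insert, Finset.mem_erase, hSy_ne_yz, hSy_notP]
  have hnot2 : ({y, z} : Set V) ∉ (P.erase S).erase {z} := by
    simp [Finset.mem_erase, hyz_notP]
  refine ⟨⟨hcover, hstar, hweakStem, hk1⟩, ?_, ?_⟩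
  · show SSPweight P₁ = SSPweight P
    unfold SSPweight
    rw [hP₁, Finset.sum_insert hnot1, Finset.sum_insert hnot2,
      ← Finset.add_sum_erase P _ hS, ← Finset.add_sum_erase (P.erase S) _ hzPe,
      hnSy, hnyz, hnz]
    omega
  · show (∑ A ∈ P₁, (A.ncard - 2)) + 1 = ∑ A ∈ P, (A.ncard - 2)
    rw [hP₁, Finset.sum_insert hnot1, Finset.sum_insert hnot2,
      ← Finset.add_sum_erase P _ hS, ← Finset.add_sum_erase (P.erase S) _ hzPe,
      hnSy, hnyz, hnz]
    omega

lemma surgery2 [DecidableEq (Set V)] (hP : IsSSP T P)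
    {S : Set V} (hS : S ∈ P) {c y : V} (hcS : c ∈ S) (hyS : y ∈ S)
    (hcadj : ∀ x ∈ S, x ≠ c → T.Adj c x)
    (hcnon : ∀ x ∈ S, ∀ x' ∈ S, x ≠ c → x' ≠ c → ¬T.Adj x x')
    (hyc : y ≠ c) (h3 : 3 ≤ S.ncard)
    {z : V} (hyz : T.Adj y z) (hzS : z ∉ S)
    (hout : ∀ a, T.Adj y a → a ∉ S → ∀ B ∈ P, a ∈ B → B.ncard = 2) :
    IsSSP T (insert (S \ {y}) (insert ({y} : Set V) (P.erase S))) ∧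
      SSPweight (insert (S \ {y}) (insert ({y} : Set V) (P.erase S))) + 1 = SSPweight P := by
  set P₂ := insert (S \ {y}) (insert ({y} : Set V) (P.erase S)) with hP₂
  have hcSy : c ∈ S \ {y} := ⟨hcS, by simp [Ne.symm hyc]⟩
  have hySy : y ∉ S \ {y} := by simp
  have hnSy : (S \ {y}).ncard = S.ncard - 1 := Set.ncard_diff_singleton_of_mem hyS
  have hny : ({y} : Set V).ncard = 1 := Set.ncard_singleton y
  have hSy_notP : S \ {y} ∉ P := by
    intro h
    have heq := parts_eq hP h hS hcSy hcS
    rw [heq] at hySy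
    exact hySy hyS
  have hy_notP : ({y} : Set V) ∉ P := by
    intro h
    have heq := parts_eq hP h hS (show y ∈ ({y} : Set V) from rfl) hyS
    rw [heq] at hny
    omega
  have hSy_ne_y : S \ {y} ≠ ({y} : Set V) := by
    intro h
    have hcy : c ∈ ({y} : Set V) := h ▸ hcSy
    exact hyc (Set.mem_singleton_iff.1 hcy).symm
  have hmem : ∀ {A : Set V}, A ∈ P₂ ↔
      A = S \ {y} ∨ A = ({y} : Set V) ∨ (A ∈ P ∧ A ≠ S) := by
    intro A
    simp only [hP₂, Finset.mem_insert, Finset.mem_erase]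
    tauto
  have hold : ∀ {A : Set V}, A ∈ P → A ≠ S → A ∈ P₂ := by
    intro A h1 h2; exact hmem.2 (Or.inr (Or.inr ⟨h1, h2⟩))
  -- the part containing z
  obtain ⟨Bz, ⟨hBzP, hzBz⟩, -⟩ := hP.cover z
  have hBzS : Bz ≠ S := fun h => hzS (h ▸ hzBz)
  have hBz2 : Bz.ncard = 2 := hout z hyz hzS Bz hBzP hzBz
  have hBz_ne_Sy : S \ {y} ≠ Bz := by
    intro h
    have hcBz : c ∈ Bz := h ▸ hcSy
    exact hBzS (parts_eq hP hBzP hS hcBz hcS)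
  have hcover : ∀ v : V, ∃! A, A ∈ P₂ ∧ v ∈ A := by
    apply cover_of
    · intro A hA B hB v hvA hvB
      rcases hmem.1 hA with rfl | rfl | ⟨hAP, hAS⟩ <;>
        rcases hmem.1 hB with rfl | rfl | ⟨hBP, hBS⟩
      · rfl
      · exact absurd (Set.mem_singleton_iff.1 hvB) (by simpa using hvA.2)
      · exact absurd (parts_eq hP hBP hS hvB hvA.1) hBS
      · exact absurd (Set.mem_singleton_iff.1 hvA) (by simpa using hvB.2)
      · rfl
      · exact absurd (parts_eq hP hBP hS hvB ((Set.mem_singleton_iff.1 hvA) ▸ hyS)) hBS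
      · exact absurd (parts_eq hP hAP hS hvA hvB.1) hAS
      · exact absurd (parts_eq hP hAP hS hvA ((Set.mem_singleton_iff.1 hvB) ▸ hyS)) hAS
      · exact parts_eq hP hAP hBP hvA hvB
    · intro v
      obtain ⟨Q, ⟨hQ, hvQ⟩, -⟩ := hP.cover v
      by_cases hQS : Q = S
      · have hvS : v ∈ S := hQS ▸ hvQ
        by_cases hvy : v = y
        · exact ⟨{y}, hmem.2 (Or.inr (Or.inl rfl)), by simp [hvy]⟩
        · exact ⟨S \ {y}, hmem.2 (Or.inl rfl), ⟨hvS, by simp [hvy]⟩⟩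
      · exact ⟨Q, hold hQ hQS, hvQ⟩
  have hstar : ∀ A ∈ P₂, IsStarSet T A := by
    intro A hA
    rcases hmem.1 hA with rfl | rfl | ⟨hAP, -⟩
    · exact ⟨c, hcSy, fun x hx hxc => hcadj x hx.1 hxc,
        fun x hx x' hx' h1 h2 => hcnon x hx.1 x' hx'.1 h1 h2⟩
    · exact ⟨y, rfl, fun x hx hxy => absurd (Set.mem_singleton_iff.1 hx) hxy,
        fun x hx x' hx' h1 h2 => absurd (Set.mem_singleton_iff.1 hx) h1⟩
    · exact hP.star A hAP
  have hweakStem : ∀ v l, T.Adj v l → IsLeaf T l →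
      (∀ l', T.Adj v l' → IsLeaf T l' → l' = l) → ({v, l} : Set V) ∈ P₂ := by
    intro v l hadj hleaf huniq
    have hin := hP.weakStem v l hadj hleaf huniq
    have hn2 : ({v, l} : Set V).ncard = 2 := Set.ncard_pair hadj.ne
    refine hold hin ?_
    intro h; rw [← h, hn2] at h3; omega
  have hk1 : ∀ A ∈ P₂, A.ncard = 1 → ∃ A' ∈ P₂, ∃ B' ∈ P₂, A' ≠ B' ∧
      A'.ncard ≠ 1 ∧ B'.ncard ≠ 1 ∧ PartsAdj T A A' ∧ PartsAdj T A B' := by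
    intro A hA h1
    rcases hmem.1 hA with rfl | rfl | ⟨hAP, hAS⟩
    · rw [hnSy] at h1; omega
    · refine ⟨S \ {y}, hmem.2 (Or.inl rfl), Bz, hold hBzP hBzS, hBz_ne_Sy,
        by rw [hnSy]; omega, by rw [hBz2]; omega,
        ⟨y, rfl, c, hcSy, (hcadj y hyS hyc).symm⟩, ⟨y, rfl, z, hzBz, hyz⟩⟩
    · obtain ⟨W₁, hW₁, W₂, hW₂, hne, hn₁, hn₂, ha₁, ha₂⟩ := hP.k1 A hAP h1
      have htrans : ∀ W, W ∈ P → W.ncard ≠ 1 → PartsAdj T A W →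
          ∃ W', W' ∈ P₂ ∧ W'.ncard ≠ 1 ∧ PartsAdj T A W' ∧
            (W = S → W' = S \ {y}) ∧ (W ≠ S → W' = W) := by
        intro W hWP hWn hWa
        by_cases hWS : W = S
        · rw [hWS] at hWa
          obtain ⟨a, ha, b, hb, hab⟩ := hWa
          have haS : a ∉ S := by
            intro haS
            exact hAS (parts_eq hP hAP hS ha haS)
          have hby : b ≠ y := by
            intro hby
            have hAa : A = {a} := by
              obtain ⟨x, hx⟩ := Set.ncard_eq_one.1 h1
              rw [hx] at ha ⊢
              rw [Set.mem_singleton_iff.1 ha]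
            have := hout a (by rw [hby] at hab; exact hab.symm) haS A hAP (by rw [hAa]; rfl)
            omega
          refine ⟨S \ {y}, hmem.2 (Or.inl rfl), by rw [hnSy]; omega,
            ⟨a, ha, b, ⟨hb, by simp [hby]⟩, hab⟩, fun _ => rfl, fun h => absurd hWS h⟩
        · exact ⟨W, hold hWP hWS, hWn, hWa, fun h => absurd h hWS, fun _ => rfl⟩
      obtain ⟨W₁', hW₁'P, hW₁'n, hW₁'a, hW₁'S, hW₁'nS⟩ := htrans W₁ hW₁ hn₁ ha₁
      obtain ⟨W₂', hW₂'P, hW₂'n, hW₂'a, hW₂'S, hW₂'nS⟩ := htrans W₂ hW₂ hn₂ ha₂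
      refine ⟨W₁', hW₁'P, W₂', hW₂'P, ?_, hW₁'n, hW₂'n, hW₁'a, hW₂'a⟩
      by_cases h1S : W₁ = S
      · have h2S : W₂ ≠ S := fun h => hne (h1S.trans h.symm)
        rw [hW₂'nS h2S, hW₁'S h1S]
        intro hcontra
        exact hSy_notP (by rw [hcontra]; exact hW₂)
      · rw [hW₁'nS h1S]
        by_cases h2S : W₂ = S
        · rw [hW₂'S h2S]
          intro hcontra
          exact hSy_notP (by rw [← hcontra]; exact hW₁)
        · rw [hW₂'nS h2S]; exact hne
  have hnot1 : S \ {y} ∉ insert ({y} : Set V) (P.erase S) := by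
    simp [Finset.mem_insert, Finset.mem_erase, hSy_ne_y, hSy_notP]
  have hnot2 : ({y} : Set V) ∉ P.erase S := by
    simp [Finset.mem_erase, hy_notP]
  refine ⟨⟨hcover, hstar, hweakStem, hk1⟩, ?_⟩
  show SSPweight P₂ + 1 = SSPweight P
  unfold SSPweight
  rw [hP₂, Finset.sum_insert hnot1, Finset.sum_insert hnot2,
    ← Finset.add_sum_erase P _ hS, hnSy, hny]
  omega


abbrev SSPCand (T : SimpleGraph V) (P : Finset (Set V)) (w : V) : Prop :=
  ∃ S, S ∈ P ∧ w ∈ S ∧ 3 ≤ S.ncard ∧ ∃ c, c ∈ S ∧ (∀ x ∈ S, x ≠ c → T.Adj c x) ∧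
    (∀ x ∈ S, ∀ x' ∈ S, x ≠ c → x' ≠ c → ¬T.Adj x x') ∧ w ≠ c

lemma main_step [Fintype V] {T : SimpleGraph V} (hT : T.IsTree) (hweak : IsWeakGraph T) :
    ∀ (n : ℕ) (P : Finset (Set V)), IsSSP T P → SSPweight P = starS T →
      (∑ A ∈ P, (A.ncard - 2)) ≤ n →
      ∃ P' : Finset (Set V), IsSSP T P' ∧ SSPweight P' = starS T ∧ ∀ S ∈ P', S.ncard ≤ 2 := by
  intro n
  induction n with
  | zero =>
    intro P hP hw hm
    refine ⟨P, hP, hw, ?_⟩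
    intro S hSP
    have h0 := Finset.sum_eq_zero_iff.1 (Nat.le_zero.1 hm) S hSP
    omega
  | succ n ih =>
    intro P hP hw hm
    classical
    by_cases hall : ∀ S ∈ P, S.ncard ≤ 2
    · exact ⟨P, hP, hw, hall⟩
    push_neg at hall
    obtain ⟨S₀, hS₀P, hS₀3⟩ := hall
    have hS0 : 3 ≤ S₀.ncard := by omega
    obtain ⟨c₀, hc₀S, hc₀adj, hc₀non⟩ := hP.star S₀ hS₀P
    obtain ⟨y₀, hy₀S, hy₀c⟩ := exists_second (S := S₀) (by omega) c₀
    have hCne : (Finset.univ.filter (SSPCand T P)).Nonempty :=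
      ⟨y₀, Finset.mem_filter.2 ⟨Finset.mem_univ _,
        ⟨S₀, hS₀P, hy₀S, hS0, c₀, hc₀S, hc₀adj, hc₀non, hy₀c⟩⟩⟩
    obtain ⟨y, hyF, hymax'⟩ :=
      Finset.exists_max_image (Finset.univ.filter (SSPCand T P)) (fun w => T.dist c₀ w) hCne
    have hymax : ∀ w, SSPCand T P w → T.dist c₀ w ≤ T.dist c₀ y := fun w hw' =>
      hymax' w (Finset.mem_filter.2 ⟨Finset.mem_univ _, hw'⟩)
    obtain ⟨S, hSP, hyS, h3, c, hcS, hcadj, hcnon, hyc⟩ := (Finset.mem_filter.1 hyF).2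
    have F0 : T.Adj c y := hcadj y hyS hyc
    -- c is the parent of y
    have F1 : T.dist c₀ c < T.dist c₀ y := by
      have hne1 : T.dist c₀ c ≠ T.dist c₀ y := adj_dist_ne hT c₀ F0
      rcases lt_or_gt_of_ne hne1 with h | h
      · exact h
      · exfalso
        obtain ⟨y', hy'S, hy'c, hy'y⟩ := exists_third h3 c y
        have hadj' : T.Adj c y' := hcadj y' hy'S hy'c
        have hne2 : T.dist c₀ y' ≠ T.dist c₀ c := adj_dist_ne hT c₀ hadj'.symm
        rcases lt_or_gt_of_ne hne2 with h2 | h2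
        · exact hy'y (parent_unique hT c₀ hadj'.symm F0.symm h2 h)
        · have hcand : SSPCand T P y' := ⟨S, hSP, hy'S, h3, c, hcS, hcadj, hcnon, hy'c⟩
          have := hymax y' hcand
          omega
    -- y is not a leaf
    have hyleaf : ¬ IsLeaf T y := by
      intro hleaf
      have huniq : ∀ l', T.Adj c l' → IsLeaf T l' → l' = y := by
        intro l' hadj' hleaf'
        by_contra hne
        exact hweak c ⟨l', y, hne, hadj', F0, hleaf', hleaf⟩
      have hin := hP.weakStem c y F0 hleaf huniq
      have heq : ({c, y} : Set V) = S := parts_eq hP hin hSP (by simp) hyS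
      have h2 : ({c, y} : Set V).ncard = 2 := Set.ncard_pair F0.ne
      rw [← heq] at h3
      omega
    have hz_ex : ∃ z, T.Adj y z ∧ z ≠ c := by
      by_contra h
      push_neg at h
      apply hyleaf
      have hns : T.neighborSet y = {c} := by
        ext w
        simp only [SimpleGraph.mem_neighborSet, Set.mem_singleton_iff]
        exact ⟨h w, fun hw => hw ▸ F0.symm⟩
      rw [IsLeaf, hns, Set.ncard_singleton]
    have F3 : ∀ z, T.Adj y z → z ≠ c → z ∉ S := by
      intro z hadj hzc hzS
      exact hcnon y hyS z hzS hyc hzc hadj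
    have F4 : ∀ z, T.Adj y z → z ≠ c → T.dist c₀ y < T.dist c₀ z := by
      intro z hadj hzc
      have hne := adj_dist_ne hT c₀ hadj
      rcases lt_or_gt_of_ne hne with h | h
      · exact h
      · exact absurd (parent_unique hT c₀ hadj.symm F0 h F1) hzc
    have F5 : ∀ z B, T.Adj y z → z ≠ c → B ∈ P → z ∈ B → B.ncard ≤ 2 := by
      intro z B hadj hzc hBP hzB
      by_contra hB3
      push_neg at hB3
      obtain ⟨c', hc'B, hc'adj, hc'non⟩ := hP.star B hBP
      have hBS : B ≠ S := fun h => F3 z hadj hzc (h ▸ hzB)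
      by_cases hzc' : z = c'
      · obtain ⟨w, hwB, hwz⟩ := exists_second (S := B) (by omega) z
        have hwc' : w ≠ c' := hzc' ▸ hwz
        have hadj_w : T.Adj c' w := hc'adj w hwB hwc'
        have hadj_zw : T.Adj z w := hzc' ▸ hadj_w
        have hnew : T.dist c₀ w ≠ T.dist c₀ z := adj_dist_ne hT c₀ hadj_zw.symm
        rcases lt_or_gt_of_ne hnew with h2 | h2
        · have hwy : w = y := parent_unique hT c₀ hadj_zw.symm hadj h2 (F4 z hadj hzc)
          exact hBS (parts_eq hP hBP hSP (hwy ▸ hwB) hyS)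
        · have hcw : SSPCand T P w := ⟨B, hBP, hwB, by omega, c', hc'B, hc'adj, hc'non, hwc'⟩
          have h4 := hymax w hcw
          have h5 := F4 z hadj hzc
          omega
      · have hcz : SSPCand T P z := ⟨B, hBP, hzB, by omega, c', hc'B, hc'adj, hc'non, hzc'⟩
        have h4 := hymax z hcz
        have h5 := F4 z hadj hzc
        omega
    by_cases hcase : ∃ z B, T.Adj y z ∧ z ≠ c ∧ B ∈ P ∧ z ∈ B ∧ B.ncard = 1
    · obtain ⟨z, B, hadj, hzc, hBP, hzB, hB1⟩ := hcase
      have hBz : B = {z} := by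
        obtain ⟨x, hx⟩ := Set.ncard_eq_one.1 hB1
        rw [hx] at hzB ⊢
        rw [Set.mem_singleton_iff.1 hzB]
      rw [hBz] at hBP
      obtain ⟨hSSP₁, hw₁, hm₁⟩ :=
        surgery1 hP hSP hcS hyS hcadj hcnon hyc h3 hadj (F3 z hadj hzc) hBP
      exact ih _ hSSP₁ (hw₁.trans hw) (by omega)
    · push_neg at hcase
      obtain ⟨z, hadjz, hzc⟩ := hz_ex
      have hout : ∀ a, T.Adj y a → a ∉ S → ∀ B ∈ P, a ∈ B → B.ncard = 2 := by
        intro a hadja haS B hBP haB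
        have hac : a ≠ c := fun h => haS (h ▸ hcS)
        have h1 := hcase a B hadja hac hBP haB
        have h2 := F5 a B hadja hac hBP haB
        have h0 : 0 < B.ncard := (Set.ncard_pos).2 ⟨a, haB⟩
        omega
      obtain ⟨hSSP₂, hw₂⟩ :=
        surgery2 hP hSP hcS hyS hcadj hcnon hyc h3 hadjz (F3 z hadjz hzc) hout
      exfalso
      have hle : starS T ≤ SSPweight (insert (S \ {y}) (insert ({y} : Set V) (P.erase S))) :=
        Nat.sInf_le ⟨_, hSSP₂, rfl⟩
      have hterm : S.ncard - 1 ≤ SSPweight P :=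
        Finset.single_le_sum (f := fun A : Set V => A.ncard - 1) (fun _ _ => Nat.zero_le _) hSP
      omega

end SSP


theorem stmt_4 {V : Type*} [Fintype V] (T : SimpleGraph V) (hT : T.IsTree)
    (hnt : 2 ≤ Fintype.card V) (hweak : IsWeakGraph T)
    (hmin : ∃ P : Finset (Set V), IsSSP T P ∧ SSPweight P = starS T) :
    ∃ P : Finset (Set V), IsSSP T P ∧ SSPweight P = starS T ∧
      ∀ S ∈ P, S.ncard ≤ 2 := by
  classical
  obtain ⟨P, hP, hw⟩ := hmin
  exact main_step hT hweak _ P hP hw le_rfl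
end

section
/- For any non-trivial weak tree T, DD_m(T) ≤ S(T), where S(T) is the minimum weight of a simple star partitioning of T. -/
open SimpleGraph

variable {V : Type*}

section TreeLemmas

variable {T : SimpleGraph V}

/-- the unique path in a tree from `r` to `x` -/
noncomputable def pth (hT : T.IsTree) (r x : V) : T.Walk r x :=
  (hT.existsUnique_path r x).choose

lemma pth_isPath (hT : T.IsTree) (r x : V) : (pth hT r x).IsPath :=
  (hT.existsUnique_path r x).choose_spec.1

lemma pth_unique (hT : T.IsTree) {r x : V} (p : T.Walk r x) (hp : p.IsPath) :
    p = pth hT r x :=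
  (hT.existsUnique_path r x).choose_spec.2 p hp

lemma path_length_eq_dist (hT : T.IsTree) {r x : V} (p : T.Walk r x) (hp : p.IsPath) :
    p.length = T.dist r x := by
  classical
  obtain ⟨w, hw⟩ := (hT.isConnected r x).exists_walk_length_eq_dist
  have h1 : p = pth hT r x := pth_unique hT p hp
  have h2 : w.bypass = pth hT r x := pth_unique hT w.bypass w.bypass_isPath
  have h3 : w.bypass.length ≤ T.dist r x := hw ▸ w.length_bypass_le
  have h4 : T.dist r x ≤ p.length := dist_le p
  have h5 : p.length = w.bypass.length := by rw [h1, ← h2]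
  omega

lemma pth_length (hT : T.IsTree) (r x : V) : (pth hT r x).length = T.dist r x :=
  path_length_eq_dist hT _ (pth_isPath hT r x)

/-- if `w` is on the path from `r` to `x` then `dist r w ≤ dist r x`. -/
lemma dist_le_of_mem_path (hT : T.IsTree) {r x w : V} {p : T.Walk r x} (hp : p.IsPath)
    (hw : w ∈ p.support) : T.dist r w ≤ T.dist r x := by
  classical
  have h1 : (p.takeUntil w hw).length = T.dist r w :=
    path_length_eq_dist hT _ (hp.takeUntil hw)
  have h2 := p.length_takeUntil_le hw
  have h3 := path_length_eq_dist hT p hp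
  omega

/-- adjacent vertices have distances from `r` differing by exactly one -/
lemma dist_adj (hT : T.IsTree) (r : V) {u w : V} (h : T.Adj u w) :
    T.dist r w = T.dist r u + 1 ∨ T.dist r u = T.dist r w + 1 := by
  classical
  set p := pth hT r u with hp
  by_cases hmem : w ∈ p.support
  · right
    have h1 : (p.takeUntil w hmem).length = T.dist r w :=
      path_length_eq_dist hT _ ((pth_isPath hT r u).takeUntil hmem)
    have h2 : (p.takeUntil w hmem).length + (p.dropUntil w hmem).length = p.length := by
      have := congrArg Walk.length (p.take_spec hmem)
      rwa [Walk.length_append] at this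
    have h3 : p.length = T.dist r u := pth_length hT r u
    have h4 : (p.dropUntil w hmem).length ≠ 0 := by
      intro h0
      have hne : w ≠ u := h.ne'
      have := Walk.eq_of_length_eq_zero h0
      exact hne this
    have h5 : T.dist r u ≤ T.dist r w + 1 := by
      have : T.dist r u ≤ T.dist r w + T.dist w u := hT.isConnected.dist_triangle
      have hd : T.dist w u ≤ 1 := by
        have := dist_le (Walk.cons h.symm Walk.nil : T.Walk w u)
        simpa using this
      omega
    omega
  · left
    have hpath : (p.concat h).IsPath := by
      rw [← Walk.isPath_reverse_iff, Walk.reverse_concat]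
      apply Walk.IsPath.cons
      · rw [Walk.isPath_reverse_iff]; exact pth_isPath hT r u
      · simpa using hmem
    have := path_length_eq_dist hT _ hpath
    rw [Walk.length_concat, pth_length hT r u] at this
    omega

/-- trees have no triangles -/
lemma no_triangle (hT : T.IsTree) {a b c : V} (hab : T.Adj a b) (hbc : T.Adj b c)
    (hac : T.Adj a c) : False := by
  classical
  have p1 : (Walk.cons hac Walk.nil : T.Walk a c).IsPath := by simp [hac.ne]
  have p2 : (Walk.cons hab (Walk.cons hbc Walk.nil) : T.Walk a c).IsPath := by
    simp [Walk.cons_isPath_iff, hbc.ne, hab.ne, hac.ne]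
  have := (pth_unique hT _ p1).trans (pth_unique hT _ p2).symm
  have := congrArg Walk.length this
  simp at this

end TreeLemmas

section Coloring

variable {T : SimpleGraph V}

/-- parity of the number of `h`-marked edges on the path from `r` to `x` -/
noncomputable def Fpar (hT : T.IsTree) (r : V) (h : Sym2 V → Bool) (x : V) : Bool :=
  ((pth hT r x).edges.countP h) % 2 == 1

lemma Fpar_adj (hT : T.IsTree) (r : V) (h : Sym2 V → Bool) {u w : V} (hadj : T.Adj u w) :
    xor (Fpar hT r h u) (Fpar hT r h w) = h s(u, w) := by
  classical
  -- main case, as an auxiliary claim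
  have key : ∀ (u w : V) (hadj : T.Adj u w), T.dist r w = T.dist r u + 1 →
      xor (Fpar hT r h u) (Fpar hT r h w) = h s(u, w) := by
    intro u w hadj hd
    have hmem : w ∉ (pth hT r u).support := by
      intro hmem
      have := dist_le_of_mem_path hT (pth_isPath hT r u) hmem
      omega
    have hpath : ((pth hT r u).concat hadj).IsPath := by
      rw [← Walk.isPath_reverse_iff, Walk.reverse_concat]
      exact Walk.IsPath.cons (by rw [Walk.isPath_reverse_iff]; exact pth_isPath hT r u)
        (by simpa using hmem)
    have heq : pth hT r w = (pth hT r u).concat hadj := (pth_unique hT _ hpath).symm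
    unfold Fpar
    rw [heq, Walk.edges_concat, List.concat_eq_append, List.countP_append]
    rcases Nat.even_or_odd ((pth hT r u).edges.countP h) with he | he <;>
      rcases hb : h s(u, w) <;>
      simp_all [List.countP_cons, Nat.even_iff, Nat.odd_iff, Nat.add_mod]
  rcases dist_adj hT r hadj with hd | hd
  · exact key u w hadj hd
  · rw [Bool.xor_comm, Sym2.eq_swap]
    exact key w u hadj.symm hd

lemma Fpar_parity_adj (hT : T.IsTree) (r : V) {u w : V}
    (hadj : T.Adj u w) :
    xor ((T.dist r u) % 2 == 1) ((T.dist r w) % 2 == 1) = true := by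
  rcases dist_adj hT r hadj with hd | hd <;> rw [hd] <;>
    rcases Nat.even_or_odd (T.dist r u) with he | he <;>
      rcases Nat.even_or_odd (T.dist r w) with he2 | he2 <;>
      simp_all [Nat.even_iff, Nat.odd_iff, Nat.add_mod]

end Coloring

section Matching

variable [Fintype V]

/-- a maximal "matching" inside an arbitrary set of allowed edges -/
lemma exists_maximal_matching (R : Set (Sym2 V)) :
    ∃ M : Finset (Sym2 V), (∀ e ∈ M, e ∈ R) ∧
      (∀ e ∈ M, ∀ f ∈ M, e ≠ f → ∀ v, v ∈ e → v ∉ f) ∧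
      (∀ e ∈ R, (∀ v ∈ e, ∀ f ∈ M, v ∉ f) → e ∈ M) := by
  classical
  let good : Finset (Sym2 V) → Prop := fun M =>
    (∀ e ∈ M, e ∈ R) ∧ (∀ e ∈ M, ∀ f ∈ M, e ≠ f → ∀ v, v ∈ e → v ∉ f)
  have h0 : good ∅ := by constructor <;> simp
  obtain ⟨M, hM, hmax⟩ := Finset.exists_max_image
    (Finset.univ.filter fun M => good M) Finset.card
    ⟨∅, by simpa using h0⟩
  rw [Finset.mem_filter] at hM
  refine ⟨M, hM.2.1, hM.2.2, ?_⟩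
  intro e he hfree
  by_contra hem
  have hgood : good (insert e M) := by
    constructor
    · intro f hf
      rcases Finset.mem_insert.1 hf with rfl | hf
      · exact he
      · exact hM.2.1 f hf
    · intro f hf g hg hfg v hvf hvg
      rcases Finset.mem_insert.1 hf with rfl | hf'
      · rcases Finset.mem_insert.1 hg with rfl | hg'
        · exact hfg rfl
        · exact hfree v hvf g hg' hvg
      · rcases Finset.mem_insert.1 hg with rfl | hg'
        · exact hfree v hvg f hf' hvf
        · exact hM.2.2 f hf' g hg' hfg v hvf hvg
  have hle := hmax (insert e M) (by simpa using hgood)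
  rw [Finset.card_insert_of_notMem hem] at hle
  omega

end Matching

section Basics

variable {T : SimpleGraph V}

/-- an interior vertex: neither a leaf nor adjacent to a leaf -/
def IsIntr (T : SimpleGraph V) (v : V) : Prop :=
  ¬ IsLeaf T v ∧ ∀ l, T.Adj v l → ¬ IsLeaf T l

lemma exists_nbr [Fintype V] (hc : T.Connected) (hnt : 2 ≤ Fintype.card V) (v : V) :
    ∃ w, T.Adj v w := by
  obtain ⟨w, hw⟩ := Fintype.exists_ne_of_one_lt_card (by omega) v
  obtain ⟨p⟩ := hc v w
  cases p with
  | nil => exact absurd rfl hw.symm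
  | cons h q => exact ⟨_, h⟩

lemma leaf_unique_nbr {l a b : V} (hl : IsLeaf T l) (ha : T.Adj l a) (hb : T.Adj l b) :
    a = b := by
  obtain ⟨x, hx⟩ := Set.ncard_eq_one.1 hl
  have h1 : a ∈ T.neighborSet l := ha
  have h2 : b ∈ T.neighborSet l := hb
  rw [hx] at h1 h2
  rw [Set.mem_singleton_iff.1 h1, Set.mem_singleton_iff.1 h2]

lemma leaf_exists_nbr [Fintype V] {l : V} (hl : IsLeaf T l) : ∃ s, T.Adj l s := by
  obtain ⟨x, hx⟩ := Set.ncard_eq_one.1 hl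
  exact ⟨x, by have : x ∈ T.neighborSet l := by rw [hx]; rfl
               exact this⟩

lemma two_nbrs [Fintype V] (hc : T.Connected) (hnt : 2 ≤ Fintype.card V) {v : V}
    (hnl : ¬ IsLeaf T v) : ∀ a, ∃ b, b ≠ a ∧ T.Adj v b := by
  intro a
  obtain ⟨w, hw⟩ := exists_nbr hc hnt v
  by_cases hwa : w = a
  · subst hwa
    by_contra hcon
    push_neg at hcon
    apply hnl
    have : T.neighborSet v = {w} := by
      ext y
      simp only [mem_neighborSet, Set.mem_singleton_iff]
      constructor
      · intro hy
        by_contra hne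
        exact (hcon y hne hy).elim
      · intro hy; subst hy; exact hw
    rw [IsLeaf, this, Set.ncard_singleton]
  · exact ⟨w, hwa, hw⟩

/-- in a weak graph, a vertex adjacent to a leaf is adjacent to exactly one leaf -/
lemma weak_unique_leaf (hweak : IsWeakGraph T) {s l : V} (hsl : T.Adj s l)
    (hl : IsLeaf T l) : ∀ l', T.Adj s l' → IsLeaf T l' → l' = l := by
  intro l' h1 h2
  by_contra hne
  exact hweak s ⟨l', l, hne, h1, hsl, h2, hl⟩

lemma star_pair {a b : V} (h : T.Adj a b) : IsStarSet T {a, b} := by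
  refine ⟨a, by simp, ?_, ?_⟩
  · intro x hx hxa
    rcases hx with rfl | rfl
    · exact absurd rfl hxa
    · exact h
  · intro x hx y hy hxa hya
    rcases hx with rfl | rfl
    · exact absurd rfl hxa
    · rcases hy with rfl | rfl
      · exact absurd rfl hya
      · simp

lemma star_single (a : V) : IsStarSet T {a} := by
  refine ⟨a, by simp, ?_, ?_⟩
  · intro x hx hxa; exact absurd (Set.mem_singleton_iff.1 hx) hxa
  · intro x hx y hy hxa _; exact absurd (Set.mem_singleton_iff.1 hx) hxa

end Basics


section SSPBasics

variable {T : SimpleGraph V} {P : Finset (Set V)}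

noncomputable def partOf (hP : IsSSP T P) (v : V) : Set V := (hP.cover v).choose

lemma partOf_mem (hP : IsSSP T P) (v : V) : partOf hP v ∈ P :=
  (hP.cover v).choose_spec.1.1

lemma mem_partOf (hP : IsSSP T P) (v : V) : v ∈ partOf hP v :=
  (hP.cover v).choose_spec.1.2

lemma partOf_eq (hP : IsSSP T P) {S : Set V} {v : V} (hS : S ∈ P) (hv : v ∈ S) :
    S = partOf hP v :=
  (hP.cover v).choose_spec.2 S ⟨hS, hv⟩

lemma parts_eq_s5 (hP : IsSSP T P) {S S' : Set V} {v : V} (hS : S ∈ P) (hS' : S' ∈ P)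
    (hv : v ∈ S) (hv' : v ∈ S') : S = S' :=
  (partOf_eq hP hS hv).trans (partOf_eq hP hS' hv').symm

lemma forced_pair (hweak : IsWeakGraph T) (hP : IsSSP T P) {s l : V}
    (hsl : T.Adj s l) (hl : IsLeaf T l) : ({s, l} : Set V) ∈ P :=
  hP.weakStem s l hsl hl (weak_unique_leaf hweak hsl hl)

/-- every part is either a forced stem-leaf pair or consists of interior vertices -/
lemma part_shape [Fintype V] (hweak : IsWeakGraph T) (hP : IsSSP T P) {S : Set V}
    (hS : S ∈ P) :
    (∃ s l : V, S = {s, l} ∧ T.Adj s l ∧ IsLeaf T l) ∨ (∀ x ∈ S, IsIntr T x) := by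
  by_cases h : ∀ x ∈ S, IsIntr T x
  · exact Or.inr h
  · left
    push_neg at h
    obtain ⟨x, hx, hni⟩ := h
    rw [IsIntr] at hni
    push_neg at hni
    by_cases hxl : IsLeaf T x
    · obtain ⟨s, hs⟩ := leaf_exists_nbr hxl
      have hmem : ({s, x} : Set V) ∈ P := forced_pair hweak hP hs.symm hxl
      have := parts_eq_s5 hP hS hmem hx (by simp)
      exact ⟨s, x, this, hs.symm, hxl⟩
    · obtain ⟨l, hadj, hlf⟩ := hni hxl
      have hmem : ({x, l} : Set V) ∈ P := forced_pair hweak hP hadj hlf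
      have := parts_eq_s5 hP hS hmem hx (by simp)
      exact ⟨x, l, this, hadj, hlf⟩

end SSPBasics

section MateM

variable [Fintype V]

open Classical in
noncomputable def mateM (M : Finset (Sym2 V)) (v : V) : V :=
  if h : ∃ e ∈ M, v ∈ e then Sym2.Mem.other h.choose_spec.2 else v

lemma mateM_props (M : Finset (Sym2 V))
    (hdisj : ∀ e ∈ M, ∀ f ∈ M, e ≠ f → ∀ v, v ∈ e → v ∉ f)
    (hdiag : ∀ e ∈ M, ¬ e.IsDiag) {v : V} (h : ∃ e ∈ M, v ∈ e) :
    s(v, mateM M v) ∈ M ∧ mateM M v ≠ v ∧ mateM M (mateM M v) = v := by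
  have hsv : s(v, mateM M v) = h.choose := by
    rw [mateM]
    rw [dif_pos h]
    exact Sym2.other_spec h.choose_spec.2
  have hmem : s(v, mateM M v) ∈ M := hsv ▸ h.choose_spec.1
  have hne : mateM M v ≠ v := by
    intro heq
    apply hdiag _ hmem
    rw [Sym2.mk_isDiag_iff]
    exact heq.symm
  refine ⟨hmem, hne, ?_⟩
  set m := mateM M v with hm
  have h' : ∃ e ∈ M, m ∈ e := ⟨s(v, m), hmem, by simp⟩
  have hsm : s(m, mateM M m) = h'.choose := by
    rw [mateM, dif_pos h']
    exact Sym2.other_spec h'.choose_spec.2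
  have hmem' : s(m, mateM M m) ∈ M := hsm ▸ h'.choose_spec.1
  have heq : s(m, mateM M m) = s(v, m) := by
    by_contra hne2
    exact hdisj _ hmem' _ hmem hne2 m (by simp) (by simp)
  rcases Sym2.eq_iff.1 heq with ⟨h1, h2⟩ | ⟨h1, h2⟩
  · exact absurd h1 hne
  · exact h2

end MateM


section Existence

variable [Fintype V] {T : SimpleGraph V}

open Classical in
noncomputable def nbrOf (T : SimpleGraph V) (v : V) : V :=
  if h : ∃ w, T.Adj v w then h.choose else v

lemma nbrOf_adj {v : V} (h : ∃ w, T.Adj v w) : T.Adj v (nbrOf T v) := by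
  rw [nbrOf]; rw [dif_pos h]; exact h.choose_spec

open Classical in
noncomputable def leafNbr (T : SimpleGraph V) (v : V) : V :=
  if h : ∃ l, T.Adj v l ∧ IsLeaf T l then h.choose else v

lemma leafNbr_spec {v : V} (h : ∃ l, T.Adj v l ∧ IsLeaf T l) :
    T.Adj v (leafNbr T v) ∧ IsLeaf T (leafNbr T v) := by
  rw [leafNbr]; rw [dif_pos h]; exact h.choose_spec

open Classical in
noncomputable def partEx (T : SimpleGraph V) (M : Finset (Sym2 V)) (v : V) : Set V :=
  if IsLeaf T v then {nbrOf T v, v}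
  else if ∃ l, T.Adj v l ∧ IsLeaf T l then {v, leafNbr T v}
  else if ∃ e ∈ M, v ∈ e then {v, mateM M v} else {v}

theorem ssp_exists (hT : T.IsTree) (hnt : 2 ≤ Fintype.card V) (hweak : IsWeakGraph T) :
    ∃ P : Finset (Set V), IsSSP T P := by
  classical
  set R : Set (Sym2 V) := {e | e ∈ T.edgeSet ∧ ∀ v ∈ e, IsIntr T v} with hR
  obtain ⟨M, hMR, hMdisj, hMmax⟩ := exists_maximal_matching R
  have hMdiag : ∀ e ∈ M, ¬ e.IsDiag := fun e he => T.not_isDiag_of_mem_edgeSet (hMR e he).1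
  set pe : V → Set V := partEx T M with hpe
  -- branch computations
  have pe_leaf : ∀ v, IsLeaf T v → pe v = {nbrOf T v, v} := by
    intro v hv; rw [hpe, partEx, if_pos hv]
  have pe_stem : ∀ v, ¬ IsLeaf T v → (∃ l, T.Adj v l ∧ IsLeaf T l) →
      pe v = {v, leafNbr T v} := by
    intro v hv h2; rw [hpe, partEx, if_neg hv, if_pos h2]
  have pe_mat : ∀ v, IsIntr T v → (∃ e ∈ M, v ∈ e) → pe v = {v, mateM M v} := by
    intro v hv h2; rw [hpe, partEx, if_neg hv.1, if_neg, if_pos h2]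
    push_neg
    intro l hl
    exact hv.2 l hl
  have pe_un : ∀ v, IsIntr T v → ¬ (∃ e ∈ M, v ∈ e) → pe v = {v} := by
    intro v hv h2; rw [hpe, partEx, if_neg hv.1, if_neg, if_neg h2]
    push_neg
    intro l hl
    exact hv.2 l hl
  -- mate facts
  have mat_facts : ∀ v, (∃ e ∈ M, v ∈ e) →
      T.Adj v (mateM M v) ∧ IsIntr T (mateM M v) ∧ (∃ e ∈ M, mateM M v ∈ e) ∧
        mateM M (mateM M v) = v := by
    intro v hv
    obtain ⟨hmem, hne, hinv⟩ := mateM_props M hMdisj hMdiag hv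
    have hRmem := hMR _ hmem
    refine ⟨T.mem_edgeSet.1 hRmem.1, hRmem.2 _ (by simp), ⟨_, hmem, by simp⟩, hinv⟩
  -- membership
  have pe_self : ∀ v, v ∈ pe v := by
    intro v
    by_cases h1 : IsLeaf T v
    · rw [pe_leaf v h1]; simp
    by_cases h2 : ∃ l, T.Adj v l ∧ IsLeaf T l
    · rw [pe_stem v h1 h2]; simp
    have hint : IsIntr T v := ⟨h1, by push_neg at h2; exact h2⟩
    by_cases h3 : ∃ e ∈ M, v ∈ e
    · rw [pe_mat v hint h3]; simp
    · rw [pe_un v hint h3]; simp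
  -- consistency
  have pe_cons : ∀ v w, w ∈ pe v → pe w = pe v := by
    intro v w hw
    by_cases h1 : IsLeaf T v
    · rw [pe_leaf v h1] at hw ⊢
      rcases hw with hw | hw
      · -- w is the stem of leaf v
        subst hw
        set s := nbrOf T v with hs
        have hadj : T.Adj v s := nbrOf_adj (leaf_exists_nbr h1)
        by_cases hsl : IsLeaf T s
        · rw [pe_leaf s hsl]
          have : nbrOf T s = v := leaf_unique_nbr hsl (nbrOf_adj ⟨v, hadj.symm⟩) hadj.symm
          rw [this, Set.pair_comm]
        · rw [pe_stem s hsl ⟨v, hadj.symm, h1⟩]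
          have : leafNbr T s = v :=
            weak_unique_leaf hweak hadj.symm h1 _ (leafNbr_spec ⟨v, hadj.symm, h1⟩).1
              (leafNbr_spec ⟨v, hadj.symm, h1⟩).2
          rw [this, Set.pair_comm]
      · simp only [Set.mem_singleton_iff] at hw
        subst hw; exact pe_leaf _ h1
    by_cases h2 : ∃ l, T.Adj v l ∧ IsLeaf T l
    · rw [pe_stem v h1 h2] at hw ⊢
      rcases hw with hw | hw
      · subst hw; exact pe_stem _ h1 h2
      · simp only [Set.mem_singleton_iff] at hw
        subst hw
        set l := leafNbr T v with hl
        have hspec := leafNbr_spec h2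
        rw [pe_leaf l hspec.2]
        have : nbrOf T l = v := leaf_unique_nbr hspec.2 (nbrOf_adj ⟨v, hspec.1.symm⟩) hspec.1.symm
        rw [this]
    have hint : IsIntr T v := ⟨h1, by push_neg at h2; exact h2⟩
    by_cases h3 : ∃ e ∈ M, v ∈ e
    · rw [pe_mat v hint h3] at hw ⊢
      rcases hw with hw | hw
      · subst hw; exact pe_mat _ hint h3
      · simp only [Set.mem_singleton_iff] at hw
        subst hw
        obtain ⟨hadj, hintm, hm3, hinv⟩ := mat_facts v h3
        rw [pe_mat _ hintm hm3, hinv, Set.pair_comm]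
    · rw [pe_un v hint h3] at hw
      simp only [Set.mem_singleton_iff] at hw
      subst hw; rfl
  refine ⟨Finset.univ.image pe, ?_, ?_, ?_, ?_⟩
  · -- cover
    intro v
    refine ⟨pe v, ⟨Finset.mem_image.2 ⟨v, Finset.mem_univ v, rfl⟩, pe_self v⟩, ?_⟩
    rintro S ⟨hS, hvS⟩
    obtain ⟨u, _, rfl⟩ := Finset.mem_image.1 hS
    exact (pe_cons u v hvS).symm
  · -- star
    intro S hS
    obtain ⟨u, _, rfl⟩ := Finset.mem_image.1 hS
    by_cases h1 : IsLeaf T u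
    · rw [pe_leaf u h1]
      exact star_pair (nbrOf_adj (leaf_exists_nbr h1)).symm
    by_cases h2 : ∃ l, T.Adj u l ∧ IsLeaf T l
    · rw [pe_stem u h1 h2]
      exact star_pair (leafNbr_spec h2).1
    have hint : IsIntr T u := ⟨h1, by push_neg at h2; exact h2⟩
    by_cases h3 : ∃ e ∈ M, u ∈ e
    · rw [pe_mat u hint h3]
      exact star_pair (mat_facts u h3).1
    · rw [pe_un u hint h3]
      exact star_single u
  · -- weakStem
    intro v l hadj hl huniq
    have : pe v = {v, l} := by
      by_cases h1 : IsLeaf T v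
      · rw [pe_leaf v h1]
        have : nbrOf T v = l := leaf_unique_nbr h1 (nbrOf_adj ⟨l, hadj⟩) hadj
        rw [this, Set.pair_comm]
      · rw [pe_stem v h1 ⟨l, hadj, hl⟩]
        have := leafNbr_spec ⟨l, hadj, hl⟩
        rw [huniq _ this.1 this.2]
    rw [← this]
    exact Finset.mem_image.2 ⟨v, Finset.mem_univ v, rfl⟩
  · -- k1
    intro S hS hcard
    obtain ⟨u, _, rfl⟩ := Finset.mem_image.1 hS
    -- u must be interior and unmatched
    have hSu : pe u = {u} := by
      obtain ⟨x, hx⟩ := Set.ncard_eq_one.1 hcard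
      have := pe_self u
      rw [hx] at this ⊢
      rw [Set.mem_singleton_iff.1 this]
    have h1 : ¬ IsLeaf T u := by
      intro h1
      have h := pe_leaf u h1
      rw [hSu] at h
      have hne : nbrOf T u ≠ u := (nbrOf_adj (leaf_exists_nbr h1)).ne'
      have : nbrOf T u ∈ ({u} : Set V) := h ▸ (by simp : nbrOf T u ∈ ({nbrOf T u, u} : Set V))
      exact hne (Set.mem_singleton_iff.1 this)
    by_cases h2 : ∃ l, T.Adj u l ∧ IsLeaf T l
    · exfalso
      have h := pe_stem u h1 h2
      rw [hSu] at h
      have hne : leafNbr T u ≠ u := (leafNbr_spec h2).1.ne'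
      have : leafNbr T u ∈ ({u} : Set V) := h ▸ (by simp : leafNbr T u ∈ ({u, leafNbr T u} : Set V))
      exact hne (Set.mem_singleton_iff.1 this)
    have hint : IsIntr T u := ⟨h1, by push_neg at h2; exact h2⟩
    have h3 : ¬ ∃ e ∈ M, u ∈ e := by
      intro h3
      have h := pe_mat u hint h3
      rw [hSu] at h
      have hne : mateM M u ≠ u := (mateM_props M hMdisj hMdiag h3).2.1
      have : mateM M u ∈ ({u} : Set V) := h ▸ (by simp : mateM M u ∈ ({u, mateM M u} : Set V))
      exact hne (Set.mem_singleton_iff.1 this)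
    -- two distinct neighbors
    obtain ⟨a, hadja⟩ := exists_nbr hT.isConnected hnt u
    obtain ⟨b, hba, hadjb⟩ := two_nbrs hT.isConnected hnt h1 a
    -- each neighbor's part is a pair
    have nbr_part : ∀ x, T.Adj u x → ∃ y, pe x = {x, y} ∧ T.Adj x y ∧
        (pe x).ncard = 2 := by
      intro x hadjx
      have hxl : ¬ IsLeaf T x := hint.2 x hadjx
      by_cases hx2 : ∃ l, T.Adj x l ∧ IsLeaf T l
      · refine ⟨leafNbr T x, pe_stem x hxl hx2, (leafNbr_spec hx2).1, ?_⟩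
        rw [pe_stem x hxl hx2]
        exact Set.ncard_pair (leafNbr_spec hx2).1.ne
      · have hxint : IsIntr T x := ⟨hxl, by push_neg at hx2; exact hx2⟩
        have hx3 : ∃ e ∈ M, x ∈ e := by
          by_contra hx3
          have : s(u, x) ∈ R := by
            refine ⟨T.mem_edgeSet.2 hadjx, ?_⟩
            intro z hz
            rcases Sym2.mem_iff.1 hz with rfl | rfl
            · exact hint
            · exact hxint
          have hmem := hMmax _ this (by
            intro z hz f hf hzf
            rcases Sym2.mem_iff.1 hz with rfl | rfl
            · exact h3 ⟨f, hf, hzf⟩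
            · exact hx3 ⟨f, hf, hzf⟩)
          exact h3 ⟨_, hmem, by simp⟩
        obtain ⟨hadjm, hintm, _, _⟩ := mat_facts x hx3
        refine ⟨mateM M x, pe_mat x hxint hx3, hadjm, ?_⟩
        rw [pe_mat x hxint hx3]
        exact Set.ncard_pair hadjm.ne
    obtain ⟨ya, hya, hadjya, hcarda⟩ := nbr_part a hadja
    obtain ⟨yb, hyb, hadjyb, hcardb⟩ := nbr_part b hadjb
    refine ⟨pe a, Finset.mem_image.2 ⟨a, Finset.mem_univ a, rfl⟩,
      pe b, Finset.mem_image.2 ⟨b, Finset.mem_univ b, rfl⟩, ?_, ?_, ?_, ?_, ?_⟩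
    · -- distinct parts
      intro heq
      have hbmem : b ∈ pe a := by
        rw [heq, hyb]; simp
      rw [hya] at hbmem
      rcases hbmem with hb | hb
      · exact hba hb
      · simp only [Set.mem_singleton_iff] at hb
        have hab : T.Adj a b := by rw [hb]; exact hadjya
        exact no_triangle hT hadja hab hadjb
    · rw [hcarda]; omega
    · rw [hcardb]; omega
    · exact ⟨u, by rw [hSu]; simp, a, by rw [hya]; simp, hadja⟩
    · exact ⟨u, by rw [hSu]; simp, b, by rw [hyb]; simp, hadjb⟩

end Existence


section Choices

variable {T : SimpleGraph V}

open Classical in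
noncomputable def ctr [Nonempty V] (T : SimpleGraph V) (S : Set V) : V :=
  if h : IsStarSet T S then h.choose else Classical.arbitrary V

lemma ctr_spec [Nonempty V] {S : Set V} (h : IsStarSet T S) :
    ctr T S ∈ S ∧ (∀ x ∈ S, x ≠ ctr T S → T.Adj (ctr T S) x) ∧
      (∀ x ∈ S, ∀ y ∈ S, x ≠ ctr T S → y ≠ ctr T S → ¬ T.Adj x y) := by
  rw [ctr]; rw [dif_pos h]
  exact h.choose_spec

open Classical in
noncomputable def satOf [Nonempty V] (T : SimpleGraph V) (S : Set V) : V :=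
  if h : (S \ {ctr T S}).Nonempty then h.choose else Classical.arbitrary V

lemma satOf_spec [Nonempty V] {S : Set V} (h : (S \ {ctr T S}).Nonempty) :
    satOf T S ∈ S ∧ satOf T S ≠ ctr T S := by
  rw [satOf]; rw [dif_pos h]
  exact ⟨h.choose_spec.1, h.choose_spec.2⟩

lemma big_diff_nonempty [Fintype V] [Nonempty V] {S : Set V} (h : 2 ≤ S.ncard) :
    (S \ {ctr T S}).Nonempty := by
  obtain ⟨a, ha, b, hb, hab⟩ := (Set.one_lt_ncard (Set.toFinite S)).1 (by omega)
  by_cases hc : a = ctr T S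
  · exact ⟨b, hb, by simp [← hc, Ne.symm hab]⟩
  · exact ⟨a, ha, by simp [hc]⟩

lemma satOf_spec' [Fintype V] [Nonempty V] {S : Set V} (h : 2 ≤ S.ncard) :
    satOf T S ∈ S ∧ satOf T S ≠ ctr T S := satOf_spec (big_diff_nonempty h)

/-- a part of cardinality two is exactly its center-satellite pair -/
lemma pair_struct [Fintype V] [Nonempty V] {S : Set V} (hstar : IsStarSet T S)
    (h2 : S.ncard = 2) : S = {ctr T S, satOf T S} := by
  have h1 := ctr_spec hstar
  have h2' := satOf_spec' (T := T) (S := S) (by omega)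
  refine (Set.eq_of_subset_of_ncard_le ?_ ?_ (Set.toFinite S)).symm
  · intro x hx
    rcases hx with rfl | hx
    · exact h1.1
    · exact (Set.mem_singleton_iff.1 hx) ▸ h2'.1
  · rw [h2, Set.ncard_pair (Ne.symm h2'.2)]

lemma ncard_biUnion_le [Fintype V] (Q : Finset (Set V)) (f : Set V → Set V) :
    (⋃ S ∈ Q, f S).ncard ≤ ∑ S ∈ Q, (f S).ncard := by
  classical
  induction Q using Finset.induction_on with
  | empty => simp
  | insert a s hnotmem ih =>
    rw [Finset.set_biUnion_insert, Finset.sum_insert hnotmem]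
    exact le_trans (Set.ncard_union_le _ _) (by omega)

end Choices


section MainClaim

variable {T : SimpleGraph V}

lemma bool_c1 : ∀ a b c d : Bool, xor a b = true → xor c d = false →
    xor b d = !(xor a c) := by decide

lemma bool_c2 : ∀ pa pb fv fa fb : Bool, xor fv fa = !(xor pa pb) →
    xor fv fb = false → xor (xor pa fa) (xor pb fb) = true := by decide

set_option maxHeartbeats 1000000 in
theorem main_claim [Fintype V] (hT : T.IsTree) (hnt : 2 ≤ Fintype.card V)
    (hweak : IsWeakGraph T) {P : Finset (Set V)} (hP : IsSSP T P) :
    DDm T ≤ (SSPweight P : ℕ∞) := by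
  classical
  have hne : Nonempty V := hT.isConnected.nonempty
  set pt : V → Set V := partOf hP with hpt
  -- basic part facts
  have pt_mem : ∀ v, pt v ∈ P := partOf_mem hP
  have pt_self : ∀ v, v ∈ pt v := mem_partOf hP
  have pt_eq : ∀ S ∈ P, ∀ v ∈ S, pt v = S := fun S hS v hv => (partOf_eq hP hS hv).symm
  have pt_star : ∀ v, IsStarSet T (pt v) := fun v => hP.star _ (pt_mem v)
  have pt_pos : ∀ v, 1 ≤ (pt v).ncard := by
    intro v
    have := Set.ncard_pos (Set.toFinite (pt v))
    exact this.2 ⟨v, pt_self v⟩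
  -- center and satellite facts for nontrivial parts
  have csat : ∀ v, 2 ≤ (pt v).ncard →
      ctr T (pt v) ∈ pt v ∧ satOf T (pt v) ∈ pt v ∧ satOf T (pt v) ≠ ctr T (pt v) ∧
      T.Adj (ctr T (pt v)) (satOf T (pt v)) := by
    intro v h2
    have h1 := ctr_spec (pt_star v)
    have hs := satOf_spec' (T := T) h2
    exact ⟨h1.1, hs.1, hs.2, h1.2.1 _ hs.1 hs.2⟩
  set M1 : Set V :=
    {v | 2 ≤ (pt v).ncard ∧ (v = ctr T (pt v) ∨ v = satOf T (pt v))} with hM1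
  have ctr_M1 : ∀ v, 2 ≤ (pt v).ncard → ctr T (pt v) ∈ M1 := by
    intro v h2
    have hc := (csat v h2).1
    have : pt (ctr T (pt v)) = pt v := pt_eq _ (pt_mem v) _ hc
    exact ⟨by rw [this]; exact h2, by rw [this]; exact Or.inl rfl⟩
  have sat_M1 : ∀ v, 2 ≤ (pt v).ncard → satOf T (pt v) ∈ M1 := by
    intro v h2
    have hc := (csat v h2).2.1
    have : pt (satOf T (pt v)) = pt v := pt_eq _ (pt_mem v) _ hc
    exact ⟨by rw [this]; exact h2, by rw [this]; exact Or.inr rfl⟩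
  -- the second matching
  set R2 : Set (Sym2 V) :=
    {e | e ∈ T.edgeSet ∧ (∀ v ∈ e, v ∉ M1) ∧ (∃ v ∈ e, 3 ≤ (pt v).ncard)} with hR2
  obtain ⟨M2, hM2R, hM2disj, hM2max⟩ := exists_maximal_matching R2
  have hM2diag : ∀ e ∈ M2, ¬ e.IsDiag := fun e he => T.not_isDiag_of_mem_edgeSet (hM2R e he).1
  set Cov2 : Set V := {v | ∃ e ∈ M2, v ∈ e} with hCov2
  have cov2_not_M1 : ∀ v ∈ Cov2, v ∉ M1 := by
    rintro v ⟨e, he, hv⟩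
    exact (hM2R e he).2.1 v hv
  set Mtd : Set V := M1 ∪ Cov2 with hMtd
  -- the mate function
  set mate : V → V := fun v =>
    if v ∈ M1 then
      (if v = ctr T (pt v) then satOf T (pt v) else ctr T (pt v))
    else mateM M2 v with hmate
  have mate_M1 : ∀ v ∈ M1, T.Adj v (mate v) ∧ mate v ∈ M1 ∧ mate (mate v) = v := by
    intro v hv
    obtain ⟨h2, hvc⟩ := hv
    obtain ⟨hc, hs, hsc, hadj⟩ := csat v h2
    have hptc : pt (ctr T (pt v)) = pt v := pt_eq _ (pt_mem v) _ hc
    have hpts : pt (satOf T (pt v)) = pt v := pt_eq _ (pt_mem v) _ hs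
    rcases hvc with hvc | hvc
    · -- v is the center
      have hvM : v ∈ M1 := ⟨h2, Or.inl hvc⟩
      have hm : mate v = satOf T (pt v) := by
        simp only [hmate]
        rw [if_pos hvM, if_pos hvc]
      have hne2 : satOf T (pt v) ≠ ctr T (pt (satOf T (pt v))) := by
        rw [hpts]; exact hsc
      have hmm : mate (satOf T (pt v)) = v := by
        have hmem : satOf T (pt v) ∈ M1 := sat_M1 v h2
        simp only [hmate]
        rw [if_pos hmem, if_neg hne2, hpts, ← hvc]
      have hadjv : T.Adj v (satOf T (pt v)) := by
        rw [← hvc] at hadj; exact hadj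
      rw [hm]
      exact ⟨hadjv, sat_M1 v h2, hmm⟩
    · -- v is the satellite
      have hvnc : v ≠ ctr T (pt v) := by rw [← hvc] at hsc; exact hsc
      have hvM : v ∈ M1 := ⟨h2, Or.inr hvc⟩
      have hm : mate v = ctr T (pt v) := by
        simp only [hmate]
        rw [if_pos hvM, if_neg hvnc]
      have heq2 : ctr T (pt v) = ctr T (pt (ctr T (pt v))) := by rw [hptc]
      have hmm : mate (ctr T (pt v)) = v := by
        have hmem : ctr T (pt v) ∈ M1 := ctr_M1 v h2
        simp only [hmate]
        rw [if_pos hmem, if_pos heq2, hptc, ← hvc]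
      have hadjv : T.Adj v (ctr T (pt v)) := by
        have h' := hadj.symm
        rw [← hvc] at h'; exact h'
      rw [hm]
      exact ⟨hadjv, ctr_M1 v h2, hmm⟩
  have mate_Cov2 : ∀ v ∈ Cov2, T.Adj v (mate v) ∧ mate v ∈ Cov2 ∧ mate (mate v) = v := by
    intro v hv
    have hv1 : v ∉ M1 := cov2_not_M1 v hv
    obtain ⟨hmem, hne2, hinv⟩ := mateM_props M2 hM2disj hM2diag hv
    have hm : mate v = mateM M2 v := by rw [hmate]; simp only [if_neg hv1]
    have hcov : mateM M2 v ∈ Cov2 := ⟨_, hmem, by simp⟩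
    have hm2 : mate (mateM M2 v) = mateM M2 (mateM M2 v) := by
      rw [hmate]; simp only [if_neg (cov2_not_M1 _ hcov)]
    refine ⟨?_, by rw [hm]; exact hcov, by rw [hm, hm2, hinv]⟩
    rw [hm]
    exact T.mem_edgeSet.1 (hM2R _ hmem).1
  have mate_Mtd : ∀ v ∈ Mtd, T.Adj v (mate v) ∧ mate v ∈ Mtd ∧ mate (mate v) = v := by
    intro v hv
    rcases hv with hv | hv
    · obtain ⟨h1, h2, h3⟩ := mate_M1 v hv
      exact ⟨h1, Or.inl h2, h3⟩
    · obtain ⟨h1, h2, h3⟩ := mate_Cov2 v hv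
      exact ⟨h1, Or.inr h2, h3⟩
  -- structure of unmatched vertices
  have unm_struct : ∀ v, v ∉ Mtd →
      (pt v).ncard = 1 ∨ (3 ≤ (pt v).ncard ∧ v ≠ ctr T (pt v) ∧ v ≠ satOf T (pt v)) := by
    intro v hv
    have hv1 : v ∉ M1 := fun h => hv (Or.inl h)
    rw [hM1, Set.mem_setOf_eq] at hv1
    push_neg at hv1
    by_cases h2 : 2 ≤ (pt v).ncard
    · have hno := hv1 h2
      have h3 : (pt v).ncard ≠ 2 := by
        intro hcard
        have := pair_struct (pt_star v) hcard
        have hvin := pt_self v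
        rw [this] at hvin
        rcases hvin with h | h
        · exact hno.1 h
        · exact hno.2 (Set.mem_singleton_iff.1 h)
      exact Or.inr ⟨by omega, hno.1, hno.2⟩
    · have := pt_pos v
      omega
  have unm_intr : ∀ v, v ∉ Mtd → IsIntr T v := by
    intro v hv
    rcases part_shape hweak hP (pt_mem v) with ⟨s, l, hsl, hadj, _⟩ | h
    · exfalso
      have hcard : (pt v).ncard = 2 := by rw [hsl]; exact Set.ncard_pair hadj.ne
      rcases unm_struct v hv with h1 | h1 <;> omega
    · exact h v (pt_self v)
  -- maximality of M2
  have max_help : ∀ v y, v ∉ Mtd → y ∉ Mtd → T.Adj v y →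
      (3 ≤ (pt v).ncard ∨ 3 ≤ (pt y).ncard) → False := by
    intro v y hv hy hadj hbig
    have hein : s(v, y) ∈ R2 := by
      refine ⟨T.mem_edgeSet.2 hadj, ?_, ?_⟩
      · intro z hz
        rcases Sym2.mem_iff.1 hz with rfl | rfl
        · exact fun h => hv (Or.inl h)
        · exact fun h => hy (Or.inl h)
      · rcases hbig with h | h
        · exact ⟨v, by simp, h⟩
        · exact ⟨y, by simp, h⟩
    have := hM2max _ hein (by
      intro z hz f hf hzf
      rcases Sym2.mem_iff.1 hz with rfl | rfl
      · exact hv (Or.inr ⟨f, hf, hzf⟩)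
      · exact hy (Or.inr ⟨f, hf, hzf⟩))
    exact hv (Or.inr ⟨_, this, by simp⟩)
  -- witnesses for unmatched vertices
  have witness : ∀ v, v ∉ Mtd → ∃ a b : V, a ≠ b ∧ T.Adj v a ∧ T.Adj v b ∧
      a ∈ Mtd ∧ b ∈ Mtd := by
    intro v hv
    rcases unm_struct v hv with h1 | ⟨h3, hnc, hns⟩
    · -- v is a K1 part
      have hsing : pt v = {v} := by
        obtain ⟨x, hx⟩ := Set.ncard_eq_one.1 h1
        have := pt_self v
        rw [hx] at this ⊢
        rw [Set.mem_singleton_iff.1 this]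
      obtain ⟨A, hA, B, hB, hAB, hA1, hB1, hSA, hSB⟩ := hP.k1 _ (pt_mem v) h1
      obtain ⟨s, hs, a, ha, hsa⟩ := hSA
      obtain ⟨s', hs', b, hb, hsb⟩ := hSB
      rw [hsing, Set.mem_singleton_iff] at hs hs'
      rw [hs] at hsa
      rw [hs'] at hsb
      have hab : a ≠ b := by
        rintro rfl
        exact hAB (parts_eq_s5 hP hA hB ha hb)
      have hAcard : 2 ≤ A.ncard := by
        have : 1 ≤ A.ncard := (Set.ncard_pos (Set.toFinite A)).2 ⟨a, ha⟩
        omega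
      have hBcard : 2 ≤ B.ncard := by
        have : 1 ≤ B.ncard := (Set.ncard_pos (Set.toFinite B)).2 ⟨b, hb⟩
        omega
      have hmtd : ∀ x, T.Adj v x → ∀ X ∈ P, x ∈ X → 2 ≤ X.ncard → x ∈ Mtd := by
        intro x hx X hX hxX h2X
        by_contra hxm
        have hptx : pt x = X := pt_eq _ hX _ hxX
        rcases unm_struct x hxm with hh | hh
        · rw [hptx] at hh; omega
        · exact max_help v x hv hxm hx (Or.inr hh.1)
      exact ⟨a, b, hab, hsa, hsb, hmtd a hsa A hA ha hAcard, hmtd b hsb B hB hb hBcard⟩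
    · -- v is an extra satellite of a big part
      have h2 : 2 ≤ (pt v).ncard := by omega
      obtain ⟨hc, hs, hsc, hadj⟩ := csat v h2
      have hadjvc : T.Adj v (ctr T (pt v)) :=
        ((ctr_spec (pt_star v)).2.1 v (pt_self v) hnc).symm
      have hcM : ctr T (pt v) ∈ Mtd := Or.inl (ctr_M1 v h2)
      have hnl : ¬ IsLeaf T v := (unm_intr v hv).1
      obtain ⟨b, hbne, hbadj⟩ := two_nbrs hT.isConnected hnt hnl (ctr T (pt v))
      have hbM : b ∈ Mtd := by
        by_contra hbm
        exact max_help v b hv hbm hbadj (Or.inl h3)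
      exact ⟨ctr T (pt v), b, (Ne.symm hbne), hadjvc, hbadj, hcM, hbM⟩
  -- additional mate equations
  have mate_eqc : ∀ v ∈ M1, v = ctr T (pt v) → mate v = satOf T (pt v) := by
    intro v hv hvc
    simp only [hmate]
    rw [if_pos hv, if_pos hvc]
  have mate_eqs : ∀ v ∈ M1, v = satOf T (pt v) → mate v = ctr T (pt v) := by
    intro v hv hvc
    have hsc := (csat v hv.1).2.2.1
    simp only [hmate]
    rw [if_pos hv, if_neg (by rw [← hvc] at hsc; exact hsc)]
  have mate_eq2 : ∀ v, v ∉ M1 → mate v = mateM M2 v := by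
    intro v hv
    simp only [hmate]
    rw [if_neg hv]
  -- witness choice functions
  have wit' : ∀ v, ∃ p : V × V, v ∉ Mtd → p.1 ≠ p.2 ∧ T.Adj v p.1 ∧ T.Adj v p.2 ∧
      p.1 ∈ Mtd ∧ p.2 ∈ Mtd := by
    intro v
    by_cases hv : v ∉ Mtd
    · obtain ⟨a, b, h1, h2, h3, h4, h5⟩ := witness v hv
      exact ⟨(a, b), fun _ => ⟨h1, h2, h3, h4, h5⟩⟩
    · exact ⟨(Classical.arbitrary V, Classical.arbitrary V), fun h => absurd h hv⟩
  choose wit2 hwit using wit'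
  set wa : V → V := fun v => (wit2 v).1 with hwaf
  set wb : V → V := fun v => (wit2 v).2 with hwbf
  set r : V := Classical.arbitrary V with hrr
  set par : V → Bool := fun x => T.dist r x % 2 == 1 with hparf
  set cval : V → Bool := fun v => !(xor (par (wa v)) (par (wb v))) with hcvalf
  set hmk : Sym2 V → Bool := fun e =>
    if hx : ∃ v, v ∉ Mtd ∧ e = s(v, wa v) then cval hx.choose else false with hhmkf
  have hmk1 : ∀ v, v ∉ Mtd → hmk s(v, wa v) = cval v := by
    intro v hv
    have hex : ∃ u, u ∉ Mtd ∧ s(v, wa v) = s(u, wa u) := ⟨v, hv, rfl⟩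
    simp only [hhmkf]
    rw [dif_pos hex]
    obtain ⟨hu1, hu2⟩ := hex.choose_spec
    rcases Sym2.eq_iff.1 hu2 with ⟨h1, _⟩ | ⟨h1, h2⟩
    · rw [← h1]
    · exfalso
      have hmem : wa hex.choose ∈ Mtd := (hwit hex.choose hu1).2.2.2.1
      rw [← h1] at hmem
      exact hv hmem
  have hmk2 : ∀ x y, x ∈ Mtd → y ∈ Mtd → hmk s(x, y) = false := by
    intro x y hx hy
    simp only [hhmkf]
    rw [dif_neg]
    rintro ⟨u, hu1, hu2⟩
    rcases Sym2.eq_iff.1 hu2 with ⟨h1, _⟩ | ⟨_, h2⟩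
    · exact hu1 (h1 ▸ hx)
    · exact hu1 (h2 ▸ hy)
  have hmk3 : ∀ v y, v ∉ Mtd → y ∈ Mtd → y ≠ wa v → hmk s(v, y) = false := by
    intro v y hv hy hne
    simp only [hhmkf]
    rw [dif_neg]
    rintro ⟨u, hu1, hu2⟩
    rcases Sym2.eq_iff.1 hu2 with ⟨h1, h2⟩ | ⟨h1, h2⟩
    · rw [h1] at hne
      exact hne h2
    · have hmem : wa u ∈ Mtd := (hwit _ hu1).2.2.2.1
      rw [← h1] at hmem
      exact hv hmem
  set col : V → Bool := fun x => xor (par x) (Fpar hT r hmk x) with hcolf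
  have c1 : ∀ x ∈ Mtd, col (mate x) = !(col x) := by
    intro x hx
    obtain ⟨hadj, hmem, _⟩ := mate_Mtd x hx
    have e1 : xor (par x) (par (mate x)) = true := Fpar_parity_adj hT r hadj
    have e2 : xor (Fpar hT r hmk x) (Fpar hT r hmk (mate x)) = hmk s(x, mate x) :=
      Fpar_adj hT r hmk hadj
    have e3 : hmk s(x, mate x) = false := hmk2 _ _ hx hmem
    rw [e3] at e2
    simp only [hcolf]
    exact bool_c1 _ _ _ _ e1 e2
  have c2 : ∀ v, v ∉ Mtd → xor (col (wa v)) (col (wb v)) = true := by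
    intro v hv
    obtain ⟨hne, hadja, hadjb, haM, hbM⟩ := hwit v hv
    have e1 : xor (Fpar hT r hmk v) (Fpar hT r hmk (wa v)) = hmk s(v, wa v) :=
      Fpar_adj hT r hmk hadja
    have e2 : xor (Fpar hT r hmk v) (Fpar hT r hmk (wb v)) = hmk s(v, wb v) :=
      Fpar_adj hT r hmk hadjb
    rw [hmk1 v hv] at e1
    rw [hmk3 v (wb v) hv hbM (Ne.symm hne)] at e2
    have e4 : cval v = !(xor (par (wa v)) (par (wb v))) := rfl
    simp only [hcolf]
    rw [e4] at e1
    exact bool_c2 _ _ _ _ _ e1 e2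
  -- the two dominating sets
  set D : Set V := {x | x ∈ Mtd ∧ col x = true} with hD
  set D' : Set V := {x | x ∈ Mtd ∧ col x = false} with hD'
  have hdom : IsDomSet T D := by
    intro v hv
    by_cases hvM : v ∈ Mtd
    · cases hcv : col v with
      | true => exact absurd ⟨hvM, hcv⟩ hv
      | false =>
        obtain ⟨hadj, hmem, _⟩ := mate_Mtd v hvM
        refine ⟨mate v, ⟨hmem, ?_⟩, hadj.symm⟩
        rw [c1 v hvM, hcv]
        rfl
    · obtain ⟨hne, hadja, hadjb, haM, hbM⟩ := hwit v hvM
      have := c2 v hvM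
      cases hca : col (wa v) with
      | true => exact ⟨wa v, ⟨haM, hca⟩, hadja.symm⟩
      | false =>
        rw [hca] at this
        simp at this
        exact ⟨wb v, ⟨hbM, this⟩, hadjb.symm⟩
  have hdom' : IsDomSet T D' := by
    intro v hv
    by_cases hvM : v ∈ Mtd
    · cases hcv : col v with
      | false => exact absurd ⟨hvM, hcv⟩ hv
      | true =>
        obtain ⟨hadj, hmem, _⟩ := mate_Mtd v hvM
        refine ⟨mate v, ⟨hmem, ?_⟩, hadj.symm⟩
        rw [c1 v hvM, hcv]
        rfl
    · obtain ⟨hne, hadja, hadjb, haM, hbM⟩ := hwit v hvM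
      have := c2 v hvM
      cases hca : col (wa v) with
      | false => exact ⟨wa v, ⟨haM, hca⟩, hadja.symm⟩
      | true =>
        rw [hca] at this
        simp at this
        exact ⟨wb v, ⟨hbM, this⟩, hadjb.symm⟩
  have hdisj : Disjoint D D' := by
    rw [Set.disjoint_left]
    rintro x ⟨hx1, hx2⟩ ⟨hy1, hy2⟩
    rw [hx2] at hy2
    exact Bool.noConfusion hy2
  have hmem_toD' : ∀ x : V, x ∈ D → mate x ∈ D' := by
    rintro x ⟨hx1, hx2⟩
    refine ⟨(mate_Mtd x hx1).2.1, ?_⟩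
    rw [c1 x hx1, hx2]
    rfl
  have hmem_toD : ∀ x : V, x ∈ D' → mate x ∈ D := by
    rintro x ⟨hx1, hx2⟩
    refine ⟨(mate_Mtd x hx1).2.1, ?_⟩
    rw [c1 x hx1, hx2]
    rfl
  have hswap : IsSwapPair T D D' := by
    refine ⟨hdom, hdom', hdisj, ?_⟩
    refine ⟨⟨fun x => ⟨mate x.1, hmem_toD' x.1 x.2⟩, fun y => ⟨mate y.1, hmem_toD y.1 y.2⟩,
      ?_, ?_⟩, ?_⟩
    · intro x
      apply Subtype.ext
      exact (mate_Mtd x.1 x.2.1).2.2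
    · intro y
      apply Subtype.ext
      exact (mate_Mtd y.1 y.2.1).2.2
    · intro x
      exact (mate_Mtd x.1 x.2.1).1
  have hDDm : DDm T ≤ (D.ncard : ℕ∞) := sInf_le ⟨D, D', hswap, rfl⟩
  -- counting
  set sg : Sym2 V → V := fun e => if h : ∃ v ∈ e, 3 ≤ (pt v).ncard then h.choose else r
    with hsgf
  have sg_spec : ∀ e, (∃ v ∈ e, 3 ≤ (pt v).ncard) → sg e ∈ e ∧ 3 ≤ (pt (sg e)).ncard := by
    intro e he
    simp only [hsgf]
    rw [dif_pos he]
    exact he.choose_spec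
  set g : V → V := fun x => if x ∈ M1 then ctr T (pt x) else sg s(x, mateM M2 x) with hgf
  have cov2_edge : ∀ x ∈ Cov2, s(x, mateM M2 x) ∈ M2 := by
    intro x hx
    exact (mateM_props M2 hM2disj hM2diag hx).1
  have gM1 : ∀ x ∈ M1, g x = ctr T (pt x) := by
    intro x hx; simp only [hgf]; rw [if_pos hx]
  have gC : ∀ x, x ∉ M1 → g x = sg s(x, mateM M2 x) := by
    intro x hx; simp only [hgf]; rw [if_neg hx]
  have hinj : Set.InjOn g D := by
    rintro x ⟨hxM, hxc⟩ y ⟨hyM, hyc⟩ hgxy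
    by_cases hx1 : x ∈ M1 <;> by_cases hy1 : y ∈ M1
    · -- both in M1
      rw [gM1 x hx1, gM1 y hy1] at hgxy
      have hcy : ctr T (pt x) ∈ pt y := by rw [hgxy]; exact (csat y hy1.1).1
      have hpxy : pt x = pt y :=
        parts_eq_s5 hP (pt_mem x) (pt_mem y) (csat x hx1.1).1 hcy
      by_contra hxy
      -- y must be the mate of x
      have hymate : y = mate x := by
        rcases hx1.2 with hxc1 | hxc1 <;> rcases hy1.2 with hyc1 | hyc1
        · exfalso; apply hxy; rw [hxc1, hpxy, ← hyc1]
        · rw [mate_eqc x hx1 hxc1]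
          rw [← hpxy] at hyc1
          exact hyc1
        · rw [mate_eqs x hx1 hxc1]
          rw [← hpxy] at hyc1
          exact hyc1
        · exfalso; apply hxy; rw [hxc1, hpxy, ← hyc1]
      have := c1 x (Or.inl hx1)
      rw [← hymate, hyc, hxc] at this
      exact Bool.noConfusion this
    · -- x in M1, y not: impossible
      exfalso
      have hyC : y ∈ Cov2 := hyM.resolve_left hy1
      rw [gM1 x hx1, gC y hy1] at hgxy
      have hsg := sg_spec s(y, mateM M2 y) (hM2R _ (cov2_edge y hyC)).2.2
      have : sg s(y, mateM M2 y) ∉ M1 := (hM2R _ (cov2_edge y hyC)).2.1 _ hsg.1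
      rw [← hgxy] at this
      exact this (ctr_M1 x hx1.1)
    · exfalso
      have hxC : x ∈ Cov2 := hxM.resolve_left hx1
      rw [gM1 y hy1, gC x hx1] at hgxy
      have hsg := sg_spec s(x, mateM M2 x) (hM2R _ (cov2_edge x hxC)).2.2
      have : sg s(x, mateM M2 x) ∉ M1 := (hM2R _ (cov2_edge x hxC)).2.1 _ hsg.1
      rw [hgxy] at this
      exact this (ctr_M1 y hy1.1)
    · -- both in Cov2
      have hxC : x ∈ Cov2 := hxM.resolve_left hx1
      have hyC : y ∈ Cov2 := hyM.resolve_left hy1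
      rw [gC x hx1, gC y hy1] at hgxy
      set ex := s(x, mateM M2 x) with hex
      set ey := s(y, mateM M2 y) with hey
      have hexM : ex ∈ M2 := cov2_edge x hxC
      have heyM : ey ∈ M2 := cov2_edge y hyC
      have hsgx := sg_spec ex (hM2R _ hexM).2.2
      have hsgy := sg_spec ey (hM2R _ heyM).2.2
      have hee : ex = ey := by
        by_contra hne
        have := hM2disj ex hexM ey heyM hne (sg ex) hsgx.1
        rw [hgxy] at this
        exact this hsgy.1
      have hyex : y ∈ ex := by rw [hee]; simp [hey]
      rw [hex] at hyex
      rcases Sym2.mem_iff.1 hyex with h | h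
      · exact h.symm
      · exfalso
        have hymate : y = mate x := by rw [mate_eq2 x hx1]; exact h
        have := c1 x (Or.inr hxC)
        rw [← hymate, hyc, hxc] at this
        exact Bool.noConfusion this
  set Pbig : Finset (Set V) := P.filter (fun S => 2 ≤ S.ncard) with hPbig
  set W : Set V := ⋃ S ∈ Pbig, (S \ {satOf T S}) with hW
  have himg : g '' D ⊆ W := by
    rintro z ⟨x, ⟨hxM, _⟩, rfl⟩
    by_cases hx1 : x ∈ M1
    · rw [gM1 x hx1]
      refine Set.mem_biUnion (Finset.mem_filter.2 ⟨pt_mem x, hx1.1⟩) ?_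
      refine ⟨(csat x hx1.1).1, ?_⟩
      intro hmem
      have heq : ctr T (pt x) = satOf T (pt x) := Set.mem_singleton_iff.1 hmem
      exact (csat x hx1.1).2.2.1 heq.symm
    · have hxC : x ∈ Cov2 := hxM.resolve_left hx1
      rw [gC x hx1]
      have hsgx := sg_spec s(x, mateM M2 x) (hM2R _ (cov2_edge x hxC)).2.2
      have hz1 : sg s(x, mateM M2 x) ∉ M1 := (hM2R _ (cov2_edge x hxC)).2.1 _ hsgx.1
      set z := sg s(x, mateM M2 x)
      refine Set.mem_biUnion (Finset.mem_filter.2 ⟨pt_mem z, by omega⟩) ?_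
      refine ⟨pt_self z, ?_⟩
      intro hmem
      have heq : z = satOf T (pt z) := Set.mem_singleton_iff.1 hmem
      rw [heq] at hz1
      exact hz1 (sat_M1 z (by omega))
  have hfin : D.ncard ≤ SSPweight P := by
    have h1 : (g '' D).ncard = D.ncard := Set.ncard_image_of_injOn hinj
    have h2 : (g '' D).ncard ≤ W.ncard := Set.ncard_le_ncard himg (Set.toFinite W)
    have h3 : W.ncard ≤ ∑ S ∈ Pbig, (S \ {satOf T S}).ncard := ncard_biUnion_le Pbig _
    have h4 : ∑ S ∈ Pbig, (S \ {satOf T S}).ncard = ∑ S ∈ Pbig, (S.ncard - 1) := by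
      apply Finset.sum_congr rfl
      intro S hS
      have h2S : 2 ≤ S.ncard := (Finset.mem_filter.1 hS).2
      have hsS : satOf T S ∈ S := (satOf_spec' h2S).1
      rw [Set.ncard_diff_singleton_of_mem hsS]
    have h5 : ∑ S ∈ Pbig, (S.ncard - 1) ≤ SSPweight P := by
      rw [SSPweight]
      exact Finset.sum_le_sum_of_subset (Finset.filter_subset _ _)
    omega
  calc DDm T ≤ (D.ncard : ℕ∞) := hDDm
    _ ≤ (SSPweight P : ℕ∞) := by exact_mod_cast hfin


end MainClaim

theorem stmt_5 {V : Type*} [Fintype V] (T : SimpleGraph V) (hT : T.IsTree)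
    (hnt : 2 ≤ Fintype.card V) (hweak : IsWeakGraph T) :
    DDm T ≤ (starS T : ℕ∞) := by
  classical
  obtain ⟨P0, hP0⟩ := ssp_exists hT hnt hweak
  have hmem : starS T ∈ {w : ℕ | ∃ P : Finset (Set V), IsSSP T P ∧ SSPweight P = w} :=
    Nat.sInf_mem ⟨SSPweight P0, P0, hP0, rfl⟩
  obtain ⟨P, hP, hw⟩ := hmem
  calc DDm T ≤ (SSPweight P : ℕ∞) := main_claim hT hnt hweak hP
    _ = (starS T : ℕ∞) := by rw [hw]
end
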